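/- arXiv:1604.01902 — 4 statements merged into one kernel-verified Lean document; each statement's English description precedes it below -/
import Mathlib

section
/- Let E/F be a quadratic field extension. For every r ∈ ℕ and every integer n ≥ 1, the index of unit groups satisfies [𝒪_r^× : 𝒪_{r+n}^×] = q^n if r > 0 or E/F is ramified, and [𝒪_r^× : 𝒪_{r+n}^×] = q^n(1 + q^{−1}) if r = 0 and E/F is unramified. -/
/-! Setup: `F` nonarchimedean local field with ring of integers `𝔬` (a DVR `o`),
uniformizer `ϖ`, and finite residue field `𝔬/𝔭` of cardinality `q`; `E/F` a quadratic
field extension with ring of integers `𝒪` (a DVR `O`), inclusion `f : 𝔬 → 𝒪`;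
`β ∈ 𝒪 ∖ 𝔬` with `𝒪 = 𝔬 + β𝔬` and `Nr(β) ∈ 𝔬^×`, the norm `Nr` pinned down by the
involutive conjugation `σ` via `f (Nr z) = z · σ z`.  `𝒪_r = 𝔬 + ϖ^rβ𝔬` with unit
group `𝒪_r^×`, and `𝒪_{r+n}^× ⊆ 𝒪_r^×`; the index `[𝒪_r^× : 𝒪_{r+n}^×]` is the
number of cosets of `𝒪_{r+n}^×` in `𝒪_r^×`.  `E/F` is unramified exactly when `f ϖ`
is irreducible in `𝒪`, ramified otherwise. -/

/-- The order `𝒪_r = 𝔬 + ϖ^rβ𝔬` of conductor `r`. -/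
def ordSet {o O : Type*} [CommRing o] [CommRing O] (f : o →+* O) (ϖ : o) (β : O)
    (r : ℕ) : Set O :=
  {z | ∃ x y : o, z = f x + f (ϖ ^ r * y) * β}

/-- The unit group `𝒪_r^×` of the order `𝒪_r` (as a subset of `𝒪`). -/
def ordUnits {o O : Type*} [CommRing o] [CommRing O] (f : o →+* O) (ϖ : o) (β : O)
    (r : ℕ) : Set O :=
  {z | z ∈ ordSet f ϖ β r ∧ ∃ w ∈ ordSet f ϖ β r, z * w = 1}

/-- The index `[𝒪_r^× : 𝒪_{r+n}^×]`, i.e. the number of cosets of `𝒪_{r+n}^×`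
in `𝒪_r^×` (orbits of the multiplication action of `𝒪_{r+n}^×` on `𝒪_r^×`). -/
noncomputable def unitIndex {o O : Type*} [CommRing o] [CommRing O]
    (f : o →+* O) (ϖ : o) (β : O) (r n : ℕ) : ℕ :=
  Nat.card (Quot (fun t t' : ordUnits f ϖ β r =>
    ∃ u ∈ ordUnits f ϖ β (r + n), u * (t : O) = t'))

set_option linter.unusedSectionVars false
set_option linter.unnecessarySimpa false

open Function



namespace Stmt7Aux

section generic

variable {A B : Type*} [AddCommGroup A] [AddCommGroup B]

/-- Fibration equivalence: for a surjective hom, the preimage of a set `S` is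
equivalent to `S × ker`. -/
noncomputable def fiberEquiv (φ : A →+ B) (hφ : Surjective φ) (S : Set B) :
    {a : A // φ a ∈ S} ≃ S × {a : A // φ a = 0} where
  toFun a := ⟨⟨φ a.1, a.2⟩, ⟨a.1 - surjInv hφ (φ a.1), by
    simp [map_sub, surjInv_eq hφ]⟩⟩
  invFun p := ⟨surjInv hφ p.1.1 + p.2.1, by
    have h2 : φ p.2.1 = 0 := p.2.2
    simpa [map_add, h2, surjInv_eq hφ] using p.1.2⟩
  left_inv a := by
    ext
    simp
  right_inv p := by
    have h2 : φ p.2.1 = 0 := p.2.2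
    have h1 : φ (surjInv hφ p.1.1 + p.2.1) = p.1.1 := by
      simp [map_add, h2, surjInv_eq hφ]
    ext
    · exact h1
    · simp [h1]

noncomputable def totalEquiv (φ : A →+ B) (hφ : Surjective φ) :
    A ≃ B × {a : A // φ a = 0} :=
  ((Equiv.subtypeUnivEquiv (fun a => Set.mem_univ (φ a))).symm.trans
    (fiberEquiv φ hφ Set.univ)).trans
      (Equiv.prodCongr (Equiv.Set.univ B) (Equiv.refl _))

lemma card_fiber (φ : A →+ B) (hφ : Surjective φ) (S : Set B) :
    Nat.card {a : A // φ a ∈ S} = Nat.card S * Nat.card {a : A // φ a = 0} := by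
  rw [Nat.card_congr (fiberEquiv φ hφ S), Nat.card_prod]

lemma card_total (φ : A →+ B) (hφ : Surjective φ) :
    Nat.card A = Nat.card B * Nat.card {a : A // φ a = 0} := by
  rw [Nat.card_congr (totalEquiv φ hφ), Nat.card_prod]

end generic

section dvr

variable {o : Type*} [CommRing o] [IsDomain o] [IsDiscreteValuationRing o]
variable {ϖ : o} {q : ℕ}

/-- The kernel of the natural map `o/ϖ^(b+a) → o/ϖ^b` is `≃ o/ϖ^a` (mult. by `ϖ^b`). -/
noncomputable def kerFactorEquiv (hϖ : Irreducible ϖ) (a b c : ℕ) (hc : c = b + a)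
    {J : Ideal o} (hJ : J = Ideal.span ({ϖ ^ b} : Set o))
    (h : Ideal.span ({ϖ ^ c} : Set o) ≤ J) :
    (o ⧸ Ideal.span ({ϖ ^ a} : Set o)) ≃
      {z : o ⧸ Ideal.span ({ϖ ^ c} : Set o) //
        Ideal.Quotient.factor h z = 0} := by
  classical
  subst hc
  subst hJ
  have hϖ0 : ϖ ≠ 0 := hϖ.ne_zero
  set I := Ideal.span ({ϖ ^ (b + a)} : Set o) with hI
  set J := Ideal.span ({ϖ ^ a} : Set o) with hJ
  let ℓ : o →ₗ[o] (o ⧸ I) := LinearMap.toSpanSingleton o _ (Ideal.Quotient.mk I (ϖ ^ b))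
  have hℓ : ∀ x : o, ℓ x = Ideal.Quotient.mk I (x * ϖ ^ b) := by
    intro x
    rw [LinearMap.toSpanSingleton_apply, ← Ideal.Quotient.mk_eq_mk,
      ← Submodule.Quotient.mk_smul, smul_eq_mul, Ideal.Quotient.mk_eq_mk]
  have hker : J ≤ LinearMap.ker ℓ := by
    intro x hx
    obtain ⟨c, rfl⟩ := Ideal.mem_span_singleton'.mp hx
    have hmem : (c * ϖ ^ a) * ϖ ^ b ∈ I := by
      rw [hI, Ideal.mem_span_singleton]
      exact ⟨c, by ring⟩
    rw [LinearMap.mem_ker, hℓ, Ideal.Quotient.eq_zero_iff_mem]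
    exact hmem
  let Φ := Submodule.liftQ J ℓ hker
  have hΦmk : ∀ x : o, Φ (Ideal.Quotient.mk J x) = Ideal.Quotient.mk I (x * ϖ ^ b) := by
    intro x
    rw [← Ideal.Quotient.mk_eq_mk, Submodule.liftQ_apply, hℓ]
  refine Equiv.ofBijective (fun z => ⟨Φ z, ?_⟩) ⟨?_, ?_⟩
  · obtain ⟨x, rfl⟩ := Ideal.Quotient.mk_surjective z
    rw [hΦmk, Ideal.Quotient.factor_mk, Ideal.Quotient.eq_zero_iff_mem,
      Ideal.mem_span_singleton]
    exact ⟨x, by ring⟩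
  · intro z w hzw
    obtain ⟨x, rfl⟩ := Ideal.Quotient.mk_surjective z
    obtain ⟨y, rfl⟩ := Ideal.Quotient.mk_surjective w
    have : Φ (Ideal.Quotient.mk J x) = Φ (Ideal.Quotient.mk J y) := by
      simpa using congrArg Subtype.val hzw
    rw [hΦmk, hΦmk, Ideal.Quotient.eq, hI, Ideal.mem_span_singleton] at this
    obtain ⟨c, hc⟩ := this
    rw [Ideal.Quotient.eq, hJ, Ideal.mem_span_singleton]
    refine ⟨c, ?_⟩
    have hb : (x - y) * ϖ ^ b = (ϖ ^ a * c) * ϖ ^ b := by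
      rw [sub_mul, hc]; ring
    exact mul_right_cancel₀ (pow_ne_zero b hϖ0) hb
  · rintro ⟨z, hz⟩
    obtain ⟨w, rfl⟩ := Ideal.Quotient.mk_surjective z
    rw [Ideal.Quotient.factor_mk, Ideal.Quotient.eq_zero_iff_mem,
      Ideal.mem_span_singleton] at hz
    obtain ⟨c, rfl⟩ := hz
    refine ⟨Ideal.Quotient.mk J c, Subtype.ext ?_⟩
    show Φ (Ideal.Quotient.mk J c) = Ideal.Quotient.mk I (ϖ ^ b * c)
    rw [hΦmk]
    congr 1
    ring

lemma span_pow_le (b c : ℕ) (h : b ≤ c) : Ideal.span ({ϖ ^ c} : Set o) ≤ Ideal.span ({ϖ ^ b} : Set o) := by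
  rw [Ideal.span_singleton_le_span_singleton]
  exact pow_dvd_pow ϖ h

lemma quot_pow_finite_card (hϖ : Irreducible ϖ)
    (hfin : Finite (o ⧸ Ideal.span ({ϖ} : Set o)))
    (hq : Nat.card (o ⧸ Ideal.span ({ϖ} : Set o)) = q) (m : ℕ) :
    Finite (o ⧸ Ideal.span ({ϖ ^ m} : Set o)) ∧
      Nat.card (o ⧸ Ideal.span ({ϖ ^ m} : Set o)) = q ^ m := by
  induction m with
  | zero =>
    have htop : Ideal.span ({ϖ ^ 0} : Set o) = ⊤ := by
      simp [Ideal.span_singleton_one]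
    have hsub : Subsingleton (o ⧸ Ideal.span ({ϖ ^ 0} : Set o)) := by
      rw [htop]
      exact Ideal.Quotient.subsingleton_iff.mpr rfl
    exact ⟨Finite.of_subsingleton, by rw [Nat.card_of_subsingleton (0 : _)]; simp⟩
  | succ m ih =>
    obtain ⟨ihfin, ihcard⟩ := ih
    have hle : Ideal.span ({ϖ ^ (m + 1)} : Set o) ≤ Ideal.span ({ϖ ^ m} : Set o) :=
      span_pow_le m (m+1) (by omega)
    set ψ : (o ⧸ Ideal.span ({ϖ ^ (m + 1)} : Set o)) →+*
        (o ⧸ Ideal.span ({ϖ ^ m} : Set o)) := Ideal.Quotient.factor hle with hψ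
    have hsurj : Surjective ψ.toAddMonoidHom := by
      intro z
      obtain ⟨x, rfl⟩ := Ideal.Quotient.mk_surjective z
      exact ⟨Ideal.Quotient.mk _ x, Ideal.Quotient.factor_mk hle x⟩
    have hker : (o ⧸ Ideal.span ({ϖ ^ 1} : Set o)) ≃
        {z : o ⧸ Ideal.span ({ϖ ^ (m + 1)} : Set o) // ψ.toAddMonoidHom z = 0} :=
      kerFactorEquiv hϖ 1 m (m + 1) (by omega) rfl hle
    have hfin1 : Finite (o ⧸ Ideal.span ({ϖ ^ 1} : Set o)) := by
      rw [pow_one]; exact hfin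
    have hcard1 : Nat.card (o ⧸ Ideal.span ({ϖ ^ 1} : Set o)) = q := by
      rw [pow_one]; exact hq
    have hkfin : Finite {z : o ⧸ Ideal.span ({ϖ ^ (m + 1)} : Set o) // ψ.toAddMonoidHom z = 0} :=
      Finite.of_equiv _ hker
    have htot := totalEquiv ψ.toAddMonoidHom hsurj
    have hfin2 : Finite (o ⧸ Ideal.span ({ϖ ^ (m + 1)} : Set o)) := Finite.of_equiv _ htot.symm
    refine ⟨hfin2, ?_⟩
    rw [card_total ψ.toAddMonoidHom hsurj, ihcard, ← Nat.card_congr hker, hcard1]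
    ring

end dvr

end Stmt7Aux



namespace Stmt7Main

section main

variable {o O : Type*} [CommRing o] [IsDomain o] [IsDiscreteValuationRing o]
    [CommRing O] [IsDomain O] [IsDiscreteValuationRing O]
    (f : o →+* O) (hf : Function.Injective f)
    (ϖ : o) (hϖ : Irreducible ϖ)
    (β : O) (hβ : β ∉ Set.range f)
    (hgen : ∀ z : O, ∃ x y : o, z = f x + f y * β)
    (σ : O →+* O) (hσf : ∀ x : o, σ (f x) = f x) (hσσ : ∀ z : O, σ (σ z) = z)
    (Nr : O →* o) (hNr : ∀ z : O, f (Nr z) = z * σ z)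
    (hβunit : IsUnit (Nr β))

include hf hσf hNr in
lemma Nr_f (x : o) : Nr (f x) = x * x := by
  apply hf
  rw [hNr, hσf, ← map_mul]

include hf hβ hσf hNr hβunit in
lemma core_indep (x y : o) (hxy : f x = f y * β) : x = 0 ∧ y = 0 := by
  have hN : x * x = y * y * Nr β := by
    have h1 : Nr (f x) = Nr (f y) * Nr β := by rw [hxy, map_mul]
    rw [Nr_f f hf σ hσf Nr hNr, Nr_f f hf σ hσf Nr hNr] at h1
    exact h1
  rcases eq_or_ne y 0 with rfl | hy
  · refine ⟨?_, rfl⟩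
    have : x * x = 0 := by rw [hN]; ring
    exact mul_self_eq_zero.mp this
  · exfalso
    have hdvd : y ∣ x := by
      rcases ValuationRing.dvd_total y x with h | h
      · exact h
      · obtain ⟨s, rfl⟩ := h
        have hx0 : x ≠ 0 := fun h0 => hy (by rw [h0]; ring)
        have hxx : x * x ≠ 0 := mul_ne_zero hx0 hx0
        have hs : (x * x) * 1 = (x * x) * (s * (s * Nr β)) := by
          rw [mul_one]
          calc x * x = (x * s) * (x * s) * Nr β := hN
          _ = (x * x) * (s * (s * Nr β)) := by ring
        have hs1 : s * (s * Nr β) = 1 := (mul_left_cancel₀ hxx hs).symm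
        have hus : IsUnit s := IsUnit.of_mul_eq_one _ hs1
        obtain ⟨v, hv⟩ := hus.exists_right_inv
        exact ⟨v, by rw [mul_assoc, hv, mul_one]⟩
    obtain ⟨t, rfl⟩ := hdvd
    have hfy : f y ≠ 0 := fun h0 => hy (hf (by rw [h0, map_zero]))
    have hβt : f y * f t = f y * β := by
      rw [← map_mul]
      exact hxy
    have : f t = β := mul_left_cancel₀ hfy hβt
    exact hβ ⟨t, this⟩

end main

end Stmt7Main
namespace Stmt7Main

section main2

variable {o O : Type*} [CommRing o] [IsDomain o] [IsDiscreteValuationRing o]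
    [CommRing O] [IsDomain O] [IsDiscreteValuationRing O]
    (f : o →+* O) (hf : Function.Injective f)
    (ϖ : o) (hϖ : Irreducible ϖ)
    (β : O) (hβ : β ∉ Set.range f)
    (hgen : ∀ z : O, ∃ x y : o, z = f x + f y * β)
    (σ : O →+* O) (hσf : ∀ x : o, σ (f x) = f x) (hσσ : ∀ z : O, σ (σ z) = z)
    (Nr : O →* o) (hNr : ∀ z : O, f (Nr z) = z * σ z)
    (hβunit : IsUnit (Nr β))

include hf hβ hσf hNr hβunit in
lemma rep_unique (x y x' y' : o) (h : f x + f y * β = f x' + f y' * β) :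
    x = x' ∧ y = y' := by
  have hcore : f (x - x') = f (y' - y) * β := by
    rw [map_sub, map_sub]
    linear_combination h
  obtain ⟨h1, h2⟩ := core_indep f hf β hβ σ hσf Nr hNr hβunit _ _ hcore
  constructor
  · linear_combination h1
  · linear_combination -h2

include hf hβ hgen hσf hσσ hNr hβunit in
lemma exists_T : ∃ T : o, σ β = f T - β ∧ β * β = f T * β - f (Nr β) := by
  obtain ⟨a, b, hab⟩ := hgen (σ β)
  have h1 : f (a + b * a) + f (b * b) * β = f 0 + f 1 * β := by
    have hσ2 := hσσ β
    rw [hab, map_add, map_mul, hσf, hσf, hab] at hσ2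
    rw [map_add, map_mul, map_mul, map_zero, map_one]
    linear_combination hσ2
  obtain ⟨hb1, hb2⟩ := rep_unique f hf β hβ σ hσf Nr hNr hβunit _ _ _ _ h1
  have hfactor : (b - 1) * (b + 1) = 0 := by linear_combination hb2
  rcases mul_eq_zero.mp hfactor with hb | hb
  · -- b = 1, characteristic-2 case
    have hb' : b = 1 := by linear_combination hb
    rw [hb', map_one, one_mul] at hab
    have hNβ : f (Nr β) = f a * β + β * β := by rw [hNr β, hab]; ring
    have hchar : (2 : o) = 0 := by
      have h3 : f (Nr (1 + β)) = (1 + β) * (1 + (f a + β)) := by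
        rw [hNr, map_add, map_one, hab]
      have h4 : f (Nr (1 + β)) + f 0 * β = f (1 + a + Nr β) + f 2 * β := by
        rw [h3, map_add, map_add, map_one, map_zero]
        have h2' : f (2 : o) = (2 : O) := by
          rw [show (2 : o) = 1 + 1 by norm_num, map_add, map_one]; norm_num
        rw [h2']
        linear_combination -hNβ
      have := (rep_unique f hf β hβ σ hσf Nr hNr hβunit _ _ _ _ h4).2
      exact this.symm
    have h2O : (2 : O) = 0 := by
      have h2' : f (2 : o) = (2 : O) := by
        rw [show (2 : o) = 1 + 1 by norm_num, map_add, map_one]; norm_num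
      rw [← h2', hchar, map_zero]
    refine ⟨a, ?_, ?_⟩
    · rw [hab]; linear_combination β * h2O
    · linear_combination hNβ + β * β * h2O
  · -- b = -1
    have hb' : b = -1 := by linear_combination hb
    rw [hb'] at hab
    have hab2 : σ β = f a - β := by rw [hab, map_neg, map_one]; ring
    refine ⟨a, hab2, ?_⟩
    have hNβ : f (Nr β) = β * (f a - β) := by rw [hNr β, hab2]
    linear_combination hNβ

include hf hβ hgen hσf hNr hβunit in
lemma isUnit_f_iff (m : o) : IsUnit (f m) ↔ IsUnit m := by
  constructor
  · intro hu
    obtain ⟨v, hv⟩ := hu.exists_right_inv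
    obtain ⟨a, b, rfl⟩ := hgen v
    have h1 : f (m * a) + f (m * b) * β = f 1 + f 0 * β := by
      rw [map_mul, map_mul, map_one, map_zero]
      linear_combination hv
    have := (rep_unique f hf β hβ σ hσf Nr hNr hβunit _ _ _ _ h1).1
    exact IsUnit.of_mul_eq_one _ this
  · exact fun hu => hu.map f

include hσf in
lemma sigma_apply (T : o) (hT1 : σ β = f T - β) (x y : o) :
    σ (f x + f y * β) = f (x + T * y) - f y * β := by
  rw [map_add, map_mul, hσf, hσf, hT1, map_add, map_mul]
  ring

include hf hσf hNr in
lemma Nr_apply (T : o) (hT1 : σ β = f T - β) (hT2 : β * β = f T * β - f (Nr β))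
    (x y : o) :
    Nr (f x + f y * β) = x * x + T * (x * y) + Nr β * (y * y) := by
  apply hf
  rw [hNr, sigma_apply f β σ hσf T hT1]
  simp only [map_add, map_mul]
  linear_combination (-(f y * f y)) * hT2

include hϖ in
lemma unit_iff_not_dvd (a : o) : IsUnit a ↔ ¬ ϖ ∣ a := by
  constructor
  · intro hu hdvd
    exact hϖ.not_isUnit (isUnit_of_dvd_unit hdvd hu)
  · intro hnd
    by_contra hnu
    refine hnd ?_
    rw [← Ideal.mem_span_singleton, ← hϖ.maximalIdeal_eq]
    exact hnu

include hσσ hNr in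
lemma isUnit_O_of_Nr (z : O) (hu : IsUnit (Nr z)) : IsUnit z := by
  refine IsUnit.of_mul_eq_one (a := z) (σ z * f ↑hu.unit⁻¹) ?_
  rw [← mul_assoc, ← hNr z, ← map_mul]
  rw [show (Nr z) * ↑hu.unit⁻¹ = ↑hu.unit * ↑hu.unit⁻¹ by rw [hu.unit_spec]]
  rw [Units.mul_inv, map_one]

end main2

end Stmt7Main
namespace Stmt7Main

section main3

variable {o O : Type*} [CommRing o] [IsDomain o] [IsDiscreteValuationRing o]
    [CommRing O] [IsDomain O] [IsDiscreteValuationRing O]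
    (f : o →+* O) (hf : Function.Injective f)
    (ϖ : o) (hϖ : Irreducible ϖ)
    (β : O) (hβ : β ∉ Set.range f)
    (hgen : ∀ z : O, ∃ x y : o, z = f x + f y * β)
    (σ : O →+* O) (hσf : ∀ x : o, σ (f x) = f x) (hσσ : ∀ z : O, σ (σ z) = z)
    (Nr : O →* o) (hNr : ∀ z : O, f (Nr z) = z * σ z)
    (hβunit : IsUnit (Nr β))

include hσf hNr in
lemma mem_ordUnits_iff (T : o) (hT1 : σ β = f T - β) (r : ℕ) (z : O) :
    z ∈ ordUnits f ϖ β r ↔ z ∈ ordSet f ϖ β r ∧ IsUnit (Nr z) := by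
  constructor
  · rintro ⟨hz, w, hw, hzw⟩
    refine ⟨hz, IsUnit.of_mul_eq_one (Nr w) ?_⟩
    rw [← map_mul, hzw, map_one]
  · rintro ⟨hz, hm⟩
    refine ⟨hz, ?_⟩
    obtain ⟨x, y, rfl⟩ := hz
    set iv : o := ↑hm.unit⁻¹ with hiv
    refine ⟨f (iv * (x + T * (ϖ ^ r * y))) + f (ϖ ^ r * (-(iv * y))) * β,
      ⟨iv * (x + T * (ϖ ^ r * y)), -(iv * y), rfl⟩, ?_⟩
    have hw : f (iv * (x + T * (ϖ ^ r * y))) + f (ϖ ^ r * (-(iv * y))) * β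
        = σ (f x + f (ϖ ^ r * y) * β) * f iv := by
      rw [sigma_apply f β σ hσf T hT1]
      simp only [map_add, map_mul, map_neg]
      ring
    rw [hw, ← mul_assoc, mul_comm (f x + f (ϖ ^ r * y) * β) (σ _), mul_comm _ (f iv)]
    rw [mul_comm (σ _) (f x + f (ϖ ^ r * y) * β), ← hNr, ← map_mul]
    rw [show iv * Nr (f x + f (ϖ ^ r * y) * β) = ↑hm.unit⁻¹ * ↑hm.unit by
      rw [hm.unit_spec, hiv]]
    rw [Units.inv_mul, map_one]

include hσf in
lemma mulconj (T : o) (hT1 : σ β = f T - β) (hT2 : β * β = f T * β - f (Nr β))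
    (r : ℕ) (x y x' y' : o) :
    (f x' + f (ϖ ^ r * y') * β) * σ (f x + f (ϖ ^ r * y) * β)
      = f (x' * x + T * (x' * (ϖ ^ r * y)) + Nr β * ((ϖ ^ r * y) * (ϖ ^ r * y')))
        + f (ϖ ^ r * (y' * x - x' * y)) * β := by
  rw [sigma_apply f β σ hσf T hT1]
  simp only [map_add, map_mul, map_sub, map_pow]
  linear_combination (-(f ϖ ^ r * f y' * (f ϖ ^ r * f y))) * hT2

include hf hβ hgen hσf hσσ hNr hβunit in
lemma unram_aniso (hIrr : Irreducible (f ϖ)) (x y : o)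
    (hdvd : ϖ ∣ Nr (f x + f y * β)) : ϖ ∣ x ∧ ϖ ∣ y := by
  obtain ⟨c, hc⟩ := hdvd
  have hprime : Prime (f ϖ) := hIrr.prime
  have hdz : f ϖ ∣ (f x + f y * β) * σ (f x + f y * β) := ⟨f c, by rw [← hNr, hc, map_mul]⟩
  have hfz : f ϖ ∣ (f x + f y * β) := by
    rcases hprime.2.2 _ _ hdz with h | h
    · exact h
    · obtain ⟨w, hw⟩ := h
      refine ⟨σ w, ?_⟩
      rw [← hσσ (f x + f y * β), hw, map_mul, hσf]
  obtain ⟨w, hw⟩ := hfz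
  obtain ⟨a, b, rfl⟩ := hgen w
  have h1 : f x + f y * β = f (ϖ * a) + f (ϖ * b) * β := by
    rw [hw, map_mul, map_mul]; ring
  obtain ⟨h2, h3⟩ := rep_unique f hf β hβ σ hσf Nr hNr hβunit _ _ _ _ h1
  exact ⟨⟨a, h2⟩, ⟨b, h3⟩⟩

include hf hϖ hβ hgen hσf hσσ hNr hβunit in
lemma ram_exists_s (hram : ¬ Irreducible (f ϖ)) : ∃ s : o, ¬ IsUnit (β - f s) := by
  obtain ⟨π, hπ⟩ := IsDiscreteValuationRing.exists_irreducible O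
  have hfϖ0 : f ϖ ≠ 0 := fun h => hϖ.ne_zero (hf (by rw [h, map_zero]))
  have hfϖnu : ¬ IsUnit (f ϖ) := fun h =>
    hϖ.not_isUnit ((isUnit_f_iff f hf β hβ hgen σ hσf Nr hNr hβunit ϖ).mp h)
  obtain ⟨m, u, hfeq⟩ := IsDiscreteValuationRing.eq_unit_mul_pow_irreducible hfϖ0 hπ
  have hm2 : 2 ≤ m := by
    by_contra hm
    interval_cases m
    · exact hfϖnu (by rw [hfeq, pow_zero, mul_one]; exact u.isUnit)
    · refine hram ?_
      rw [hfeq, pow_one]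
      have hassoc : Associated π (↑u * π) := ⟨u, by ring⟩
      exact hassoc.irreducible hπ
  have hsq : π ^ 2 ∣ f ϖ := by
    refine ⟨↑u * π ^ (m - 2), ?_⟩
    rw [hfeq, show π ^ m = π ^ 2 * π ^ (m - 2) by rw [← pow_add]; congr 1; omega]
    ring
  obtain ⟨a, b, hπab⟩ := hgen π
  by_cases hb : IsUnit b
  · set iv : o := ↑hb.unit⁻¹ with hiv
    have hbb : iv * b = 1 := hb.val_inv_mul
    refine ⟨-(iv * a), ?_⟩
    have hkey : β - f (-(iv * a)) = f iv * π := by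
      rw [hπab, map_neg, map_mul]
      have h1 : f iv * f b = 1 := by rw [← map_mul, hbb, map_one]
      linear_combination (-β) * h1
    rw [hkey]
    intro hu
    exact hπ.not_isUnit (isUnit_of_mul_isUnit_right hu)
  · have hπdvdfϖ : π ∣ f ϖ := dvd_trans ⟨π, (pow_two π).symm ▸ rfl⟩ hsq
    obtain ⟨b', rfl⟩ : ϖ ∣ b := by
      by_contra hnd
      exact hb ((unit_iff_not_dvd ϖ hϖ b).mpr hnd)
    obtain ⟨a', rfl⟩ : ϖ ∣ a := by
      by_contra hnd
      have hua : IsUnit a := (unit_iff_not_dvd ϖ hϖ a).mpr hnd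
      have hfa : f a = π - f ϖ * f b' * β := by
        rw [hπab, map_mul]; ring
      have hπdvdfa : π ∣ f a := by
        rw [hfa]
        exact dvd_sub (dvd_refl π) (Dvd.dvd.mul_right (Dvd.dvd.mul_right hπdvdfϖ _) _)
      exact hπ.not_isUnit (isUnit_of_dvd_unit hπdvdfa (hua.map f))
    exfalso
    obtain ⟨w, hw⟩ := hsq
    have h1 : π * 1 = π * (π * w * (f a' + f b' * β)) := by
      calc π * 1 = f (ϖ * a') + f (ϖ * b') * β := by rw [mul_one]; exact hπab
      _ = f ϖ * (f a' + f b' * β) := by simp only [map_mul]; ring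
      _ = π * (π * w * (f a' + f b' * β)) := by rw [hw]; ring
    have h2 := mul_left_cancel₀ hπ.ne_zero h1
    exact hπ.not_isUnit (IsUnit.of_mul_eq_one (w * (f a' + f b' * β))
      (by linear_combination -h2))

end main3

end Stmt7Main

/-- The quadratic norm form at residue/quotient level. -/
def Qb {o kk : Type*} [CommRing o] [CommRing kk] (g : o →+* kk) (ϖ T N : o) (r : ℕ)
    (w : kk × kk) : kk :=
  w.1 * w.1 + g T * (w.1 * (g (ϖ ^ r) * w.2)) +
    g N * ((g (ϖ ^ r) * w.2) * (g (ϖ ^ r) * w.2))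

lemma Qb_map {o kk : Type*} [CommRing o] [CommRing kk] (g : o →+* kk) (ϖ T N : o) (r : ℕ)
    (x y : o) :
    Qb g ϖ T N r (g x, g y)
      = g (x * x + T * (x * (ϖ ^ r * y)) + N * ((ϖ ^ r * y) * (ϖ ^ r * y))) := by
  simp only [Qb, map_add, map_mul]

lemma card_compl_singleton {α : Type*} [Finite α] (a : α) :
    Nat.card {x : α // x ≠ a} = Nat.card α - 1 := by
  classical
  haveI := Fintype.ofFinite α
  rw [Nat.card_eq_fintype_card, Nat.card_eq_fintype_card]
  have h := Fintype.card_subtype_compl (fun x : α => x = a)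
  rw [Fintype.card_subtype_eq] at h
  exact h

namespace Stmt7Main

section main4

variable {o O : Type*} [CommRing o] [IsDomain o] [IsDiscreteValuationRing o]
    [CommRing O] [IsDomain O] [IsDiscreteValuationRing O]
    (f : o →+* O) (hf : Function.Injective f)
    (ϖ : o) (hϖ : Irreducible ϖ)
    (β : O) (hβ : β ∉ Set.range f)
    (hgen : ∀ z : O, ∃ x y : o, z = f x + f y * β)
    (σ : O →+* O) (hσf : ∀ x : o, σ (f x) = f x) (hσσ : ∀ z : O, σ (σ z) = z)
    (Nr : O →* o) (hNr : ∀ z : O, f (Nr z) = z * σ z)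
    (hβunit : IsUnit (Nr β))

include hϖ in
lemma isUnit_mk_iff (I : Ideal o) (hI : I ≤ Ideal.span ({ϖ} : Set o)) (a : o) :
    IsUnit (Ideal.Quotient.mk I a) ↔ IsUnit a := by
  constructor
  · intro hu
    obtain ⟨v, hv⟩ := hu.exists_right_inv
    obtain ⟨c, rfl⟩ := Ideal.Quotient.mk_surjective v
    rw [← map_mul, ← map_one (Ideal.Quotient.mk I), Ideal.Quotient.eq] at hv
    obtain ⟨d, hd⟩ := Ideal.mem_span_singleton.mp (hI hv)
    have hnu : ¬ IsUnit (-(ϖ * d)) := by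
      intro hu2
      exact hϖ.not_isUnit (isUnit_of_dvd_unit ⟨-d, by ring⟩ hu2)
    have : IsUnit (a * c) := by
      rw [show a * c = 1 - -(ϖ * d) by linear_combination hd]
      exact IsLocalRing.isUnit_one_sub_self_of_mem_nonunits _ (mem_nonunits_iff.mpr hnu)
    exact isUnit_of_mul_isUnit_left this
  · exact fun hu => hu.map _

include hf hϖ hβ hgen hσf hσσ hNr hβunit in
lemma main_count (T : o) (hT1 : σ β = f T - β) (hT2 : β * β = f T * β - f (Nr β))
    (q : ℕ) (hfin : Finite (o ⧸ Ideal.span ({ϖ} : Set o)))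
    (hq : Nat.card (o ⧸ Ideal.span ({ϖ} : Set o)) = q)
    (r n' : ℕ) :
    unitIndex f ϖ β r (n' + 1) * ((q - 1) * q ^ n') =
      Nat.card ({w | Qb (Ideal.Quotient.mk (Ideal.span ({ϖ} : Set o))) ϖ T (Nr β) r w ≠ 0} :
        Set ((o ⧸ Ideal.span ({ϖ} : Set o)) × (o ⧸ Ideal.span ({ϖ} : Set o)))) *
        (q ^ n' * q ^ n') := by
  classical
  set n : ℕ := n' + 1 with hn
  have hϖ0 : ϖ ≠ 0 := hϖ.ne_zero
  have hϖr0 : ϖ ^ r ≠ 0 := pow_ne_zero r hϖ0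
  set κ : o →+* o ⧸ Ideal.span ({ϖ} : Set o) := Ideal.Quotient.mk _ with hκdef
  set ρ : o →+* o ⧸ Ideal.span ({ϖ ^ n} : Set o) := Ideal.Quotient.mk _ with hρdef
  have hle : Ideal.span ({ϖ ^ n} : Set o) ≤ Ideal.span ({ϖ} : Set o) := by
    rw [Ideal.span_singleton_le_span_singleton]
    exact dvd_pow_self ϖ (by omega)
  set φ : (o ⧸ Ideal.span ({ϖ ^ n} : Set o)) →+* (o ⧸ Ideal.span ({ϖ} : Set o)) :=
    Ideal.Quotient.factor hle with hφdef
  have hρs : Surjective ρ := Ideal.Quotient.mk_surjective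
  have hκs : Surjective κ := Ideal.Quotient.mk_surjective
  have hφρ : ∀ x : o, φ (ρ x) = κ x := fun x => Ideal.Quotient.factor_mk hle x
  have hφs : Surjective φ.toAddMonoidHom := by
    intro z
    obtain ⟨x, rfl⟩ := hκs z
    exact ⟨ρ x, hφρ x⟩
  have hUρ : ∀ a : o, IsUnit (ρ a) ↔ IsUnit a := fun a => isUnit_mk_iff ϖ hϖ _ hle a
  have hUo : ∀ a : o, IsUnit a ↔ ¬ ϖ ∣ a := fun a => unit_iff_not_dvd ϖ hϖ a
  have hκ0 : ∀ a : o, κ a = 0 ↔ ϖ ∣ a := fun a => by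
    rw [hκdef, Ideal.Quotient.eq_zero_iff_mem, Ideal.mem_span_singleton]
  have hρeq : ∀ a b : o, ρ a = ρ b ↔ ϖ ^ n ∣ a - b := fun a b => by
    rw [hρdef, Ideal.Quotient.eq, Ideal.mem_span_singleton]
  obtain ⟨hfinR, hcardR⟩ := Stmt7Aux.quot_pow_finite_card hϖ hfin hq n
  haveI := hfinR
  have hKbridge :
      Nat.card {z : o ⧸ Ideal.span ({ϖ ^ n} : Set o) // φ.toAddMonoidHom z = 0} = q ^ n' := by
    have e := Stmt7Aux.kerFactorEquiv hϖ n' 1 n (by omega)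
      (J := Ideal.span ({ϖ} : Set o)) (by rw [pow_one]) hle
    have e' : {z : o ⧸ Ideal.span ({ϖ ^ n} : Set o) // φ.toAddMonoidHom z = 0} ≃
        {z : o ⧸ Ideal.span ({ϖ ^ n} : Set o) //
          Ideal.Quotient.factor hle z = 0} :=
      Equiv.subtypeEquivRight (fun z => Iff.rfl)
    rw [Nat.card_congr (e'.trans e.symm)]
    exact (Stmt7Aux.quot_pow_finite_card hϖ hfin hq n').2
  set Qo : o → o → o := fun x y =>
    x * x + T * (x * (ϖ ^ r * y)) + Nr β * ((ϖ ^ r * y) * (ϖ ^ r * y)) with hQodef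
  have hNrz : ∀ x y : o, Nr (f x + f (ϖ ^ r * y) * β) = Qo x y := fun x y =>
    Nr_apply f hf β σ hσf Nr hNr T hT1 hT2 x (ϖ ^ r * y)
  have hQbρ : ∀ x y : o, Qb ρ ϖ T (Nr β) r (ρ x, ρ y) = ρ (Qo x y) := fun x y =>
    Qb_map ρ ϖ T (Nr β) r x y
  have hQbκ : ∀ x y : o, Qb κ ϖ T (Nr β) r (κ x, κ y) = κ (Qo x y) := fun x y =>
    Qb_map κ ϖ T (Nr β) r x y
  have hdvdQo : ∀ x y : o, ϖ ∣ x → ϖ ∣ y → ϖ ∣ Qo x y := by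
    intro x y hx hy
    refine dvd_add (dvd_add (hx.mul_right x) ((hx.mul_right (ϖ ^ r * y)).mul_left T)) ?_
    exact ((hy.mul_left (ϖ ^ r)).mul_right (ϖ ^ r * y)).mul_left (Nr β)
  -- choose coordinates for the elements of `ordUnits r`
  choose X Y hXY using fun t : ↥(ordUnits f ϖ β r) => t.2.1
  have hNrt : ∀ t : ↥(ordUnits f ϖ β r), IsUnit (Nr (t : O)) := fun t =>
    ((mem_ordUnits_iff f ϖ β σ hσf Nr hNr T hT1 r t.1).mp t.2).2
  have hQot : ∀ t : ↥(ordUnits f ϖ β r), Nr (t : O) = Qo (X t) (Y t) := by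
    intro t
    have h := hNrz (X t) (Y t)
    rw [← hXY t] at h
    exact h
  have hcV_mem : ∀ t : ↥(ordUnits f ϖ β r), IsUnit (Qb ρ ϖ T (Nr β) r (ρ (X t), ρ (Y t))) := by
    intro t
    rw [hQbρ]
    exact (hUρ _).mpr ((hQot t) ▸ hNrt t)
  set cV : ↥(ordUnits f ϖ β r) →
      {p : _ × _ // IsUnit (Qb ρ ϖ T (Nr β) r p)} :=
    fun t => ⟨(ρ (X t), ρ (Y t)), hcV_mem t⟩ with hcVdef
  set rel1 : ↥(ordUnits f ϖ β r) → ↥(ordUnits f ϖ β r) → Prop :=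
    fun t t' => ∃ u ∈ ordUnits f ϖ β (r + n), u * (t : O) = t' with hrel1def
  set rel2 : {p : _ × _ // IsUnit (Qb ρ ϖ T (Nr β) r p)} →
      {p : _ × _ // IsUnit (Qb ρ ϖ T (Nr β) r p)} → Prop := fun v w =>
    ∃ a : o, IsUnit a ∧ ρ a * v.1.1 = w.1.1 ∧ ρ a * v.1.2 = w.1.2 with hrel2def
  have hProd : ∀ a b x y : o,
      (f a + f (ϖ ^ (r + n) * b) * β) * (f x + f (ϖ ^ r * y) * β) =
        f (a * x - ϖ ^ r * ϖ ^ r * ϖ ^ n * (Nr β * (b * y))) +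
          f (ϖ ^ r * (a * y + ϖ ^ n * (b * x) + ϖ ^ r * ϖ ^ n * (T * (b * y)))) * β := by
    intro a b x y
    simp only [map_add, map_mul, map_sub, map_pow, pow_add]
    linear_combination (f ϖ ^ r * f ϖ ^ n * f b * (f ϖ ^ r * f y)) * hT2
  have hWD : ∀ t t', rel1 t t' → rel2 (cV t) (cV t') := by
    intro t t' h
    obtain ⟨u, hu, hut⟩ := h
    obtain ⟨a, b, hab⟩ := hu.1
    have hNru : IsUnit (Nr u) :=
      ((mem_ordUnits_iff f ϖ β σ hσf Nr hNr T hT1 (r + n) u).mp hu).2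
    have ha : IsUnit a := by
      rw [hUo]
      intro hdvda
      have h1 : ϖ ∣ Nr u := by
        rw [hab, Nr_apply f hf β σ hσf Nr hNr T hT1 hT2]
        have hϖrn : ϖ ∣ ϖ ^ (r + n) * b := (dvd_pow_self ϖ (by omega : r + n ≠ 0)).mul_right b
        refine dvd_add (dvd_add (hdvda.mul_right a) ?_) ?_
        · exact (hϖrn.mul_left a).mul_left T
        · exact (hϖrn.mul_right _).mul_left (Nr β)
      exact ((hUo _).mp hNru) h1
    have hexp : (t' : O) = f (a * X t - ϖ ^ r * ϖ ^ r * ϖ ^ n * (Nr β * (b * Y t))) +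
        f (ϖ ^ r * (a * Y t + ϖ ^ n * (b * X t) + ϖ ^ r * ϖ ^ n * (T * (b * Y t)))) * β := by
      rw [← hut, hab, hXY t, hProd]
    have huniq := rep_unique f hf β hβ σ hσf Nr hNr hβunit _ _ _ _
      ((hXY t').symm.trans hexp)
    have hX' : X t' = a * X t - ϖ ^ r * ϖ ^ r * ϖ ^ n * (Nr β * (b * Y t)) := huniq.1
    have hY' : Y t' = a * Y t + ϖ ^ n * (b * X t) + ϖ ^ r * ϖ ^ n * (T * (b * Y t)) :=
      mul_left_cancel₀ hϖr0 huniq.2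
    refine ⟨a, ha, ?_, ?_⟩
    · show ρ a * ρ (X t) = ρ (X t')
      rw [← map_mul, hρeq]
      exact ⟨ϖ ^ r * ϖ ^ r * (Nr β * (b * Y t)), by rw [hX']; ring⟩
    · show ρ a * ρ (Y t) = ρ (Y t')
      rw [← map_mul, hρeq]
      exact ⟨-(b * X t + ϖ ^ r * (T * (b * Y t))), by rw [hY']; ring⟩
  have hrel2equiv : Equivalence rel2 := by
    constructor
    · intro v
      exact ⟨1, isUnit_one, by simp, by simp⟩
    · rintro v w ⟨a, ha, h1, h2⟩
      obtain ⟨c, hc⟩ := ha.exists_right_inv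
      have hca : c * a = 1 := by linear_combination hc
      refine ⟨c, IsUnit.of_mul_eq_one (a := c) a hca, ?_, ?_⟩
      · rw [← h1, ← mul_assoc, ← map_mul, hca, map_one, one_mul]
      · rw [← h2, ← mul_assoc, ← map_mul, hca, map_one, one_mul]
    · rintro u v w ⟨a, ha, h1, h2⟩ ⟨a', ha', h1', h2'⟩
      refine ⟨a' * a, ha'.mul ha, ?_, ?_⟩
      · rw [map_mul, mul_assoc, h1, h1']
      · rw [map_mul, mul_assoc, h2, h2']
  have hInj : ∀ t t', rel2 (cV t) (cV t') → rel1 t t' := by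
    intro t t' h
    obtain ⟨a, ha, h1, h2⟩ := h
    obtain ⟨c, hc⟩ : ϖ ^ n ∣ a * X t - X t' := by
      rw [← hρeq, map_mul]
      exact h1
    obtain ⟨d, hd⟩ : ϖ ^ n ∣ a * Y t - Y t' := by
      rw [← hρeq, map_mul]
      exact h2
    have hm := hNrt t
    set iv : o := ↑hm.unit⁻¹ with hivdef
    have hmiv : Nr (t : O) * iv = 1 := hm.mul_val_inv
    set u : O := (t' : O) * σ (t : O) * f iv with hudef
    have hut : u * (t : O) = (t' : O) := by
      have h3 : u * (t : O) = (t' : O) * (((t : O) * σ (t : O)) * f iv) := by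
        rw [hudef]; ring
      rw [h3, ← hNr, ← map_mul, hmiv, map_one, mul_one]
    have hyx : Y t' * X t - X t' * Y t = ϖ ^ n * (c * Y t - d * X t) := by
      linear_combination Y t * hc - X t * hd
    have hconj := mulconj f ϖ β σ hσf Nr T hT1 hT2 r (X t) (Y t) (X t') (Y t')
    have humem : u ∈ ordSet f ϖ β (r + n) := by
      refine ⟨(X t' * X t + T * (X t' * (ϖ ^ r * Y t))
        + Nr β * ((ϖ ^ r * Y t) * (ϖ ^ r * Y t'))) * iv,
        (c * Y t - d * X t) * iv, ?_⟩
      rw [hudef, hXY t, hXY t', hconj, hyx]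
      simp only [map_add, map_mul, map_sub, map_pow, pow_add]
      ring
    have hNru : IsUnit (Nr u) := by
      have h4 : Nr u * Nr (t : O) = Nr (t' : O) := by rw [← map_mul, hut]
      have h5 := hNrt t'
      rw [← h4] at h5
      exact isUnit_of_mul_isUnit_left h5
    exact ⟨u, (mem_ordUnits_iff f ϖ β σ hσf Nr hNr T hT1 (r + n) u).mpr ⟨humem, hNru⟩, hut⟩
  have hSurj : ∀ v : {p : _ × _ // IsUnit (Qb ρ ϖ T (Nr β) r p)},
      ∃ t : ↥(ordUnits f ϖ β r), cV t = v := by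
    intro v
    obtain ⟨x, hx⟩ := hρs v.1.1
    obtain ⟨y, hy⟩ := hρs v.1.2
    have hpair : (ρ x, ρ y) = v.1 := by rw [hx, hy]
    have hvq : IsUnit (Qb ρ ϖ T (Nr β) r (ρ x, ρ y)) := by rw [hpair]; exact v.2
    have hQu : IsUnit (Qo x y) := (hUρ _).mp (by rw [← hQbρ x y]; exact hvq)
    have hNz : IsUnit (Nr (f x + f (ϖ ^ r * y) * β)) := by rw [hNrz]; exact hQu
    have hmem : (f x + f (ϖ ^ r * y) * β) ∈ ordUnits f ϖ β r :=
      (mem_ordUnits_iff f ϖ β σ hσf Nr hNr T hT1 r _).mpr ⟨⟨x, y, rfl⟩, hNz⟩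
    refine ⟨⟨_, hmem⟩, ?_⟩
    have huniq := rep_unique f hf β hβ σ hσf Nr hNr hβunit _ _ _ _
      ((hXY ⟨_, hmem⟩).symm)
    have hXx : X ⟨_, hmem⟩ = x := huniq.1
    have hYy : Y ⟨_, hmem⟩ = y := mul_left_cancel₀ hϖr0 huniq.2
    apply Subtype.ext
    show (ρ (X ⟨_, hmem⟩), ρ (Y ⟨_, hmem⟩)) = v.1
    rw [hXx, hYy, ← hpair]
  set F : Quot rel1 → Quot rel2 :=
    Quot.lift (fun t => Quot.mk rel2 (cV t)) (fun t t' h => Quot.sound (hWD t t' h))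
    with hFdef
  have hexact2 : ∀ v w, Quot.mk rel2 v = Quot.mk rel2 w → rel2 v w := fun v w h =>
    (Equivalence.eqvGen_iff hrel2equiv).mp (Quot.eqvGen_exact h)
  have hFbij : Bijective F := by
    constructor
    · intro q1 q2 h
      obtain ⟨t, rfl⟩ := Quot.exists_rep q1
      obtain ⟨t', rfl⟩ := Quot.exists_rep q2
      exact Quot.sound (hInj t t' (hexact2 _ _ h))
    · intro ω
      obtain ⟨v, rfl⟩ := Quot.exists_rep ω
      obtain ⟨t, ht⟩ := hSurj v
      exact ⟨Quot.mk rel1 t, congrArg (Quot.mk rel2) ht⟩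
  -- scaling and freeness
  have hQbscale : ∀ (A : o ⧸ Ideal.span ({ϖ ^ n} : Set o)) (p : _ × _),
      Qb ρ ϖ T (Nr β) r (A * p.1, A * p.2) = A * A * Qb ρ ϖ T (Nr β) r p := by
    intro A p
    simp only [Qb]
    ring
  have hVunit : ∀ v : {p : _ × _ // IsUnit (Qb ρ ϖ T (Nr β) r p)},
      IsUnit v.1.1 ∨ IsUnit v.1.2 := by
    intro v
    obtain ⟨x, hx⟩ := hρs v.1.1
    obtain ⟨y, hy⟩ := hρs v.1.2
    have hpair : (ρ x, ρ y) = v.1 := by rw [hx, hy]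
    have hvq : IsUnit (Qb ρ ϖ T (Nr β) r (ρ x, ρ y)) := by rw [hpair]; exact v.2
    have hQu : IsUnit (Qo x y) := (hUρ _).mp (by rw [← hQbρ x y]; exact hvq)
    by_contra hcon
    push_neg at hcon
    obtain ⟨h1, h2⟩ := hcon
    have hnx : ¬ IsUnit x := fun h => h1 (hx ▸ (hUρ x).mpr h)
    have hny : ¬ IsUnit y := fun h => h2 (hy ▸ (hUρ y).mpr h)
    have hdx : ϖ ∣ x := not_not.mp (fun hnd => hnx ((hUo x).mpr hnd))
    have hdy : ϖ ∣ y := not_not.mp (fun hnd => hny ((hUo y).mpr hnd))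
    exact ((hUo _).mp hQu) (hdvdQo x y hdx hdy)
  set G : {A : o ⧸ Ideal.span ({ϖ ^ n} : Set o) // IsUnit A} × Quot rel2 →
      {p : _ × _ // IsUnit (Qb ρ ϖ T (Nr β) r p)} := fun p =>
    ⟨(p.1.1 * (Quot.out p.2).1.1, p.1.1 * (Quot.out p.2).1.2), by
      rw [hQbscale]
      exact (p.1.2.mul p.1.2).mul (Quot.out p.2).2⟩ with hGdef
  have hGclass : ∀ (A : {A : o ⧸ Ideal.span ({ϖ ^ n} : Set o) // IsUnit A}) (ω : Quot rel2),
      Quot.mk rel2 (G (A, ω)) = ω := by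
    intro A ω
    obtain ⟨a, haA⟩ := hρs A.1
    have ha : IsUnit a := (hUρ a).mp (by rw [haA]; exact A.2)
    have hrel : rel2 (Quot.out ω) (G (A, ω)) := by
      refine ⟨a, ha, ?_, ?_⟩
      · show ρ a * (Quot.out ω).1.1 = A.1 * (Quot.out ω).1.1
        rw [haA]
      · show ρ a * (Quot.out ω).1.2 = A.1 * (Quot.out ω).1.2
        rw [haA]
    calc Quot.mk rel2 (G (A, ω)) = Quot.mk rel2 (Quot.out ω) := (Quot.sound hrel).symm
    _ = ω := Quot.out_eq ω
  have hGbij : Bijective G := by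
    constructor
    · rintro ⟨A, ω⟩ ⟨A', ω'⟩ h
      have hωω : ω = ω' := by rw [← hGclass A ω, ← hGclass A' ω', h]
      subst hωω
      have hcoords : ((G (A, ω)).1 : _ × _) = (G (A', ω)).1 := by rw [h]
      have h1 : A.1 * (Quot.out ω).1.1 = A'.1 * (Quot.out ω).1.1 :=
        congrArg Prod.fst hcoords
      have h2 : A.1 * (Quot.out ω).1.2 = A'.1 * (Quot.out ω).1.2 :=
        congrArg Prod.snd hcoords
      have hAA : A.1 = A'.1 := by
        rcases hVunit (Quot.out ω) with hu | hu
        · obtain ⟨uu, huu⟩ := hu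
          rw [← huu] at h1
          have := congrArg (fun z => z * (↑uu⁻¹ : o ⧸ Ideal.span ({ϖ ^ n} : Set o))) h1
          simpa [mul_assoc] using this
        · obtain ⟨uu, huu⟩ := hu
          rw [← huu] at h2
          have := congrArg (fun z => z * (↑uu⁻¹ : o ⧸ Ideal.span ({ϖ ^ n} : Set o))) h2
          simpa [mul_assoc] using this
      rw [Prod.mk.injEq]
      exact ⟨Subtype.ext hAA, rfl⟩
    · intro v
      have hrel : rel2 (Quot.out (Quot.mk rel2 v)) v := hexact2 _ _ (by rw [Quot.out_eq])
      obtain ⟨a, ha, h1, h2⟩ := hrel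
      refine ⟨(⟨ρ a, (hUρ a).mpr ha⟩, Quot.mk rel2 v), ?_⟩
      apply Subtype.ext
      show (ρ a * (Quot.out (Quot.mk rel2 v)).1.1, ρ a * (Quot.out (Quot.mk rel2 v)).1.2) = v.1
      rw [h1, h2]
  have hcardV : Nat.card {p : _ × _ // IsUnit (Qb ρ ϖ T (Nr β) r p)} =
      Nat.card ({A : o ⧸ Ideal.span ({ϖ ^ n} : Set o) // IsUnit A} × Quot rel2) :=
    (Nat.card_eq_of_bijective G hGbij).symm
  -- cardinality of the unit subtype
  have hUnitsCard : Nat.card {A : o ⧸ Ideal.span ({ϖ ^ n} : Set o) // IsUnit A} =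
      (q - 1) * q ^ n' := by
    have hpoint : ∀ A : o ⧸ Ideal.span ({ϖ ^ n} : Set o), IsUnit A ↔
        φ.toAddMonoidHom A ∈ ({w | w ≠ 0} : Set (o ⧸ Ideal.span ({ϖ} : Set o))) := by
      intro A
      obtain ⟨x, rfl⟩ := hρs A
      rw [hUρ x, hUo x]
      show ¬ ϖ ∣ x ↔ φ (ρ x) ∈ _
      rw [hφρ x]
      simp only [Set.mem_setOf_eq, Ne, hκ0 x]
    rw [Nat.card_congr (Equiv.subtypeEquivRight hpoint),
      Stmt7Aux.card_fiber φ.toAddMonoidHom hφs _, hKbridge]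
    congr 1
    have e3 : ({w | w ≠ 0} : Set (o ⧸ Ideal.span ({ϖ} : Set o))) ≃
        {w : o ⧸ Ideal.span ({ϖ} : Set o) // w ≠ 0} :=
      Equiv.subtypeEquivRight (fun w => Iff.rfl)
    rw [Nat.card_congr e3, card_compl_singleton (0 : o ⧸ Ideal.span ({ϖ} : Set o)), hq]
  -- cardinality of V via reduction to the residue field
  set Φ2 := AddMonoidHom.prodMap φ.toAddMonoidHom φ.toAddMonoidHom with hΦ2def
  have hΦ2s : Surjective Φ2 := Surjective.prodMap hφs hφs
  have hVcard2 : Nat.card {p : _ × _ // IsUnit (Qb ρ ϖ T (Nr β) r p)} =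
      Nat.card ({w | Qb κ ϖ T (Nr β) r w ≠ 0} :
        Set ((o ⧸ Ideal.span ({ϖ} : Set o)) × (o ⧸ Ideal.span ({ϖ} : Set o)))) *
        (q ^ n' * q ^ n') := by
    have hpoint : ∀ p : (o ⧸ Ideal.span ({ϖ ^ n} : Set o)) × (o ⧸ Ideal.span ({ϖ ^ n} : Set o)),
        IsUnit (Qb ρ ϖ T (Nr β) r p) ↔
          Φ2 p ∈ ({w | Qb κ ϖ T (Nr β) r w ≠ 0} :
            Set ((o ⧸ Ideal.span ({ϖ} : Set o)) × (o ⧸ Ideal.span ({ϖ} : Set o)))) := by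
      intro p
      obtain ⟨x, hx⟩ := hρs p.1
      obtain ⟨y, hy⟩ := hρs p.2
      have hp : p = (ρ x, ρ y) := by rw [hx, hy]
      rw [hp, hQbρ, hUρ, hUo]
      have hΦ2v : Φ2 (ρ x, ρ y) = (κ x, κ y) := by
        have : Φ2 (ρ x, ρ y) = (φ (ρ x), φ (ρ y)) := rfl
        rw [this, hφρ, hφρ]
      rw [hΦ2v]
      simp only [Set.mem_setOf_eq, hQbκ, Ne, hκ0]
    have e1 := Equiv.subtypeEquivRight hpoint
    rw [Nat.card_congr e1, Stmt7Aux.card_fiber Φ2 hΦ2s _]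
    congr 1
    have e2 : {p : (o ⧸ Ideal.span ({ϖ ^ n} : Set o)) × (o ⧸ Ideal.span ({ϖ ^ n} : Set o)) //
        Φ2 p = 0} ≃
        {z : o ⧸ Ideal.span ({ϖ ^ n} : Set o) // φ.toAddMonoidHom z = 0} ×
        {z : o ⧸ Ideal.span ({ϖ ^ n} : Set o) // φ.toAddMonoidHom z = 0} := by
      refine ⟨fun p => (⟨p.1.1, (Prod.ext_iff.mp p.2).1⟩, ⟨p.1.2, (Prod.ext_iff.mp p.2).2⟩),
        fun z => ⟨(z.1.1, z.2.1), ?_⟩, fun p => ?_, fun z => ?_⟩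
      · have h1 : φ.toAddMonoidHom z.1.1 = 0 := z.1.2
        have h2 : φ.toAddMonoidHom z.2.1 = 0 := z.2.2
        show (φ.toAddMonoidHom z.1.1, φ.toAddMonoidHom z.2.1) = (0, 0)
        rw [h1, h2]
      · rfl
      · rfl
    rw [Nat.card_congr e2, Nat.card_prod, hKbridge]
  -- put everything together
  have hQLcard : unitIndex f ϖ β r n = Nat.card (Quot rel2) := by
    have h0 : unitIndex f ϖ β r n = Nat.card (Quot rel1) := rfl
    rw [h0]
    exact Nat.card_eq_of_bijective F hFbij
  calc unitIndex f ϖ β r n * ((q - 1) * q ^ n')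
      = Nat.card (Quot rel2) *
        Nat.card {A : o ⧸ Ideal.span ({ϖ ^ n} : Set o) // IsUnit A} := by
        rw [hQLcard, hUnitsCard]
    _ = Nat.card ({A : o ⧸ Ideal.span ({ϖ ^ n} : Set o) // IsUnit A} × Quot rel2) := by
        rw [Nat.card_prod]; ring
    _ = Nat.card {p : _ × _ // IsUnit (Qb ρ ϖ T (Nr β) r p)} := hcardV.symm
    _ = _ := hVcard2

end main4

end Stmt7Main
lemma card_subtype_fst_ne_zero {k : Type*} [CommRing k] [Finite k] {q : ℕ}
    (hq : Nat.card k = q) : Nat.card {w : k × k // w.1 ≠ 0} = (q - 1) * q := by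
  have e4 : {w : k × k // w.1 ≠ 0} ≃ {x : k // x ≠ 0} × k :=
    ⟨fun w => (⟨w.1.1, w.2⟩, w.1.2), fun p => ⟨(p.1.1, p.2), p.1.2⟩,
      fun w => rfl, fun p => rfl⟩
  rw [Nat.card_congr e4, Nat.card_prod, card_compl_singleton (0 : k), hq]

namespace Stmt7Main

section main5

variable {o O : Type*} [CommRing o] [IsDomain o] [IsDiscreteValuationRing o]
    [CommRing O] [IsDomain O] [IsDiscreteValuationRing O]
    (f : o →+* O) (hf : Function.Injective f)
    (ϖ : o) (hϖ : Irreducible ϖ)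
    (β : O) (hβ : β ∉ Set.range f)
    (hgen : ∀ z : O, ∃ x y : o, z = f x + f y * β)
    (σ : O →+* O) (hσf : ∀ x : o, σ (f x) = f x) (hσσ : ∀ z : O, σ (σ z) = z)
    (Nr : O →* o) (hNr : ∀ z : O, f (Nr z) = z * σ z)
    (hβunit : IsUnit (Nr β))

include hϖ in
lemma card_case_pos (T N : o) (q : ℕ) (hfin : Finite (o ⧸ Ideal.span ({ϖ} : Set o)))
    (hq : Nat.card (o ⧸ Ideal.span ({ϖ} : Set o)) = q) (r : ℕ) (hr : 0 < r) :
    Nat.card ({w | Qb (Ideal.Quotient.mk (Ideal.span ({ϖ} : Set o))) ϖ T N r w ≠ 0} :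
      Set ((o ⧸ Ideal.span ({ϖ} : Set o)) × (o ⧸ Ideal.span ({ϖ} : Set o)))) =
      (q - 1) * q := by
  classical
  have hϖprime : Prime ϖ := UniqueFactorizationMonoid.irreducible_iff_prime.mp hϖ
  have hκ0 : ∀ a : o, Ideal.Quotient.mk (Ideal.span ({ϖ} : Set o)) a = 0 ↔ ϖ ∣ a := fun a => by
    rw [Ideal.Quotient.eq_zero_iff_mem, Ideal.mem_span_singleton]
  have hκr0 : Ideal.Quotient.mk (Ideal.span ({ϖ} : Set o)) (ϖ ^ r) = 0 := by
    rw [Ideal.Quotient.eq_zero_iff_mem, Ideal.mem_span_singleton]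
    exact dvd_pow_self ϖ hr.ne'
  have hQ : ∀ w : (o ⧸ Ideal.span ({ϖ} : Set o)) × (o ⧸ Ideal.span ({ϖ} : Set o)),
      Qb (Ideal.Quotient.mk (Ideal.span ({ϖ} : Set o))) ϖ T N r w = w.1 * w.1 := by
    intro w
    simp only [Qb, hκr0]
    ring
  have hpoint : ∀ w : (o ⧸ Ideal.span ({ϖ} : Set o)) × (o ⧸ Ideal.span ({ϖ} : Set o)),
      w ∈ ({w | Qb (Ideal.Quotient.mk (Ideal.span ({ϖ} : Set o))) ϖ T N r w ≠ 0} :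
        Set _) ↔ w.1 ≠ 0 := by
    intro w
    obtain ⟨x, hx⟩ := (Ideal.Quotient.mk_surjective : Function.Surjective
      (Ideal.Quotient.mk (Ideal.span ({ϖ} : Set o)))) w.1
    show Qb _ ϖ T N r w ≠ 0 ↔ w.1 ≠ 0
    rw [hQ w]
    refine not_congr ?_
    rw [← hx, ← map_mul, hκ0, hκ0]
    constructor
    · intro h
      exact (hϖprime.2.2 _ _ h).elim id id
    · intro h
      exact h.mul_right x
  rw [Nat.card_congr (Equiv.subtypeEquivRight hpoint)]
  exact card_subtype_fst_ne_zero hq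

include hf hϖ hβ hgen hσf hσσ hNr hβunit in
lemma card_case_unram (T : o) (hT1 : σ β = f T - β) (hT2 : β * β = f T * β - f (Nr β))
    (q : ℕ) (hfin : Finite (o ⧸ Ideal.span ({ϖ} : Set o)))
    (hq : Nat.card (o ⧸ Ideal.span ({ϖ} : Set o)) = q)
    (hIrr : Irreducible (f ϖ)) :
    Nat.card ({w | Qb (Ideal.Quotient.mk (Ideal.span ({ϖ} : Set o))) ϖ T (Nr β) 0 w ≠ 0} :
      Set ((o ⧸ Ideal.span ({ϖ} : Set o)) × (o ⧸ Ideal.span ({ϖ} : Set o)))) =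
      q * q - 1 := by
  classical
  set κ : o →+* o ⧸ Ideal.span ({ϖ} : Set o) := Ideal.Quotient.mk _ with hκdef
  have hκs : Function.Surjective κ := Ideal.Quotient.mk_surjective
  have hκ0 : ∀ a : o, κ a = 0 ↔ ϖ ∣ a := fun a => by
    rw [hκdef, Ideal.Quotient.eq_zero_iff_mem, Ideal.mem_span_singleton]
  have hpoint : ∀ w : (o ⧸ Ideal.span ({ϖ} : Set o)) × (o ⧸ Ideal.span ({ϖ} : Set o)),
      w ∈ ({w | Qb (Ideal.Quotient.mk (Ideal.span ({ϖ} : Set o))) ϖ T (Nr β) 0 w ≠ 0} :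
        Set _) ↔ w ≠ 0 := by
    intro w
    obtain ⟨x, hx⟩ := hκs w.1
    obtain ⟨y, hy⟩ := hκs w.2
    have hw : w = (κ x, κ y) := by rw [hx, hy]
    show Qb κ ϖ T (Nr β) 0 w ≠ 0 ↔ w ≠ 0
    refine not_congr ?_
    rw [hw, Qb_map]
    constructor
    · intro h0
      have hdvd : ϖ ∣ x * x + T * (x * (ϖ ^ 0 * y)) + Nr β * ((ϖ ^ 0 * y) * (ϖ ^ 0 * y)) :=
        (hκ0 _).mp h0
      have hform : f x + f (ϖ ^ 0 * y) * β = f x + f y * β := by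
        rw [pow_zero, one_mul]
      have hNform : Nr (f x + f y * β)
          = x * x + T * (x * (ϖ ^ 0 * y)) + Nr β * ((ϖ ^ 0 * y) * (ϖ ^ 0 * y)) := by
        rw [← hform]
        exact Nr_apply f hf β σ hσf Nr hNr T hT1 hT2 x (ϖ ^ 0 * y)
      rw [← hNform] at hdvd
      obtain ⟨hdx, hdy⟩ := unram_aniso f hf ϖ β hβ hgen σ hσf hσσ Nr hNr hβunit hIrr x y hdvd
      have hκx : κ x = 0 := (hκ0 x).mpr hdx
      have hκy : κ y = 0 := (hκ0 y).mpr hdy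
      rw [hκx, hκy]
      rfl
    · intro h0
      have h1 : κ x = 0 := congrArg Prod.fst h0
      have h2 : κ y = 0 := congrArg Prod.snd h0
      have hdx : ϖ ∣ x := (hκ0 x).mp h1
      have hdy : ϖ ∣ y := (hκ0 y).mp h2
      apply (hκ0 _).mpr
      refine dvd_add (dvd_add (hdx.mul_right x) ((hdx.mul_right (ϖ ^ 0 * y)).mul_left T)) ?_
      exact ((hdy.mul_left (ϖ ^ 0)).mul_right (ϖ ^ 0 * y)).mul_left (Nr β)
  rw [Nat.card_congr (Equiv.subtypeEquivRight hpoint)]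
  rw [card_compl_singleton
    (0 : (o ⧸ Ideal.span ({ϖ} : Set o)) × (o ⧸ Ideal.span ({ϖ} : Set o))),
    Nat.card_prod, hq]

include hf hϖ hβ hgen hσf hσσ hNr hβunit in
lemma card_case_ram (T : o) (hT1 : σ β = f T - β) (hT2 : β * β = f T * β - f (Nr β))
    (q : ℕ) (hfin : Finite (o ⧸ Ideal.span ({ϖ} : Set o)))
    (hq : Nat.card (o ⧸ Ideal.span ({ϖ} : Set o)) = q)
    (hram : ¬ Irreducible (f ϖ)) :
    Nat.card ({w | Qb (Ideal.Quotient.mk (Ideal.span ({ϖ} : Set o))) ϖ T (Nr β) 0 w ≠ 0} :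
      Set ((o ⧸ Ideal.span ({ϖ} : Set o)) × (o ⧸ Ideal.span ({ϖ} : Set o)))) =
      (q - 1) * q := by
  classical
  obtain ⟨s, hs⟩ := ram_exists_s f hf ϖ hϖ β hβ hgen σ hσf hσσ Nr hNr hβunit hram
  set κ : o →+* o ⧸ Ideal.span ({ϖ} : Set o) := Ideal.Quotient.mk _ with hκdef
  have hκs : Function.Surjective κ := Ideal.Quotient.mk_surjective
  have hκ0 : ∀ a : o, κ a = 0 ↔ ϖ ∣ a := fun a => by
    rw [hκdef, Ideal.Quotient.eq_zero_iff_mem, Ideal.mem_span_singleton]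
  -- ϖ divides the norm of β - f s
  have hβs : β - f s = f (-s) + f 1 * β := by rw [map_neg, map_one]; ring
  have hNnu : ¬ IsUnit (Nr (β - f s)) := fun h =>
    hs (isUnit_O_of_Nr f σ hσσ Nr hNr _ h)
  have h1 : ϖ ∣ s * s - T * s + Nr β := by
    have h1' : ϖ ∣ Nr (β - f s) := by
      by_contra hnd
      exact hNnu ((unit_iff_not_dvd ϖ hϖ _).mpr hnd)
    have hNval : Nr (β - f s) = -s * -s + T * (-s * 1) + Nr β * (1 * 1) := by
      rw [hβs]
      exact Nr_apply f hf β σ hσf Nr hNr T hT1 hT2 (-s) 1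
    have heq : -s * -s + T * (-s * 1) + Nr β * (1 * 1) = s * s - T * s + Nr β := by ring
    rw [hNval, heq] at h1'
    exact h1'
  -- ϖ divides T - 2s
  have hσs : ¬ IsUnit (σ (β - f s)) := by
    intro hu
    obtain ⟨v, hv⟩ := hu.exists_right_inv
    refine hs (IsUnit.of_mul_eq_one (σ v) ?_)
    have h3 := congrArg σ hv
    rw [map_mul, hσσ, map_one] at h3
    exact h3
  have hfT2s : f (T - 2 * s) = σ (β - f s) + (β - f s) := by
    simp only [map_sub, map_mul, map_ofNat, hσf, hT1]
    ring
  have hnuf : ¬ IsUnit (f (T - 2 * s)) := by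
    rw [hfT2s]
    intro hu
    have hmem1 : σ (β - f s) ∈ IsLocalRing.maximalIdeal O :=
      (IsLocalRing.mem_maximalIdeal _).mpr (mem_nonunits_iff.mpr hσs)
    have hmem2 : (β - f s) ∈ IsLocalRing.maximalIdeal O :=
      (IsLocalRing.mem_maximalIdeal _).mpr (mem_nonunits_iff.mpr hs)
    have hmem := Ideal.add_mem _ hmem1 hmem2
    exact (mem_nonunits_iff.mp ((IsLocalRing.mem_maximalIdeal _).mp hmem)) hu
  have h2 : ϖ ∣ T - 2 * s := by
    by_contra hnd
    exact hnuf (((unit_iff_not_dvd ϖ hϖ _).mpr hnd).map f)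
  have hϖprime : Prime ϖ := UniqueFactorizationMonoid.irreducible_iff_prime.mp hϖ
  -- characterization of the zero set
  have hkey : ∀ x y : o,
      ϖ ∣ x * x + T * (x * (ϖ ^ 0 * y)) + Nr β * ((ϖ ^ 0 * y) * (ϖ ^ 0 * y)) ↔
        ϖ ∣ x + s * y := by
    intro x y
    have hdecomp : x * x + T * (x * (ϖ ^ 0 * y)) + Nr β * ((ϖ ^ 0 * y) * (ϖ ^ 0 * y))
        = (x + s * y) * (x + s * y) + (T - 2 * s) * (x * y)
          + ((s * s - T * s + Nr β) + s * (T - 2 * s)) * (y * y) := by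
      rw [pow_zero]
      ring
    constructor
    · intro hdvd
      have hsq : ϖ ∣ (x + s * y) * (x + s * y) := by
        have h3 : (x + s * y) * (x + s * y)
            = (x * x + T * (x * (ϖ ^ 0 * y)) + Nr β * ((ϖ ^ 0 * y) * (ϖ ^ 0 * y)))
              - (T - 2 * s) * (x * y)
              - ((s * s - T * s + Nr β) + s * (T - 2 * s)) * (y * y) := by
          rw [hdecomp]
          ring
        rw [h3]
        refine dvd_sub (dvd_sub hdvd (h2.mul_right _)) ?_
        exact (dvd_add h1 (h2.mul_left s)).mul_right _
      exact (hϖprime.2.2 _ _ hsq).elim id id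
    · intro hdvd
      rw [hdecomp]
      refine dvd_add (dvd_add (hdvd.mul_right _) (h2.mul_right _)) ?_
      exact (dvd_add h1 (h2.mul_left s)).mul_right _
  have hpoint : ∀ w : (o ⧸ Ideal.span ({ϖ} : Set o)) × (o ⧸ Ideal.span ({ϖ} : Set o)),
      w ∈ ({w | Qb (Ideal.Quotient.mk (Ideal.span ({ϖ} : Set o))) ϖ T (Nr β) 0 w ≠ 0} :
        Set _) ↔ w.1 + κ s * w.2 ≠ 0 := by
    intro w
    obtain ⟨x, hx⟩ := hκs w.1
    obtain ⟨y, hy⟩ := hκs w.2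
    have hw : w = (κ x, κ y) := by rw [hx, hy]
    show Qb κ ϖ T (Nr β) 0 w ≠ 0 ↔ w.1 + κ s * w.2 ≠ 0
    rw [hw]
    refine not_congr ?_
    rw [Qb_map]
    show κ _ = 0 ↔ κ x + κ s * κ y = 0
    rw [show κ x + κ s * κ y = κ (x + s * y) by rw [map_add, map_mul], hκ0, hκ0]
    exact hkey x y
  rw [Nat.card_congr (Equiv.subtypeEquivRight hpoint)]
  -- shear equivalence
  have eshear : {w : (o ⧸ Ideal.span ({ϖ} : Set o)) × (o ⧸ Ideal.span ({ϖ} : Set o)) //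
      w.1 + κ s * w.2 ≠ 0} ≃
      {w : (o ⧸ Ideal.span ({ϖ} : Set o)) × (o ⧸ Ideal.span ({ϖ} : Set o)) // w.1 ≠ 0} := by
    refine ⟨fun w => ⟨(w.1.1 + κ s * w.1.2, w.1.2), w.2⟩,
      fun w => ⟨(w.1.1 - κ s * w.1.2, w.1.2), ?_⟩, fun w => ?_, fun w => ?_⟩
    · show w.1.1 - κ s * w.1.2 + κ s * w.1.2 ≠ 0
      have h3 : w.1.1 - κ s * w.1.2 + κ s * w.1.2 = w.1.1 := by ring
      rw [h3]
      exact w.2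
    · apply Subtype.ext
      show (w.1.1 + κ s * w.1.2 - κ s * w.1.2, w.1.2) = w.1
      have h3 : w.1.1 + κ s * w.1.2 - κ s * w.1.2 = w.1.1 := by ring
      rw [h3]
    · apply Subtype.ext
      show (w.1.1 - κ s * w.1.2 + κ s * w.1.2, w.1.2) = w.1
      have h3 : w.1.1 - κ s * w.1.2 + κ s * w.1.2 = w.1.1 := by ring
      rw [h3]
  rw [Nat.card_congr eshear]
  exact card_subtype_fst_ne_zero hq

end main5

end Stmt7Main
/-- For every `r ∈ ℕ` and every integer `n ≥ 1`, the index of unit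
groups satisfies `[𝒪_r^× : 𝒪_{r+n}^×] = q^n` if `r > 0` or `E/F` is ramified, and
`[𝒪_r^× : 𝒪_{r+n}^×] = q^n(1 + q^{−1}) = q^n + q^{n−1}` if `r = 0` and `E/F` is
unramified. -/
theorem stmt_7 {o O : Type*} [CommRing o] [IsDomain o] [IsDiscreteValuationRing o]
    [CommRing O] [IsDomain O] [IsDiscreteValuationRing O]
    (f : o →+* O) (hf : Function.Injective f)
    (ϖ : o) (hϖ : Irreducible ϖ)
    (q : ℕ) (hfin : Finite (o ⧸ Ideal.span ({ϖ} : Set o)))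
    (hq : Nat.card (o ⧸ Ideal.span ({ϖ} : Set o)) = q)
    (β : O) (hβ : β ∉ Set.range f)
    (hgen : ∀ z : O, ∃ x y : o, z = f x + f y * β)
    (σ : O →+* O) (hσf : ∀ x : o, σ (f x) = f x) (hσσ : ∀ z : O, σ (σ z) = z)
    (Nr : O →* o) (hNr : ∀ z : O, f (Nr z) = z * σ z)
    (hβunit : IsUnit (Nr β))
    (r n : ℕ) (hn : 1 ≤ n) :
    ((0 < r ∨ ¬ Irreducible (f ϖ)) → unitIndex f ϖ β r n = q ^ n) ∧
    ((r = 0 ∧ Irreducible (f ϖ)) → unitIndex f ϖ β r n = q ^ n + q ^ (n - 1)) := by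
  classical
  obtain ⟨T, hT1, hT2⟩ := Stmt7Main.exists_T f hf β hβ hgen σ hσf hσσ Nr hNr hβunit
  obtain ⟨n', rfl⟩ : ∃ n', n = n' + 1 := ⟨n - 1, by omega⟩
  have hmc := Stmt7Main.main_count f hf ϖ hϖ β hβ hgen σ hσf hσσ Nr hNr hβunit
    T hT1 hT2 q hfin hq r n'
  have hq2 : 2 ≤ q := by
    haveI : (Ideal.span ({ϖ} : Set o)).IsMaximal := by
      rw [← hϖ.maximalIdeal_eq]
      exact IsLocalRing.maximalIdeal.isMaximal o
    haveI := Ideal.Quotient.field (Ideal.span ({ϖ} : Set o))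
    haveI := hfin
    have h1 : 1 < Nat.card (o ⧸ Ideal.span ({ϖ} : Set o)) :=
      Finite.one_lt_card
    omega
  have hc0 : 0 < (q - 1) * q ^ n' :=
    Nat.mul_pos (by omega) (Nat.pow_pos (n := n') (by omega))
  constructor
  · intro hcase
    have hSbar : Nat.card
        ({w | Qb (Ideal.Quotient.mk (Ideal.span ({ϖ} : Set o))) ϖ T (Nr β) r w ≠ 0} :
          Set ((o ⧸ Ideal.span ({ϖ} : Set o)) × (o ⧸ Ideal.span ({ϖ} : Set o)))) =
        (q - 1) * q := by
      rcases Nat.eq_zero_or_pos r with hr0 | hrpos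
      · have hram : ¬ Irreducible (f ϖ) := by
          rcases hcase with h | h
          · omega
          · exact h
        subst hr0
        exact Stmt7Main.card_case_ram f hf ϖ hϖ β hβ hgen σ hσf hσσ Nr hNr hβunit
          T hT1 hT2 q hfin hq hram
      · exact Stmt7Main.card_case_pos ϖ hϖ T (Nr β) q hfin hq r hrpos
    rw [hSbar] at hmc
    have hrhs : (q - 1) * q * (q ^ n' * q ^ n') = q ^ (n' + 1) * ((q - 1) * q ^ n') := by
      rw [pow_succ]
      ring
    rw [hrhs] at hmc
    exact Nat.eq_of_mul_eq_mul_right hc0 hmc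
  · rintro ⟨hr0, hIrr⟩
    subst hr0
    have hSbar := Stmt7Main.card_case_unram f hf ϖ hϖ β hβ hgen σ hσf hσσ Nr hNr hβunit
      T hT1 hT2 q hfin hq hIrr
    rw [hSbar] at hmc
    have hfact : q * q - 1 = (q + 1) * (q - 1) := by
      obtain ⟨q', rfl⟩ : ∃ q', q = q' + 1 := ⟨q - 1, by omega⟩
      simp only [Nat.add_sub_cancel]
      have h3 : (q' + 1) * (q' + 1) = (q' + 1 + 1) * q' + 1 := by ring
      omega
    have hrhs' : (q * q - 1) * (q ^ n' * q ^ n')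
        = (q ^ (n' + 1) + q ^ n') * ((q - 1) * q ^ n') := by
      rw [hfact, pow_succ]
      ring
    rw [hrhs'] at hmc
    have hfin2 := Nat.eq_of_mul_eq_mul_right hc0 hmc
    rw [Nat.add_sub_cancel]
    exact hfin2
end

section
/- Let E/F be a quadratic field extension. Then GL₂(F) is the disjoint union over r ∈ ℕ of the sets GL₂(𝔬)·a(ϖ^r)·ι₀(E^×), i.e. GL₂(F) = ⨆_{r=0}^{∞} GL₂(𝔬) a(ϖ^r) ι₀(E^×); equivalently (applying inversion) GL₂(F) = ⨆_{r=0}^{∞} ι₀(E^×) a(ϖ^r) GL₂(𝔬). -/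
/-! `F` is a nonarchimedean local field, modelled by a field `F` together with its
valuation ring `o` (a `ValuationSubring` which is a DVR) and a uniformizer `ϖ ∈ o`;
`a(y) = diag(y,1)`.  `E/F` is a quadratic field extension, with ring of integers the
valuation subring `O` compatible with `o`; `β ∈ 𝒪 ∖ 𝔬` is chosen with `𝒪 = 𝔬 + β𝔬`,
`𝐚 := Nr_{E/F}(β) ∈ 𝔬^×` and `𝐛 := Tr_{E/F}(β)` (so `β² − 𝐛β + 𝐚 = 0`).
`ι₀ : E → M₂(F)` is the F-algebra embedding determined by `x·(β,1) = (β,1)·ι₀(x)`. -/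

/-- `a(y) = diag(y, 1)`. -/
def aM {F : Type*} [Field F] (y : F) : Matrix (Fin 2) (Fin 2) F := !![y, 0; 0, 1]

/-- `GL₂(𝔬)`: matrices with entries in `𝔬` whose inverse also has entries in `𝔬`. -/
def GLo {F : Type*} [Field F] (o : ValuationSubring F) :
    Set (Matrix (Fin 2) (Fin 2) F) :=
  {g | (∀ i j, g i j ∈ o) ∧
    ∃ h : Matrix (Fin 2) (Fin 2) F, (∀ i j, h i j ∈ o) ∧ g * h = 1 ∧ h * g = 1}

section Aux
open Matrix
variable {F E : Type*} [Field F] [Field E] [Algebra F E]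

theorem GLo_mul {o : ValuationSubring F} {k k' : Matrix (Fin 2) (Fin 2) F}
    (hk : k ∈ GLo o) (hk' : k' ∈ GLo o) : k * k' ∈ GLo o := by
  obtain ⟨hkm, h, hhm, hkh, hhk⟩ := hk
  obtain ⟨hkm', h', hhm', hkh', hhk'⟩ := hk'
  refine ⟨?_, h' * h, ?_, ?_, ?_⟩
  · intro i j
    rw [Matrix.mul_apply, Fin.sum_univ_two]
    exact o.add_mem _ _ (o.mul_mem _ _ (hkm i 0) (hkm' 0 j)) (o.mul_mem _ _ (hkm i 1) (hkm' 1 j))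
  · intro i j
    rw [Matrix.mul_apply, Fin.sum_univ_two]
    exact o.add_mem _ _ (o.mul_mem _ _ (hhm' i 0) (hhm 0 j)) (o.mul_mem _ _ (hhm' i 1) (hhm 1 j))
  · calc k * k' * (h' * h) = k * (k' * h') * h := by noncomm_ring
    _ = 1 := by rw [hkh', mul_one, hkh]
  · calc h' * h * (k * k') = h' * (h * k) * k' := by noncomm_ring
    _ = 1 := by rw [hhk, mul_one, hhk']

theorem GLo_transpose {o : ValuationSubring F} {k : Matrix (Fin 2) (Fin 2) F}
    (hk : k ∈ GLo o) : kᵀ ∈ GLo o := by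
  obtain ⟨hkm, h, hhm, hkh, hhk⟩ := hk
  refine ⟨fun i j => hkm j i, hᵀ, fun i j => hhm j i, ?_, ?_⟩
  · rw [← Matrix.transpose_mul, hhk, Matrix.transpose_one]
  · rw [← Matrix.transpose_mul, hkh, Matrix.transpose_one]

theorem GLo_mulVec_mem {o : ValuationSubring F} {k : Matrix (Fin 2) (Fin 2) F}
    (hk : ∀ i j, k i j ∈ o) {w : Fin 2 → F} (hw0 : w 0 ∈ o) (hw1 : w 1 ∈ o) (i : Fin 2) :
    k.mulVec w i ∈ o := by
  rw [Matrix.mulVec, dotProduct, Fin.sum_univ_two]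
  exact o.add_mem _ _ (o.mul_mem _ _ (hk i 0) hw0) (o.mul_mem _ _ (hk i 1) hw1)

/-- `φ(w) = β w₀ + w₁`. -/
def phiE (β : E) (w : Fin 2 → F) : E := β * algebraMap F E (w 0) + algebraMap F E (w 1)

theorem indepE {β : E} (hβ : ∀ x : F, β ≠ algebraMap F E x) {u v : F}
    (h : β * algebraMap F E u + algebraMap F E v = 0) : u = 0 ∧ v = 0 := by
  by_cases hu : u = 0
  · refine ⟨hu, ?_⟩
    have h2 : algebraMap F E v = 0 := by rw [hu] at h; simpa using h
    have := (algebraMap F E).injective (a₁ := v) (a₂ := 0) (by simpa using h2)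
    simpa using this
  · exfalso
    apply hβ (-(v * u⁻¹))
    have hu' : algebraMap F E u ≠ 0 := fun h0 => hu ((algebraMap F E).injective (a₁ := u) (a₂ := 0) (by simpa using h0))
    rw [map_neg, _root_.map_mul, map_inv₀]
    field_simp
    linear_combination h

theorem phiE_inj {β : E} (hβ : ∀ x : F, β ≠ algebraMap F E x) {w w' : Fin 2 → F}
    (h : phiE β w = phiE β w') : w = w' := by
  have h0 : β * algebraMap F E (w 0 - w' 0) + algebraMap F E (w 1 - w' 1) = 0 := by
    rw [map_sub, map_sub]; unfold phiE at h; ring_nf; linear_combination h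
  obtain ⟨h1, h2⟩ := indepE hβ h0
  funext i
  fin_cases i
  · simpa [sub_eq_zero] using h1
  · simpa [sub_eq_zero] using h2

theorem phiE_eq_zero {β : E} (hβ : ∀ x : F, β ≠ algebraMap F E x) {w : Fin 2 → F}
    (h : phiE β w = 0) : w = 0 := by
  have h0 : β * algebraMap F E (w 0) + algebraMap F E (w 1) = 0 := h
  obtain ⟨h1, h2⟩ := indepE hβ h0
  funext i
  fin_cases i <;> simp [h1, h2]

theorem phiE_iota {β : E} (ι₀ : E →+* Matrix (Fin 2) (Fin 2) F)
    (hι₀ : ∀ x : E, ∀ j : Fin 2,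
      x * (![β, 1] j) = ∑ i : Fin 2, (![β, 1] i) * algebraMap F E (ι₀ x i j))
    (x : E) (w : Fin 2 → F) : phiE β ((ι₀ x).mulVec w) = x * phiE β w := by
  have h0 := hι₀ x 0
  have h1 := hι₀ x 1
  simp only [Matrix.cons_val_zero, Matrix.cons_val_one, Matrix.head_cons,
    Fin.sum_univ_two, one_mul, mul_one] at h0 h1
  simp only [phiE, Matrix.mulVec, dotProduct, Fin.sum_univ_two, map_add, _root_.map_mul]
  linear_combination (-(algebraMap F E (w 0))) * h0 + (-(algebraMap F E (w 1))) * h1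

theorem phiE_aM {β : E} (y : F) (w : Fin 2 → F) :
    phiE β ((aM y).mulVec w) = β * algebraMap F E (y * w 0) + algebraMap F E (w 1) := by
  simp [phiE, aM, Matrix.mulVec, dotProduct, Fin.sum_univ_two]

/-- The lattice of a matrix: image of `o²` columns under `φ ∘ g`. -/
def LsetD (o : ValuationSubring F) (β : E) (g : Matrix (Fin 2) (Fin 2) F) : Set E :=
  {x | ∃ w : Fin 2 → F, w 0 ∈ o ∧ w 1 ∈ o ∧ x = phiE β (g.mulVec w)}

theorem LsetD_mul_GLo {o : ValuationSubring F} {β : E} {m k : Matrix (Fin 2) (Fin 2) F}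
    (hk : k ∈ GLo o) : LsetD o β (m * k) = LsetD o β m := by
  obtain ⟨hkm, h, hhm, hkh, hhk⟩ := hk
  ext x
  constructor
  · rintro ⟨w, hw0, hw1, rfl⟩
    exact ⟨k.mulVec w, GLo_mulVec_mem hkm hw0 hw1 0, GLo_mulVec_mem hkm hw0 hw1 1,
      by rw [Matrix.mulVec_mulVec]⟩
  · rintro ⟨w, hw0, hw1, rfl⟩
    refine ⟨h.mulVec w, GLo_mulVec_mem hhm hw0 hw1 0, GLo_mulVec_mem hhm hw0 hw1 1, ?_⟩
    rw [Matrix.mulVec_mulVec, Matrix.mul_assoc, hkh, Matrix.mul_one]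

theorem LsetD_iota_mul {o : ValuationSubring F} {β : E} (ι₀ : E →+* Matrix (Fin 2) (Fin 2) F)
    (hι₀ : ∀ x : E, ∀ j : Fin 2,
      x * (![β, 1] j) = ∑ i : Fin 2, (![β, 1] i) * algebraMap F E (ι₀ x i j))
    (t : E) (m : Matrix (Fin 2) (Fin 2) F) :
    LsetD o β (ι₀ t * m) = (t * ·) '' LsetD o β m := by
  ext x
  constructor
  · rintro ⟨w, hw0, hw1, rfl⟩
    exact ⟨phiE β (m.mulVec w), ⟨w, hw0, hw1, rfl⟩,
      by rw [← Matrix.mulVec_mulVec, phiE_iota ι₀ hι₀]⟩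
  · rintro ⟨y, ⟨w, hw0, hw1, rfl⟩, rfl⟩
    exact ⟨w, hw0, hw1, by rw [← Matrix.mulVec_mulVec, phiE_iota ι₀ hι₀]⟩



-- ring closure of T r = LsetD o β (aM (ϖ^r))
theorem T_mul_mem {o : ValuationSubring F} {β : E} {a b ϖ : F}
    (hao : a ∈ o) (hbo : b ∈ o) (hϖo : ϖ ∈ o)
    (hmin : β ^ 2 - algebraMap F E b * β + algebraMap F E a = 0)
    (r : ℕ) {x y : E}
    (hx : x ∈ LsetD o β (aM (ϖ ^ r))) (hy : y ∈ LsetD o β (aM (ϖ ^ r))) :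
    x * y ∈ LsetD o β (aM (ϖ ^ r)) := by
  obtain ⟨w, hw0, hw1, rfl⟩ := hx
  obtain ⟨w', hw0', hw1', rfl⟩ := hy
  have hϖr : ϖ ^ r ∈ o := pow_mem hϖo r
  refine ⟨![b * ϖ ^ r * w 0 * w' 0 + w 0 * w' 1 + w 1 * w' 0,
      w 1 * w' 1 - a * (ϖ ^ r * w 0) * (ϖ ^ r * w' 0)], ?_, ?_, ?_⟩
  · simp only [Matrix.cons_val_zero]
    exact add_mem (add_mem
      (mul_mem (mul_mem (mul_mem hbo hϖr) hw0) hw0')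
      (mul_mem hw0 hw1')) (mul_mem hw1 hw0')
  · simp only [Matrix.cons_val_one, Matrix.head_cons]
    exact sub_mem (mul_mem hw1 hw1')
      (mul_mem (mul_mem hao (mul_mem hϖr hw0)) (mul_mem hϖr hw0'))
  · rw [phiE_aM, phiE_aM, phiE_aM]
    simp only [Matrix.cons_val_zero, Matrix.cons_val_one, Matrix.head_cons,
      map_add, _root_.map_mul, map_sub]
    linear_combination (algebraMap F E (ϖ ^ r) * algebraMap F E (w 0) * algebraMap F E (ϖ ^ r) * algebraMap F E (w' 0)) * hmin

theorem T_one_mem {o : ValuationSubring F} {β : E} {ϖ : F} (r : ℕ) :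
    (1 : E) ∈ LsetD o β (aM (ϖ ^ r)) := by
  refine ⟨![0, 1], by simpa using zero_mem o, by simpa using one_mem o, ?_⟩
  rw [phiE_aM]
  simp

-- if ϖ^r = ϖ^s * c with c ∈ o then s ≤ r
theorem pow_le_of_mul {o : ValuationSubring F} {ϖ : F} (hϖo : ϖ ∈ o)
    (hϖ : Irreducible (⟨ϖ, hϖo⟩ : o)) {r s : ℕ} {c : F} (hc : c ∈ o)
    (h : ϖ ^ r = ϖ ^ s * c) : s ≤ r := by
  by_contra hlt
  push_neg at hlt
  have hϖne : ϖ ≠ 0 := by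
    intro h0
    exact hϖ.ne_zero (by ext; simp [h0])
  have hpow : ϖ ^ s = ϖ ^ r * ϖ * ϖ ^ (s - r - 1) := by
    rw [← pow_succ, ← pow_add]
    congr 1
    omega
  have h2 : (1 : F) = ϖ * (ϖ ^ (s - r - 1) * c) := by
    have h3 : ϖ ^ r * 1 = ϖ ^ r * (ϖ * (ϖ ^ (s - r - 1) * c)) := by
      rw [mul_one]; linear_combination h + c * hpow
    exact mul_left_cancel₀ (pow_ne_zero r hϖne) h3
  exact hϖ.not_isUnit (IsUnit.of_mul_eq_one ⟨ϖ ^ (s - r - 1) * c,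
    mul_mem (pow_mem hϖo _) hc⟩ (by ext; exact h2.symm))



theorem T_subset {o : ValuationSubring F} {β : E} {a b ϖ : F}
    (hao : a ∈ o) (hbo : b ∈ o) (hϖo : ϖ ∈ o)
    (hmin : β ^ 2 - algebraMap F E b * β + algebraMap F E a = 0)
    {t t' : E} (ht' : t' ≠ 0) {r s : ℕ}
    (h : (t * ·) '' LsetD o β (aM (ϖ ^ r)) = (t' * ·) '' LsetD o β (aM (ϖ ^ s))) :
    LsetD o β (aM (ϖ ^ r)) ⊆ LsetD o β (aM (ϖ ^ s)) := by
  intro x hx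
  have hxy : ∀ y ∈ LsetD o β (aM (ϖ ^ s)), x * y ∈ LsetD o β (aM (ϖ ^ s)) := by
    intro y hy
    have h1 : t' * y ∈ (t' * ·) '' LsetD o β (aM (ϖ ^ s)) := ⟨y, hy, rfl⟩
    rw [← h] at h1
    obtain ⟨z, hz, hzt⟩ := h1
    have h2 : x * z ∈ LsetD o β (aM (ϖ ^ r)) := T_mul_mem hao hbo hϖo hmin r hx hz
    have h3 : t * (x * z) ∈ (t' * ·) '' LsetD o β (aM (ϖ ^ s)) := by
      rw [← h]; exact ⟨x * z, h2, rfl⟩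
    obtain ⟨y', hy', h4⟩ := h3
    have h4' : t' * y' = t * (x * z) := h4
    have hzt' : t * z = t' * y := hzt
    have h5 : t' * y' = t' * (x * y) := by linear_combination h4' + x * hzt'
    have h6 := mul_left_cancel₀ ht' h5
    rwa [← h6]
  simpa using hxy 1 (T_one_mem s)

theorem T_r_eq {o : ValuationSubring F} {β : E} {a b ϖ : F}
    (hao : a ∈ o) (hbo : b ∈ o) (hϖo : ϖ ∈ o)
    (hϖ : Irreducible (⟨ϖ, hϖo⟩ : o))
    (hβ : ∀ x : F, β ≠ algebraMap F E x)
    (hmin : β ^ 2 - algebraMap F E b * β + algebraMap F E a = 0)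
    {t t' : E} (ht : t ≠ 0) (ht' : t' ≠ 0) {r s : ℕ}
    (h : (t * ·) '' LsetD o β (aM (ϖ ^ r)) = (t' * ·) '' LsetD o β (aM (ϖ ^ s))) :
    r = s := by
  have hTrs : LsetD o β (aM (ϖ ^ r)) = LsetD o β (aM (ϖ ^ s)) :=
    Set.Subset.antisymm (T_subset hao hbo hϖo hmin ht' h) (T_subset hao hbo hϖo hmin ht h.symm)
  have key : ∀ r' s' : ℕ, LsetD o β (aM (ϖ ^ r')) ⊆ LsetD o β (aM (ϖ ^ s')) → s' ≤ r' := by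
    intro r' s' hsub
    have hmem : (β * algebraMap F E (ϖ ^ r')) ∈ LsetD o β (aM (ϖ ^ r')) := by
      refine ⟨![1, 0], by simpa using one_mem o, by simpa using zero_mem o, ?_⟩
      rw [phiE_aM]; simp
    obtain ⟨w, hw0, hw1, heq⟩ := hsub hmem
    rw [phiE_aM] at heq
    have h0 : β * algebraMap F E (ϖ ^ r' - ϖ ^ s' * w 0) + algebraMap F E (-(w 1)) = 0 := by
      rw [map_sub, map_neg]
      linear_combination heq
    obtain ⟨h1, _⟩ := indepE hβ h0
    exact pow_le_of_mul hϖo hϖ hw0 (by linear_combination h1)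
  exact le_antisymm (key s r (hTrs ▸ subset_rfl)) (key r s (hTrs ▸ subset_rfl))

theorem iota_entries {β : E} (hβ : ∀ x : F, β ≠ algebraMap F E x)
    {a b : F} (hmin : β ^ 2 - algebraMap F E b * β + algebraMap F E a = 0)
    (ι₀ : E →+* Matrix (Fin 2) (Fin 2) F)
    (hι₀ : ∀ x : E, ∀ j : Fin 2,
      x * (![β, 1] j) = ∑ i : Fin 2, (![β, 1] i) * algebraMap F E (ι₀ x i j))
    (s t : F) :
    ι₀ (algebraMap F E s + algebraMap F E t * β) = !![s + t * b, t; -(t * a), s] := by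
  have h0 := hι₀ (algebraMap F E s + algebraMap F E t * β) 0
  have h1 := hι₀ (algebraMap F E s + algebraMap F E t * β) 1
  set M := ι₀ (algebraMap F E s + algebraMap F E t * β) with hM
  simp only [Matrix.cons_val_zero, Matrix.cons_val_one, Matrix.head_cons,
    Fin.sum_univ_two, one_mul, mul_one] at h0 h1
  have e0 : β * algebraMap F E (M 0 0 - (s + t * b))
      + algebraMap F E (M 1 0 + t * a) = 0 := by
    simp only [map_sub, map_add, _root_.map_mul]
    linear_combination (-1 : E) * h0 + algebraMap F E t * hmin
  have e1 : β * algebraMap F E (M 0 1 - t)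
      + algebraMap F E (M 1 1 - s) = 0 := by
    rw [map_sub, map_sub]
    linear_combination (-1 : E) * h1
  obtain ⟨d00, d10⟩ := indepE hβ e0
  obtain ⟨d01, d11⟩ := indepE hβ e1
  rw [sub_eq_zero] at d00 d01 d11
  have d10' : M 1 0 = -(t * a) := by
    linear_combination d10
  ext i j
  fin_cases i <;> fin_cases j <;> simp [d00, d01, d10', d11]

theorem iota_transpose {β : E} (hβ : ∀ x : F, β ≠ algebraMap F E x)
    {a b : F} (hmin : β ^ 2 - algebraMap F E b * β + algebraMap F E a = 0)
    (hquad : ∀ z : E, ∃ s t : F, z = algebraMap F E s + algebraMap F E t * β)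
    (ι₀ : E →+* Matrix (Fin 2) (Fin 2) F)
    (hι₀ : ∀ x : E, ∀ j : Fin 2,
      x * (![β, 1] j) = ∑ i : Fin 2, (![β, 1] i) * algebraMap F E (ι₀ x i j))
    (x : E) :
    (ι₀ x)ᵀ * !![-a, 0; 0, 1] = !![-a, 0; 0, 1] * ι₀ x := by
  obtain ⟨s, t, rfl⟩ := hquad x
  rw [iota_entries hβ hmin ι₀ hι₀]
  ext i j
  fin_cases i <;> fin_cases j <;>
    simp [Matrix.mul_apply, Fin.sum_univ_two, Matrix.transpose_apply, Matrix.vecHead,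
      Matrix.vecTail, Matrix.cons_val_zero, Matrix.cons_val_one] <;> ring_nf

theorem form2_exists_aux {o : ValuationSubring F} [IsDiscreteValuationRing o]
    {O : ValuationSubring E} {β : E}
    (hβ : ∀ x : F, β ≠ algebraMap F E x)
    (hOgen : ∀ z ∈ O, ∃ x y : F, x ∈ o ∧ y ∈ o ∧
      z = algebraMap F E x + algebraMap F E y * β)
    {ϖ : F} (hϖo : ϖ ∈ o) (hϖ : Irreducible (⟨ϖ, hϖo⟩ : o))
    (ι₀ : E →+* Matrix (Fin 2) (Fin 2) F)
    (hι₀ : ∀ x : E, ∀ j : Fin 2,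
      x * (![β, 1] j) = ∑ i : Fin 2, (![β, 1] i) * algebraMap F E (ι₀ x i j))
    (g : Matrix (Fin 2) (Fin 2) F) (hg : IsUnit g)
    (hO : phiE β (g.mulVec ![0, 1]) * (phiE β (g.mulVec ![1, 0]))⁻¹ ∈ O) :
    ∃ r : ℕ, ∃ t : E, t ≠ 0 ∧ ∃ k ∈ GLo o, g = ι₀ t * aM (ϖ ^ r) * k := by
  obtain ⟨gi, hggi, hgig⟩ : ∃ gi : Matrix (Fin 2) (Fin 2) F, g * gi = 1 ∧ gi * g = 1 := by
    obtain ⟨gu, hgu⟩ := hg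
    exact ⟨↑gu⁻¹, by rw [← hgu]; exact gu.mul_inv, by rw [← hgu]; exact gu.inv_mul⟩
  have hker : ∀ w : Fin 2 → F, g.mulVec w = 0 → w = 0 := by
    intro w hw
    have h2 : gi.mulVec (g.mulVec w) = w := by
      rw [Matrix.mulVec_mulVec, hgig, Matrix.one_mulVec]
    rw [hw, Matrix.mulVec_zero] at h2
    exact h2.symm
  have hx0 : phiE β (g.mulVec ![1, 0]) ≠ 0 := by
    intro h0
    have h1 := hker _ (phiE_eq_zero hβ h0)
    have h2 := congrFun h1 0
    simp at h2
  obtain ⟨sc, tc, hsc, htc, hy⟩ := hOgen _ hO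
  have hx1 : phiE β (g.mulVec ![0, 1])
      = (algebraMap F E sc + algebraMap F E tc * β) * phiE β (g.mulVec ![1, 0]) := by
    rw [← hy]
    field_simp
  have htc0 : tc ≠ 0 := by
    intro h0
    have hx1' : phiE β (g.mulVec ![0, 1]) = algebraMap F E sc * phiE β (g.mulVec ![1, 0]) := by
      rw [hx1, h0]; simp
    have hphi : phiE β (g.mulVec ![-sc, 1])
        = phiE β (g.mulVec ![0, 1]) - algebraMap F E sc * phiE β (g.mulVec ![1, 0]) := by
      simp only [phiE, Matrix.mulVec, dotProduct, Fin.sum_univ_two,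
        Matrix.cons_val_zero, Matrix.cons_val_one, Matrix.head_cons, map_add,
        _root_.map_mul, map_neg, _root_.map_one, map_zero]
      ring
    rw [hx1'] at hphi
    simp only [sub_self] at hphi
    have h1 := hker _ (phiE_eq_zero hβ hphi)
    have h2 := congrFun h1 1
    simp at h2
  obtain ⟨m, u, hmu⟩ := IsDiscreteValuationRing.eq_unit_mul_pow_irreducible
    (show (⟨tc, htc⟩ : o) ≠ 0 by simp [Subtype.ext_iff, htc0]) hϖ
  have hmuF : tc = ((u : o) : F) * ϖ ^ m := by
    have := congrArg (Subtype.val : o → F) hmu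
    push_cast at this
    simpa using this
  have hu1 : ((u : o) : F) * (((u⁻¹ : oˣ) : o) : F) = 1 := by
    have h2 := congrArg (Subtype.val : o → F) u.mul_inv
    push_cast at h2
    simpa using h2
  refine ⟨m, phiE β (g.mulVec ![1, 0]), hx0,
    !![0, ((u : o) : F); 1, sc], ⟨?_, !![-(sc * (((u⁻¹ : oˣ) : o) : F)), 1; (((u⁻¹ : oˣ) : o) : F), 0], ?_, ?_, ?_⟩, ?_⟩
  · intro i j
    fin_cases i <;> fin_cases j <;>
      simp only [Matrix.cons_val_zero, Matrix.cons_val_one, Matrix.head_cons,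
        Matrix.cons_val', Matrix.empty_val', Matrix.cons_val_fin_one]
    exacts [zero_mem o, (u : o).2, one_mem o, hsc]
  · intro i j
    fin_cases i <;> fin_cases j <;>
      simp only [Matrix.cons_val_zero, Matrix.cons_val_one, Matrix.head_cons,
        Matrix.cons_val', Matrix.empty_val', Matrix.cons_val_fin_one]
    exacts [neg_mem (mul_mem hsc ((u⁻¹ : oˣ) : o).2), one_mem o, ((u⁻¹ : oˣ) : o).2, zero_mem o]
  · ext i j
    fin_cases i <;> fin_cases j <;>
      simp [Matrix.mul_apply, Fin.sum_univ_two] <;>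
      first
        | linear_combination hu1
        | ring
  · ext i j
    fin_cases i <;> fin_cases j <;>
      simp [Matrix.mul_apply, Fin.sum_univ_two] <;>
      first
        | linear_combination hu1
        | linear_combination (-sc) * hu1
        | linear_combination sc * hu1
        | ring
  · have hk0 : (!![0, ((u : o) : F); 1, sc]).mulVec ![1, 0] = ![0, 1] := by
      funext i
      fin_cases i <;> simp [Matrix.mulVec, dotProduct, Fin.sum_univ_two]
    have hk1 : (!![0, ((u : o) : F); 1, sc]).mulVec ![0, 1] = ![((u : o) : F), sc] := by
      funext i
      fin_cases i <;> simp [Matrix.mulVec, dotProduct, Fin.sum_univ_two]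
    have col0 : (ι₀ (phiE β (g.mulVec ![1, 0])) * aM (ϖ ^ m)
        * !![0, ((u : o) : F); 1, sc]).mulVec ![1, 0] = g.mulVec ![1, 0] := by
      apply phiE_inj hβ
      rw [← Matrix.mulVec_mulVec, ← Matrix.mulVec_mulVec, hk0, phiE_iota ι₀ hι₀, phiE_aM]
      simp
    have col1 : (ι₀ (phiE β (g.mulVec ![1, 0])) * aM (ϖ ^ m)
        * !![0, ((u : o) : F); 1, sc]).mulVec ![0, 1] = g.mulVec ![0, 1] := by
      apply phiE_inj hβ
      rw [← Matrix.mulVec_mulVec, ← Matrix.mulVec_mulVec, hk1, phiE_iota ι₀ hι₀, phiE_aM]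
      rw [hx1]
      simp only [Matrix.cons_val_zero, Matrix.cons_val_one, Matrix.head_cons, _root_.map_mul]
      have htca : algebraMap F E tc = algebraMap F E (ϖ ^ m) * algebraMap F E ((u : o) : F) := by
        rw [← _root_.map_mul, hmuF]; ring_nf
      rw [htca]
      ring
    ext i j
    fin_cases j
    · have h2 := congrFun col0 i
      simpa [Matrix.mulVec, dotProduct, Fin.sum_univ_two] using h2.symm
    · have h2 := congrFun col1 i
      simpa [Matrix.mulVec, dotProduct, Fin.sum_univ_two] using h2.symm

theorem form2_exists {o : ValuationSubring F} [IsDiscreteValuationRing o]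
    {O : ValuationSubring E} {β : E}
    (hβ : ∀ x : F, β ≠ algebraMap F E x)
    (hOgen : ∀ z ∈ O, ∃ x y : F, x ∈ o ∧ y ∈ o ∧
      z = algebraMap F E x + algebraMap F E y * β)
    {ϖ : F} (hϖo : ϖ ∈ o) (hϖ : Irreducible (⟨ϖ, hϖo⟩ : o))
    (ι₀ : E →+* Matrix (Fin 2) (Fin 2) F)
    (hι₀ : ∀ x : E, ∀ j : Fin 2,
      x * (![β, 1] j) = ∑ i : Fin 2, (![β, 1] i) * algebraMap F E (ι₀ x i j))
    (g : Matrix (Fin 2) (Fin 2) F) (hg : IsUnit g) :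
    ∃ r : ℕ, ∃ t : E, t ≠ 0 ∧ ∃ k ∈ GLo o, g = ι₀ t * aM (ϖ ^ r) * k := by
  rcases O.mem_or_inv_mem (phiE β (g.mulVec ![0, 1]) * (phiE β (g.mulVec ![1, 0]))⁻¹) with h | h
  · exact form2_exists_aux hβ hOgen hϖo hϖ ι₀ hι₀ g hg h
  · have hPP : (!![0, 1; 1, 0] : Matrix (Fin 2) (Fin 2) F) * !![0, 1; 1, 0] = 1 := by
      ext i j
      fin_cases i <;> fin_cases j <;> simp [Matrix.mul_apply, Fin.sum_univ_two]
    have hgP : IsUnit (g * !![0, 1; 1, 0]) := by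
      obtain ⟨gu, hgu⟩ := hg
      refine isUnit_iff_exists.mpr
        ⟨(!![0, 1; 1, 0] : Matrix (Fin 2) (Fin 2) F) * (↑gu⁻¹ : Matrix (Fin 2) (Fin 2) F), ?_, ?_⟩
      · calc g * !![0, 1; 1, 0] * ((!![0, 1; 1, 0] : Matrix (Fin 2) (Fin 2) F) * (↑gu⁻¹ : Matrix (Fin 2) (Fin 2) F))
            = g * ((!![0, 1; 1, 0] : Matrix (Fin 2) (Fin 2) F) * !![0, 1; 1, 0]) * (↑gu⁻¹ : Matrix (Fin 2) (Fin 2) F) := by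
              simp only [Matrix.mul_assoc]
          _ = 1 := by rw [hPP, Matrix.mul_one, ← hgu]; exact gu.mul_inv
      · calc (!![0, 1; 1, 0] : Matrix (Fin 2) (Fin 2) F) * (↑gu⁻¹ : Matrix (Fin 2) (Fin 2) F) * (g * !![0, 1; 1, 0])
            = !![0, 1; 1, 0] * ((↑gu⁻¹ : Matrix (Fin 2) (Fin 2) F) * g) * !![0, 1; 1, 0] := by
              simp only [Matrix.mul_assoc]
          _ = 1 := by
              rw [show (↑gu⁻¹ : Matrix (Fin 2) (Fin 2) F) * g = 1 by rw [← hgu]; exact gu.inv_mul,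
                Matrix.mul_one, hPP]
    have hcol0 : (g * !![0, 1; 1, 0]).mulVec ![1, 0] = g.mulVec ![0, 1] := by
      rw [← Matrix.mulVec_mulVec]
      congr 1
      funext i
      fin_cases i <;> simp [Matrix.mulVec, dotProduct, Fin.sum_univ_two]
    have hcol1 : (g * !![0, 1; 1, 0]).mulVec ![0, 1] = g.mulVec ![1, 0] := by
      rw [← Matrix.mulVec_mulVec]
      congr 1
      funext i
      fin_cases i <;> simp [Matrix.mulVec, dotProduct, Fin.sum_univ_two]
    have hO2 : phiE β ((g * !![0, 1; 1, 0]).mulVec ![0, 1])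
        * (phiE β ((g * !![0, 1; 1, 0]).mulVec ![1, 0]))⁻¹ ∈ O := by
      rw [hcol0, hcol1]
      have : (phiE β (g.mulVec ![0, 1]) * (phiE β (g.mulVec ![1, 0]))⁻¹)⁻¹
          = phiE β (g.mulVec ![1, 0]) * (phiE β (g.mulVec ![0, 1]))⁻¹ := by
        rw [mul_inv, inv_inv, mul_comm]
      rwa [this] at h
    obtain ⟨r, t, ht, k, hk, heq⟩ :=
      form2_exists_aux hβ hOgen hϖo hϖ ι₀ hι₀ (g * !![0, 1; 1, 0]) hgP hO2
    refine ⟨r, t, ht, k * !![0, 1; 1, 0], ?_, ?_⟩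
    · refine GLo_mul hk ⟨?_, !![0, 1; 1, 0], ?_, hPP, hPP⟩
      · intro i j
        fin_cases i <;> fin_cases j <;>
          simp only [Matrix.cons_val_zero, Matrix.cons_val_one, Matrix.head_cons,
            Matrix.cons_val', Matrix.empty_val', Matrix.cons_val_fin_one]
        exacts [zero_mem o, one_mem o, one_mem o, zero_mem o]
      · intro i j
        fin_cases i <;> fin_cases j <;>
          simp only [Matrix.cons_val_zero, Matrix.cons_val_one, Matrix.head_cons,
            Matrix.cons_val', Matrix.empty_val', Matrix.cons_val_fin_one]
        exacts [zero_mem o, one_mem o, one_mem o, zero_mem o]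
    · calc g = g * (!![0, 1; 1, 0] * !![0, 1; 1, 0]) := by rw [hPP, Matrix.mul_one]
        _ = (g * !![0, 1; 1, 0]) * !![0, 1; 1, 0] := by simp only [Matrix.mul_assoc]
        _ = ι₀ t * aM (ϖ ^ r) * k * !![0, 1; 1, 0] := by rw [heq]
        _ = ι₀ t * aM (ϖ ^ r) * (k * !![0, 1; 1, 0]) := by simp only [Matrix.mul_assoc]

theorem form2_unique {o : ValuationSubring F} {β : E} {a b : F}
    (hao : a ∈ o) (hbo : b ∈ o)
    (hβ : ∀ x : F, β ≠ algebraMap F E x)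
    (hmin : β ^ 2 - algebraMap F E b * β + algebraMap F E a = 0)
    {ϖ : F} (hϖo : ϖ ∈ o) (hϖ : Irreducible (⟨ϖ, hϖo⟩ : o))
    (ι₀ : E →+* Matrix (Fin 2) (Fin 2) F)
    (hι₀ : ∀ x : E, ∀ j : Fin 2,
      x * (![β, 1] j) = ∑ i : Fin 2, (![β, 1] i) * algebraMap F E (ι₀ x i j))
    (g : Matrix (Fin 2) (Fin 2) F) {r s : ℕ}
    (h1 : ∃ t : E, t ≠ 0 ∧ ∃ k ∈ GLo o, g = ι₀ t * aM (ϖ ^ r) * k)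
    (h2 : ∃ t : E, t ≠ 0 ∧ ∃ k ∈ GLo o, g = ι₀ t * aM (ϖ ^ s) * k) :
    r = s := by
  obtain ⟨t, ht, k, hk, hgeq⟩ := h1
  obtain ⟨t', ht', k', hk', hgeq'⟩ := h2
  have e1 : LsetD o β g = (t * ·) '' LsetD o β (aM (ϖ ^ r)) := by
    rw [hgeq, LsetD_mul_GLo hk, LsetD_iota_mul ι₀ hι₀]
  have e2 : LsetD o β g = (t' * ·) '' LsetD o β (aM (ϖ ^ s)) := by
    rw [hgeq', LsetD_mul_GLo hk', LsetD_iota_mul ι₀ hι₀]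
  exact T_r_eq hao hbo hϖo hϖ hβ hmin ht ht' (e1 ▸ e2)

end Aux

open Matrix

/-- `GL₂(F)` is the disjoint union over `r ∈ ℕ` of the sets
`GL₂(𝔬)·a(ϖ^r)·ι₀(E^×)`, and equivalently (applying inversion) the disjoint union of
the sets `ι₀(E^×)·a(ϖ^r)·GL₂(𝔬)`: every invertible `2×2` matrix over `F` lies in
exactly one such double coset. -/
theorem stmt_8 {F E : Type*} [Field F] [Field E] [Algebra F E]
    (o : ValuationSubring F) [IsDiscreteValuationRing o]
    (O : ValuationSubring E) [IsDiscreteValuationRing O]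
    (hcomp : ∀ x : F, x ∈ o ↔ algebraMap F E x ∈ O)
    (ϖ : F) (hϖo : ϖ ∈ o) (hϖ : Irreducible (⟨ϖ, hϖo⟩ : o))
    (β : E) (hβO : β ∈ O) (hβno : ¬ ∃ x ∈ o, β = algebraMap F E x)
    (hOgen : ∀ z ∈ O, ∃ x y : F, x ∈ o ∧ y ∈ o ∧
      z = algebraMap F E x + algebraMap F E y * β)
    (hquad : ∀ z : E, ∃ s t : F, z = algebraMap F E s + algebraMap F E t * β)
    (a b : F) (hao : a ∈ o) (hbo : b ∈ o) (hau : a⁻¹ ∈ o) (hane : a ≠ 0)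
    (hmin : β ^ 2 - algebraMap F E b * β + algebraMap F E a = 0)
    (ι₀ : E →+* Matrix (Fin 2) (Fin 2) F)
    (hι₀ : ∀ x : E, ∀ j : Fin 2,
      x * (![β, 1] j) = ∑ i : Fin 2, (![β, 1] i) * algebraMap F E (ι₀ x i j)) :
    (∀ g : Matrix (Fin 2) (Fin 2) F, IsUnit g →
      ∃! r : ℕ, ∃ k ∈ GLo o, ∃ t : E, t ≠ 0 ∧ g = k * aM (ϖ ^ r) * ι₀ t) ∧
    (∀ g : Matrix (Fin 2) (Fin 2) F, IsUnit g →
      ∃! r : ℕ, ∃ t : E, t ≠ 0 ∧ ∃ k ∈ GLo o, g = ι₀ t * aM (ϖ ^ r) * k) := by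
  have hβ : ∀ x : F, β ≠ algebraMap F E x := by
    intro x hx
    exact hβno ⟨x, (hcomp x).2 (by rw [← hx]; exact hβO), hx⟩
  have hform2 : ∀ g : Matrix (Fin 2) (Fin 2) F, IsUnit g →
      ∃! r : ℕ, ∃ t : E, t ≠ 0 ∧ ∃ k ∈ GLo o, g = ι₀ t * aM (ϖ ^ r) * k := by
    intro g hg
    obtain ⟨r, hr⟩ := form2_exists hβ hOgen hϖo hϖ ι₀ hι₀ g hg
    exact ⟨r, hr, fun s hs => form2_unique hao hbo hβ hmin hϖo hϖ ι₀ hι₀ g hs hr⟩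
  refine ⟨?_, hform2⟩
  intro g hg
  -- the matrices N = diag(-a, 1) and Ni = diag(-a⁻¹, 1)
  have hNNi : (!![-a, 0; 0, 1] : Matrix (Fin 2) (Fin 2) F) * !![-(a⁻¹), 0; 0, 1] = 1 := by
    ext i j
    fin_cases i <;> fin_cases j <;>
      simp [Matrix.mul_apply, Fin.sum_univ_two] <;> field_simp
  have hNiN : (!![-(a⁻¹), 0; 0, 1] : Matrix (Fin 2) (Fin 2) F) * !![-a, 0; 0, 1] = 1 := by
    ext i j
    fin_cases i <;> fin_cases j <;>
      simp [Matrix.mul_apply, Fin.sum_univ_two] <;> field_simp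
  have hNent : ∀ i j, (!![-a, 0; 0, 1] : Matrix (Fin 2) (Fin 2) F) i j ∈ o := by
    intro i j
    fin_cases i <;> fin_cases j <;>
      simp only [Matrix.cons_val_zero, Matrix.cons_val_one, Matrix.head_cons,
        Matrix.cons_val', Matrix.empty_val', Matrix.cons_val_fin_one]
    exacts [neg_mem hao, zero_mem o, zero_mem o, one_mem o]
  have hNient : ∀ i j, (!![-(a⁻¹), 0; 0, 1] : Matrix (Fin 2) (Fin 2) F) i j ∈ o := by
    intro i j
    fin_cases i <;> fin_cases j <;>
      simp only [Matrix.cons_val_zero, Matrix.cons_val_one, Matrix.head_cons,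
        Matrix.cons_val', Matrix.empty_val', Matrix.cons_val_fin_one]
    exacts [neg_mem hau, zero_mem o, zero_mem o, one_mem o]
  have hNmem : (!![-a, 0; 0, 1] : Matrix (Fin 2) (Fin 2) F) ∈ GLo o :=
    ⟨hNent, !![-(a⁻¹), 0; 0, 1], hNient, hNNi, hNiN⟩
  have hNimem : (!![-(a⁻¹), 0; 0, 1] : Matrix (Fin 2) (Fin 2) F) ∈ GLo o :=
    ⟨hNient, !![-a, 0; 0, 1], hNent, hNiN, hNNi⟩
  have haMt : ∀ y : F, (aM y)ᵀ = aM y := by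
    intro y
    ext i j
    fin_cases i <;> fin_cases j <;> simp [aM, Matrix.transpose_apply]
  have hcommNi : ∀ y : F, (!![-(a⁻¹), 0; 0, 1] : Matrix (Fin 2) (Fin 2) F) * aM y
      = aM y * !![-(a⁻¹), 0; 0, 1] := by
    intro y
    ext i j
    fin_cases i <;> fin_cases j <;>
      simp [aM, Matrix.mul_apply, Fin.sum_univ_two] <;> ring
  have hcommN : ∀ y : F, (!![-a, 0; 0, 1] : Matrix (Fin 2) (Fin 2) F) * aM y
      = aM y * !![-a, 0; 0, 1] := by
    intro y
    ext i j
    fin_cases i <;> fin_cases j <;>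
      simp [aM, Matrix.mul_apply, Fin.sum_univ_two] <;> ring
  have hNt : ∀ t : E, (!![-a, 0; 0, 1] : Matrix (Fin 2) (Fin 2) F) * ι₀ t
      = (ι₀ t)ᵀ * !![-a, 0; 0, 1] :=
    fun t => (iota_transpose hβ hmin hquad ι₀ hι₀ t).symm
  have hNit : ∀ t : E, (!![-(a⁻¹), 0; 0, 1] : Matrix (Fin 2) (Fin 2) F) * (ι₀ t)ᵀ
      = ι₀ t * !![-(a⁻¹), 0; 0, 1] := by
    intro t
    calc (!![-(a⁻¹), 0; 0, 1] : Matrix (Fin 2) (Fin 2) F) * (ι₀ t)ᵀ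
        = !![-(a⁻¹), 0; 0, 1] * (ι₀ t)ᵀ * (!![-a, 0; 0, 1] * !![-(a⁻¹), 0; 0, 1]) := by
          rw [hNNi, Matrix.mul_one]
      _ = !![-(a⁻¹), 0; 0, 1] * ((ι₀ t)ᵀ * !![-a, 0; 0, 1]) * !![-(a⁻¹), 0; 0, 1] := by
          simp only [Matrix.mul_assoc]
      _ = !![-(a⁻¹), 0; 0, 1] * (!![-a, 0; 0, 1] * ι₀ t) * !![-(a⁻¹), 0; 0, 1] := by
          rw [hNt]
      _ = (!![-(a⁻¹), 0; 0, 1] * !![-a, 0; 0, 1]) * (ι₀ t * !![-(a⁻¹), 0; 0, 1]) := by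
          simp only [Matrix.mul_assoc]
      _ = ι₀ t * !![-(a⁻¹), 0; 0, 1] := by rw [hNiN, Matrix.one_mul]
  have bridge : ∀ (g : Matrix (Fin 2) (Fin 2) F) (r : ℕ),
      (∃ k ∈ GLo o, ∃ t : E, t ≠ 0 ∧ g = k * aM (ϖ ^ r) * ι₀ t) ↔
      (∃ t : E, t ≠ 0 ∧ ∃ k ∈ GLo o,
        !![-(a⁻¹), 0; 0, 1] * gᵀ = ι₀ t * aM (ϖ ^ r) * k) := by
    intro g r
    constructor
    · rintro ⟨k, hk, t, ht, rfl⟩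
      refine ⟨t, ht, !![-(a⁻¹), 0; 0, 1] * kᵀ, GLo_mul hNimem (GLo_transpose hk), ?_⟩
      calc (!![-(a⁻¹), 0; 0, 1] : Matrix (Fin 2) (Fin 2) F) * (k * aM (ϖ ^ r) * ι₀ t)ᵀ
          = !![-(a⁻¹), 0; 0, 1] * ((ι₀ t)ᵀ * ((aM (ϖ ^ r))ᵀ * kᵀ)) := by
            rw [Matrix.transpose_mul, Matrix.transpose_mul]
        _ = (!![-(a⁻¹), 0; 0, 1] * (ι₀ t)ᵀ) * (aM (ϖ ^ r) * kᵀ) := by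
            rw [haMt]; simp only [Matrix.mul_assoc]
        _ = (ι₀ t * !![-(a⁻¹), 0; 0, 1]) * (aM (ϖ ^ r) * kᵀ) := by rw [hNit]
        _ = ι₀ t * (!![-(a⁻¹), 0; 0, 1] * aM (ϖ ^ r)) * kᵀ := by
            simp only [Matrix.mul_assoc]
        _ = ι₀ t * (aM (ϖ ^ r) * !![-(a⁻¹), 0; 0, 1]) * kᵀ := by rw [hcommNi]
        _ = ι₀ t * aM (ϖ ^ r) * (!![-(a⁻¹), 0; 0, 1] * kᵀ) := by
            simp only [Matrix.mul_assoc]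
    · rintro ⟨t, ht, k, hk, heq⟩
      refine ⟨(!![-a, 0; 0, 1] * k)ᵀ, GLo_transpose (GLo_mul hNmem hk), t, ht, ?_⟩
      have hgt : gᵀ = (ι₀ t)ᵀ * aM (ϖ ^ r) * (!![-a, 0; 0, 1] * k) := by
        calc gᵀ = !![-a, 0; 0, 1] * (!![-(a⁻¹), 0; 0, 1] * gᵀ) := by
              rw [← Matrix.mul_assoc, hNNi, Matrix.one_mul]
          _ = !![-a, 0; 0, 1] * (ι₀ t * aM (ϖ ^ r) * k) := by rw [heq]
          _ = (!![-a, 0; 0, 1] * ι₀ t) * (aM (ϖ ^ r) * k) := by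
              simp only [Matrix.mul_assoc]
          _ = ((ι₀ t)ᵀ * !![-a, 0; 0, 1]) * (aM (ϖ ^ r) * k) := by rw [hNt]
          _ = (ι₀ t)ᵀ * (!![-a, 0; 0, 1] * aM (ϖ ^ r)) * k := by
              simp only [Matrix.mul_assoc]
          _ = (ι₀ t)ᵀ * (aM (ϖ ^ r) * !![-a, 0; 0, 1]) * k := by rw [hcommN]
          _ = (ι₀ t)ᵀ * aM (ϖ ^ r) * (!![-a, 0; 0, 1] * k) := by
              simp only [Matrix.mul_assoc]
      calc g = gᵀᵀ := by rw [Matrix.transpose_transpose]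
        _ = ((ι₀ t)ᵀ * aM (ϖ ^ r) * (!![-a, 0; 0, 1] * k))ᵀ := by rw [hgt]
        _ = (!![-a, 0; 0, 1] * k)ᵀ * aM (ϖ ^ r) * ι₀ t := by
            simp only [Matrix.transpose_mul, Matrix.transpose_transpose, haMt,
              Matrix.mul_assoc]
  have hgNt : IsUnit ((!![-(a⁻¹), 0; 0, 1] : Matrix (Fin 2) (Fin 2) F) * gᵀ) := by
    obtain ⟨gu, hgu⟩ := hg
    have hggi : g * (↑gu⁻¹ : Matrix (Fin 2) (Fin 2) F) = 1 := by rw [← hgu]; exact gu.mul_inv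
    have hgig : (↑gu⁻¹ : Matrix (Fin 2) (Fin 2) F) * g = 1 := by rw [← hgu]; exact gu.inv_mul
    refine isUnit_iff_exists.mpr ⟨(↑gu⁻¹ : Matrix (Fin 2) (Fin 2) F)ᵀ * !![-a, 0; 0, 1], ?_, ?_⟩
    · calc (!![-(a⁻¹), 0; 0, 1] : Matrix (Fin 2) (Fin 2) F) * gᵀ
            * ((↑gu⁻¹ : Matrix (Fin 2) (Fin 2) F)ᵀ * !![-a, 0; 0, 1])
          = !![-(a⁻¹), 0; 0, 1] * ((gᵀ * (↑gu⁻¹ : Matrix (Fin 2) (Fin 2) F)ᵀ) * !![-a, 0; 0, 1]) := by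
            simp only [Matrix.mul_assoc]
        _ = 1 := by rw [← Matrix.transpose_mul, hgig, Matrix.transpose_one, Matrix.one_mul, hNiN]
    · calc (↑gu⁻¹ : Matrix (Fin 2) (Fin 2) F)ᵀ * !![-a, 0; 0, 1]
            * ((!![-(a⁻¹), 0; 0, 1] : Matrix (Fin 2) (Fin 2) F) * gᵀ)
          = (↑gu⁻¹ : Matrix (Fin 2) (Fin 2) F)ᵀ * ((!![-a, 0; 0, 1] * !![-(a⁻¹), 0; 0, 1]) * gᵀ) := by
            simp only [Matrix.mul_assoc]
        _ = (↑gu⁻¹ : Matrix (Fin 2) (Fin 2) F)ᵀ * gᵀ := by rw [hNNi, Matrix.one_mul]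
        _ = 1 := by rw [← Matrix.transpose_mul, hggi, Matrix.transpose_one]
  obtain ⟨r, hr, hru⟩ := hform2 (!![-(a⁻¹), 0; 0, 1] * gᵀ) hgNt
  exact ⟨r, (bridge g r).mpr hr, fun s hs => hru s ((bridge g s).mp hs)⟩
end

section
/- Let E/F be a quadratic field extension, and let r, m ∈ ℕ and t ∈ E^×. Then ι_r(t) ∈ GL₂(𝔬)·a(ϖ^m)·GL₂(𝔬) if and only if t ∈ 𝒪_r^{(m)}, i.e. ι_r^{−1}(GL₂(𝔬) a(ϖ^m) GL₂(𝔬)) = 𝒪_r^{(m)}. -/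
/-! Setup: `F` a nonarchimedean local field modelled by a field with valuation ring
`o` (a DVR) and uniformizer `ϖ ∈ o`; `a(y) = diag(y,1)`.  `E/F` a quadratic field
extension with ring of integers the valuation subring `O`; `β ∈ 𝒪 ∖ 𝔬` with
`𝒪 = 𝔬 + β𝔬`, `𝐚 := Nr(β) ∈ 𝔬^×`, `𝐛 := Tr(β)` (so `β² − 𝐛β + 𝐚 = 0`);
`𝒪_r = 𝔬 + ϖ^rβ𝔬` and `𝒪_r^{(m)} = {t ∈ 𝒪_r ∖ ϖ𝒪_r : Nr(t) ∈ ϖ^m𝔬^×}`.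
`ι₀ : E → M₂(F)` is determined by `x·(β,1) = (β,1)·ι₀(x)`, and
`ι_r(t) = a(ϖ^r)·ι₀(t)·a(ϖ^r)^{−1}`. -/


namespace Stmt9Aux

variable {F : Type*} [Field F] {o : ValuationSubring F}

/-- `x` is a unit of `o`, stated in `F`. -/
def IsU (o : ValuationSubring F) (x : F) : Prop := x ∈ o ∧ x⁻¹ ∈ o ∧ x ≠ 0

lemma isU_one : IsU o 1 := ⟨one_mem _, by simpa using one_mem o, one_ne_zero⟩

lemma isU_mul {x y : F} (hx : IsU o x) (hy : IsU o y) : IsU o (x * y) :=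
  ⟨mul_mem hx.1 hy.1, by rw [mul_inv]; exact mul_mem hx.2.1 hy.2.1,
    mul_ne_zero hx.2.2 hy.2.2⟩

lemma isU_neg {x : F} (hx : IsU o x) : IsU o (-x) :=
  ⟨neg_mem hx.1, by rw [inv_neg]; exact neg_mem hx.2.1, neg_ne_zero.mpr hx.2.2⟩

lemma nonU_mul_left {x y : F} (hx : x ∈ o) (hy : y ∈ o) (h : ¬ IsU o x) :
    ¬ IsU o (x * y) := by
  rintro ⟨hm, hi, hne⟩
  have hx0 : x ≠ 0 := left_ne_zero_of_mul hne
  have hy0 : y ≠ 0 := right_ne_zero_of_mul hne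
  refine h ⟨hx, ?_, hx0⟩
  have : x⁻¹ = y * (x * y)⁻¹ := by field_simp
  rw [this]
  exact mul_mem hy hi

lemma nonU_mul_right {x y : F} (hx : x ∈ o) (hy : y ∈ o) (h : ¬ IsU o y) :
    ¬ IsU o (x * y) := by
  rw [mul_comm]; exact nonU_mul_left hy hx h

lemma nonU_add {x y : F} (hx : x ∈ o) (hy : y ∈ o) (h1 : ¬ IsU o x)
    (h2 : ¬ IsU o y) : ¬ IsU o (x + y) := by
  by_cases hx0 : x = 0
  · simpa [hx0] using h2
  by_cases hy0 : y = 0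
  · simpa [hy0] using h1
  rcases o.mem_or_inv_mem (x⁻¹ * y) with hm | hm
  · have hrw : x + y = x * (1 + x⁻¹ * y) := by field_simp
    rw [hrw]
    exact nonU_mul_left hx (add_mem (one_mem o) hm) h1
  · have hm' : y⁻¹ * x ∈ o := by
      have : (x⁻¹ * y)⁻¹ = y⁻¹ * x := by rw [mul_inv, inv_inv, mul_comm]
      rwa [this] at hm
    have hrw : x + y = y * (1 + y⁻¹ * x) := by field_simp; ring
    rw [hrw]
    exact nonU_mul_left hy (add_mem (one_mem o) hm') h2

end Stmt9Aux

namespace Stmt9Aux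

variable {F : Type*} [Field F] {o : ValuationSubring F}

lemma isU_iff_isUnit {x : F} (hx : x ∈ o) : IsU o x ↔ IsUnit (⟨x, hx⟩ : o) := by
  constructor
  · rintro ⟨-, hi, hne⟩
    refine isUnit_iff_exists_inv.mpr ⟨⟨x⁻¹, hi⟩, ?_⟩
    exact Subtype.ext (mul_inv_cancel₀ hne)
  · rintro h
    obtain ⟨⟨y, hy⟩, hxy⟩ := isUnit_iff_exists_inv.mp h
    have hxy' : x * y = 1 := congrArg Subtype.val hxy
    have hne : x ≠ 0 := left_ne_zero_of_mul (hxy' ▸ one_ne_zero)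
    have : x⁻¹ = y := inv_eq_of_mul_eq_one_right hxy'
    exact ⟨hx, this ▸ hy, hne⟩

lemma nonU_iff_dvd [IsDiscreteValuationRing o] {ϖ : F} (hϖo : ϖ ∈ o)
    (hϖ : Irreducible (⟨ϖ, hϖo⟩ : o)) {x : F} (hx : x ∈ o) :
    ¬ IsU o x ↔ ∃ w ∈ o, x = ϖ * w := by
  rw [isU_iff_isUnit hx]
  have hmax := (IsDiscreteValuationRing.irreducible_iff_uniformizer
    (⟨ϖ, hϖo⟩ : o)).mp hϖ
  constructor
  · intro h
    have : (⟨x, hx⟩ : o) ∈ IsLocalRing.maximalIdeal o :=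
      (IsLocalRing.mem_maximalIdeal _).mpr (mem_nonunits_iff.mpr h)
    rw [hmax, Ideal.mem_span_singleton] at this
    obtain ⟨c, hc⟩ := this
    exact ⟨c.1, c.2, congrArg Subtype.val hc⟩
  · rintro ⟨w, hw, rfl⟩
    intro hu
    have : (⟨ϖ * w, mul_mem hϖo hw⟩ : o) ∈ IsLocalRing.maximalIdeal o := by
      rw [hmax, Ideal.mem_span_singleton]
      exact ⟨⟨w, hw⟩, rfl⟩
    exact (mem_nonunits_iff.mp ((IsLocalRing.mem_maximalIdeal _).mp this)) hu

lemma entries_mul {g h : Matrix (Fin 2) (Fin 2) F} (hg : ∀ i j, g i j ∈ o)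
    (hh : ∀ i j, h i j ∈ o) : ∀ i j, (g * h) i j ∈ o := by
  intro i j
  rw [Matrix.mul_apply]
  exact sum_mem fun k _ => mul_mem (hg i k) (hh k j)

lemma GLo_mul {k₁ k₂ : Matrix (Fin 2) (Fin 2) F} (h₁ : k₁ ∈ GLo o)
    (h₂ : k₂ ∈ GLo o) : k₁ * k₂ ∈ GLo o := by
  obtain ⟨e₁, h₁', he₁, hi₁, hi₁'⟩ := h₁
  obtain ⟨e₂, h₂', he₂, hi₂, hi₂'⟩ := h₂
  refine ⟨entries_mul e₁ e₂, h₂' * h₁', entries_mul he₂ he₁, ?_, ?_⟩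
  · rw [mul_assoc, ← mul_assoc k₂, hi₂, one_mul, hi₁]
  · rw [mul_assoc, ← mul_assoc h₁', hi₁', one_mul, hi₂']

lemma GLo_det_isU {k : Matrix (Fin 2) (Fin 2) F} (hk : k ∈ GLo o) :
    IsU o k.det := by
  obtain ⟨he, h, hhe, hkh, hhk⟩ := hk
  have hdm : k.det * h.det = 1 := by rw [← Matrix.det_mul, hkh, Matrix.det_one]
  have hne : k.det ≠ 0 := left_ne_zero_of_mul (hdm ▸ one_ne_zero)
  have hdk : k.det ∈ o := by
    rw [Matrix.det_fin_two]
    exact sub_mem (mul_mem (he 0 0) (he 1 1)) (mul_mem (he 0 1) (he 1 0))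
  have hdh : h.det ∈ o := by
    rw [Matrix.det_fin_two]
    exact sub_mem (mul_mem (hhe 0 0) (hhe 1 1)) (mul_mem (hhe 0 1) (hhe 1 0))
  exact ⟨hdk, (inv_eq_of_mul_eq_one_right hdm) ▸ hdh, hne⟩

lemma aM_entries (y : F) (hy : y ∈ o) : ∀ i j, aM y i j ∈ o := by
  intro i j
  fin_cases i <;> fin_cases j <;> simp [aM, hy, zero_mem, one_mem]

lemma swap_mem_GLo : (!![0, 1; 1, 0] : Matrix (Fin 2) (Fin 2) F) ∈ GLo o := by
  refine ⟨?_, !![0, 1; 1, 0], ?_, ?_, ?_⟩ <;>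
    first
    | (intro i j; fin_cases i <;> fin_cases j <;> simp [zero_mem, one_mem])
    | (rw [Matrix.mul_fin_two, Matrix.one_fin_two]; norm_num)

/-- Forward direction of the Cartan characterization. -/
lemma cartan_mp {ϖ : F} (hϖo : ϖ ∈ o) (hϖnu : ¬ IsU o ϖ) (m : ℕ)
    {g : Matrix (Fin 2) (Fin 2) F}
    (h : ∃ k₁ ∈ GLo o, ∃ k₂ ∈ GLo o, g = k₁ * aM (ϖ ^ m) * k₂) :
    (∀ i j, g i j ∈ o) ∧ (∃ i j, IsU o (g i j)) ∧
      ∃ u : F, IsU o u ∧ g.det = ϖ ^ m * u := by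
  obtain ⟨k₁, hk₁, k₂, hk₂, rfl⟩ := h
  have hϖm : ϖ ^ m ∈ o := pow_mem hϖo m
  have haMe : ∀ i j, aM (ϖ ^ m) i j ∈ o := aM_entries _ hϖm
  obtain ⟨hk₁e, h₁, hh₁e, hk₁h, hh₁k⟩ := hk₁
  obtain ⟨hk₂e, h₂, hh₂e, hk₂h, hh₂k⟩ := hk₂
  have hge : ∀ i j, (k₁ * aM (ϖ ^ m) * k₂) i j ∈ o :=
    entries_mul (entries_mul hk₁e haMe) hk₂e
  refine ⟨hge, ?_, k₁.det * k₂.det, isU_mul (GLo_det_isU ⟨hk₁e, h₁, hh₁e, hk₁h, hh₁k⟩)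
      (GLo_det_isU ⟨hk₂e, h₂, hh₂e, hk₂h, hh₂k⟩), ?_⟩
  · by_contra hno
    push_neg at hno
    set G := k₁ * aM (ϖ ^ m) * k₂ with hG
    have hA : h₁ * G * h₂ = aM (ϖ ^ m) := by
      rw [hG]
      calc h₁ * (k₁ * aM (ϖ ^ m) * k₂) * h₂
          = (h₁ * k₁) * aM (ϖ ^ m) * (k₂ * h₂) := by
            simp only [mul_assoc]
        _ = aM (ϖ ^ m) := by rw [hh₁k, hk₂h, one_mul, mul_one]
    have h11 : (h₁ * G * h₂) 1 1 = 1 := by rw [hA]; simp [aM]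
    have hGo : ∀ i j, G i j ∈ o := hge
    have hnu : ∀ i j, ¬ IsU o (G i j) := hno
    have hexp : (h₁ * G * h₂) 1 1 =
        (h₁ 1 0 * G 0 0 + h₁ 1 1 * G 1 0) * h₂ 0 1 +
        (h₁ 1 0 * G 0 1 + h₁ 1 1 * G 1 1) * h₂ 1 1 := by
      simp [Matrix.mul_apply, Fin.sum_univ_two]
    have : ¬ IsU o ((h₁ * G * h₂) 1 1) := by
      rw [hexp]
      have t1 : ¬ IsU o (h₁ 1 0 * G 0 0 + h₁ 1 1 * G 1 0) :=
        nonU_add (mul_mem (hh₁e 1 0) (hGo 0 0)) (mul_mem (hh₁e 1 1) (hGo 1 0))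
          (nonU_mul_right (hh₁e 1 0) (hGo 0 0) (hnu 0 0))
          (nonU_mul_right (hh₁e 1 1) (hGo 1 0) (hnu 1 0))
      have t2 : ¬ IsU o (h₁ 1 0 * G 0 1 + h₁ 1 1 * G 1 1) :=
        nonU_add (mul_mem (hh₁e 1 0) (hGo 0 1)) (mul_mem (hh₁e 1 1) (hGo 1 1))
          (nonU_mul_right (hh₁e 1 0) (hGo 0 1) (hnu 0 1))
          (nonU_mul_right (hh₁e 1 1) (hGo 1 1) (hnu 1 1))
      exact nonU_add
        (mul_mem (add_mem (mul_mem (hh₁e 1 0) (hGo 0 0)) (mul_mem (hh₁e 1 1) (hGo 1 0))) (hh₂e 0 1))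
        (mul_mem (add_mem (mul_mem (hh₁e 1 0) (hGo 0 1)) (mul_mem (hh₁e 1 1) (hGo 1 1))) (hh₂e 1 1))
        (nonU_mul_left (add_mem (mul_mem (hh₁e 1 0) (hGo 0 0)) (mul_mem (hh₁e 1 1) (hGo 1 0))) (hh₂e 0 1) t1)
        (nonU_mul_left (add_mem (mul_mem (hh₁e 1 0) (hGo 0 1)) (mul_mem (hh₁e 1 1) (hGo 1 1))) (hh₂e 1 1) t2)
    rw [h11] at this
    exact this isU_one
  · rw [Matrix.det_mul, Matrix.det_mul]
    have : (aM (ϖ ^ m)).det = ϖ ^ m := by rw [aM, Matrix.det_fin_two_of]; ring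
    rw [this]; ring

/-- Backward direction, special case: the `(0,0)` entry is a unit. -/
lemma cartan_back0 {ϖ : F} {m : ℕ} {g : Matrix (Fin 2) (Fin 2) F}
    (he : ∀ i j, g i j ∈ o) (h00 : IsU o (g 0 0)) {u : F} (hu : IsU o u)
    (hdet : g.det = ϖ ^ m * u) :
    ∃ k₁ ∈ GLo o, ∃ k₂ ∈ GLo o, g = k₁ * aM (ϖ ^ m) * k₂ := by
  obtain ⟨hα, hαi, hαne⟩ := h00
  obtain ⟨huo, hui, hune⟩ := hu
  have hd : g 0 0 * g 1 1 - g 0 1 * g 1 0 = ϖ ^ m * u := by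
    rw [← Matrix.det_fin_two, hdet]
  refine ⟨!![0, g 0 0; u * (g 0 0)⁻¹, g 1 0], ?_,
    !![0, 1; 1, g 0 1 * (g 0 0)⁻¹], ?_, ?_⟩
  · refine ⟨?_, !![-(g 1 0 * u⁻¹), g 0 0 * u⁻¹; (g 0 0)⁻¹, 0], ?_, ?_, ?_⟩
    · intro i j
      fin_cases i <;> fin_cases j <;>
        simp [zero_mem, one_mem, he 0 0, he 1 0, mul_mem huo hαi, mul_mem (he 1 0) hui]
    · intro i j
      fin_cases i <;> fin_cases j <;>
        simp [zero_mem, one_mem, hαi, mul_mem hα hui,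
          neg_mem (mul_mem (he 1 0) hui), mul_mem (he 1 0) hui]
    · rw [Matrix.mul_fin_two, Matrix.one_fin_two]
      congr 1 <;> simp [hune, hαne] <;> constructor <;> field_simp <;> ring
    · rw [Matrix.mul_fin_two, Matrix.one_fin_two]
      congr 1 <;> simp [hune, hαne] <;> constructor <;> field_simp <;> ring
  · refine ⟨?_, !![-(g 0 1 * (g 0 0)⁻¹), 1; 1, 0], ?_, ?_, ?_⟩
    · intro i j
      fin_cases i <;> fin_cases j <;>
        simp [zero_mem, one_mem, mul_mem (he 0 1) hαi]
    · intro i j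
      fin_cases i <;> fin_cases j <;>
        simp [zero_mem, one_mem, mul_mem (he 0 1) hαi, neg_mem (mul_mem (he 0 1) hαi)]
    · rw [Matrix.mul_fin_two, Matrix.one_fin_two]
      congr 1 <;> simp [hune, hαne] <;> constructor <;> field_simp <;> ring
    · rw [Matrix.mul_fin_two, Matrix.one_fin_two]
      congr 1 <;> simp [hune, hαne] <;> constructor <;> field_simp <;> ring
  · ext i j
    fin_cases i <;> fin_cases j <;>
      simp [aM, Matrix.mul_apply, Fin.sum_univ_two]
    all_goals field_simp
    all_goals linear_combination hd

/-- Backward direction of the Cartan characterization. -/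
lemma cartan_mpr {ϖ : F} (m : ℕ) {g : Matrix (Fin 2) (Fin 2) F}
    (he : ∀ i j, g i j ∈ o) (hun : ∃ i j, IsU o (g i j)) {u : F} (hu : IsU o u)
    (hdet : g.det = ϖ ^ m * u) :
    ∃ k₁ ∈ GLo o, ∃ k₂ ∈ GLo o, g = k₁ * aM (ϖ ^ m) * k₂ := by
  set S : Matrix (Fin 2) (Fin 2) F := !![0, 1; 1, 0] with hS
  have hSG : S ∈ GLo o := swap_mem_GLo
  have hSS : S * S = 1 := by
    rw [hS, Matrix.mul_fin_two, Matrix.one_fin_two]; norm_num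
  have hSdet : S.det = -1 := by rw [hS, Matrix.det_fin_two_of]; ring
  have hSg : ∀ h : Matrix (Fin 2) (Fin 2) F,
      S * h = !![h 1 0, h 1 1; h 0 0, h 0 1] := by
    intro h
    nth_rewrite 1 [Matrix.eta_fin_two h]
    rw [hS, Matrix.mul_fin_two]
    norm_num
  have hgS : ∀ h : Matrix (Fin 2) (Fin 2) F,
      h * S = !![h 0 1, h 0 0; h 1 1, h 1 0] := by
    intro h
    nth_rewrite 1 [Matrix.eta_fin_two h]
    rw [hS, Matrix.mul_fin_two]
    norm_num
  obtain ⟨i, j, hij⟩ := hun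
  fin_cases i <;> fin_cases j
  · exact cartan_back0 he hij hu hdet
  · -- g 0 1 is a unit : use g * S
    have he' : ∀ i j, (g * S) i j ∈ o := by
      rw [hgS g]; intro i j; fin_cases i <;> fin_cases j <;>
        simp [he 0 0, he 0 1, he 1 0, he 1 1]
    have h00' : IsU o ((g * S) 0 0) := by rw [hgS g]; simpa using hij
    have hdet' : (g * S).det = ϖ ^ m * (-u) := by
      rw [Matrix.det_mul, hSdet, hdet]; ring
    obtain ⟨k₁, hk₁, k₂, hk₂, hfac⟩ := cartan_back0 he' h00' (isU_neg hu) hdet'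
    refine ⟨k₁, hk₁, k₂ * S, GLo_mul hk₂ hSG, ?_⟩
    have : g = (g * S) * S := by rw [mul_assoc, hSS, mul_one]
    rw [this, hfac]; simp only [mul_assoc]
  · -- g 1 0 is a unit : use S * g
    have he' : ∀ i j, (S * g) i j ∈ o := by
      rw [hSg g]; intro i j; fin_cases i <;> fin_cases j <;>
        simp [he 0 0, he 0 1, he 1 0, he 1 1]
    have h00' : IsU o ((S * g) 0 0) := by rw [hSg g]; simpa using hij
    have hdet' : (S * g).det = ϖ ^ m * (-u) := by
      rw [Matrix.det_mul, hSdet, hdet]; ring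
    obtain ⟨k₁, hk₁, k₂, hk₂, hfac⟩ := cartan_back0 he' h00' (isU_neg hu) hdet'
    refine ⟨S * k₁, GLo_mul hSG hk₁, k₂, hk₂, ?_⟩
    have : g = S * (S * g) := by rw [← mul_assoc, hSS, one_mul]
    rw [this, hfac]; simp only [mul_assoc]
  · -- g 1 1 is a unit : use S * g * S
    have he' : ∀ i j, (S * g * S) i j ∈ o := by
      rw [hgS (S * g), hSg g]; intro i j; fin_cases i <;> fin_cases j <;>
        simp [he 0 0, he 0 1, he 1 0, he 1 1]
    have h00' : IsU o ((S * g * S) 0 0) := by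
      rw [hgS (S * g), hSg g]; simpa using hij
    have hdet' : (S * g * S).det = ϖ ^ m * u := by
      rw [Matrix.det_mul, Matrix.det_mul, hSdet, hdet]; ring
    obtain ⟨k₁, hk₁, k₂, hk₂, hfac⟩ := cartan_back0 he' h00' hu hdet'
    refine ⟨S * k₁, GLo_mul hSG hk₁, k₂ * S, GLo_mul hk₂ hSG, ?_⟩
    have : g = S * (S * g * S) * S := by
      rw [← mul_assoc, ← mul_assoc, hSS, one_mul, mul_assoc, hSS, mul_one]
    rw [this, hfac]; simp only [mul_assoc]

end Stmt9Aux

/-- The order `𝒪_r = 𝔬 + ϖ^rβ𝔬 ⊆ E` of conductor `r`. -/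
def OrE {F E : Type*} [Field F] [Field E] [Algebra F E] (o : ValuationSubring F)
    (ϖ : F) (β : E) (r : ℕ) : Set E :=
  {z | ∃ x y : F, x ∈ o ∧ y ∈ o ∧
    z = algebraMap F E x + algebraMap F E (ϖ ^ r * y) * β}

/-- For `r, m ∈ ℕ` and `t ∈ E^×`:
`ι_r(t) ∈ GL₂(𝔬)·a(ϖ^m)·GL₂(𝔬)` if and only if `t ∈ 𝒪_r^{(m)}`, i.e.
`ι_r^{−1}(GL₂(𝔬) a(ϖ^m) GL₂(𝔬)) = 𝒪_r^{(m)}`. -/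
theorem stmt_9 {F E : Type*} [Field F] [Field E] [Algebra F E]
    (o : ValuationSubring F) [IsDiscreteValuationRing o]
    (O : ValuationSubring E) [IsDiscreteValuationRing O]
    (hcomp : ∀ x : F, x ∈ o ↔ algebraMap F E x ∈ O)
    (ϖ : F) (hϖo : ϖ ∈ o) (hϖ : Irreducible (⟨ϖ, hϖo⟩ : o))
    (β : E) (hβO : β ∈ O) (hβno : ¬ ∃ x ∈ o, β = algebraMap F E x)
    (hOgen : ∀ z ∈ O, ∃ x y : F, x ∈ o ∧ y ∈ o ∧
      z = algebraMap F E x + algebraMap F E y * β)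
    (hquad : ∀ z : E, ∃ s t : F, z = algebraMap F E s + algebraMap F E t * β)
    (a b : F) (hao : a ∈ o) (hbo : b ∈ o) (hau : a⁻¹ ∈ o) (hane : a ≠ 0)
    (hmin : β ^ 2 - algebraMap F E b * β + algebraMap F E a = 0)
    (ι₀ : E →+* Matrix (Fin 2) (Fin 2) F)
    (hι₀ : ∀ x : E, ∀ j : Fin 2,
      x * (![β, 1] j) = ∑ i : Fin 2, (![β, 1] i) * algebraMap F E (ι₀ x i j))
    (r m : ℕ) :
    ∀ t : E, t ≠ 0 →
      ((∃ k₁ ∈ GLo o, ∃ k₂ ∈ GLo o,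
          aM (ϖ ^ r) * ι₀ t * aM ((ϖ ^ r)⁻¹) = k₁ * aM (ϖ ^ m) * k₂) ↔
        (t ∈ OrE o ϖ β r ∧ (¬ ∃ s ∈ OrE o ϖ β r, t = algebraMap F E ϖ * s) ∧
          ∃ u : F, u ∈ o ∧ u⁻¹ ∈ o ∧ u ≠ 0 ∧ Algebra.norm F t = ϖ ^ m * u)) := by
  classical
  intro t ht
  have hπ0 : ϖ ≠ 0 := fun h => hϖ.ne_zero (Subtype.ext h)
  have hϖnu : ¬ Stmt9Aux.IsU o ϖ := by
    rw [Stmt9Aux.isU_iff_isUnit hϖo]; exact hϖ.not_isUnit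
  have hP0 : (ϖ : F) ^ r ≠ 0 := pow_ne_zero _ hπ0
  have hinj : Function.Injective (algebraMap F E) := (algebraMap F E).injective
  have hβF : ∀ x : F, algebraMap F E x ≠ β := by
    intro x hx
    exact hβno ⟨x, (hcomp x).mpr (hx.symm ▸ hβO), hx.symm⟩
  have uniq : ∀ s₁ u₁ s₂ u₂ : F,
      algebraMap F E s₁ + algebraMap F E u₁ * β =
        algebraMap F E s₂ + algebraMap F E u₂ * β → s₁ = s₂ ∧ u₁ = u₂ := by
    intro s₁ u₁ s₂ u₂ hE
    by_cases hu : u₁ = u₂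
    · subst hu
      exact ⟨hinj (add_right_cancel hE), rfl⟩
    · exfalso
      have hne : algebraMap F E (u₁ - u₂) ≠ 0 := by
        rw [map_sub, sub_ne_zero]
        exact fun h => hu (hinj h)
      apply hβF ((s₂ - s₁) / (u₁ - u₂))
      rw [map_div₀, div_eq_iff hne, map_sub, map_sub]
      linear_combination -hE
  set s := ι₀ t 1 1 with hs
  set u := ι₀ t 0 1 with hu
  have h1 := hι₀ t 1
  simp only [Matrix.cons_val_one, Matrix.head_cons, Fin.sum_univ_two, Matrix.cons_val_zero,
    mul_one, one_mul] at h1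
  have ht1 : t = algebraMap F E s + algebraMap F E u * β := by
    rw [h1]; ring
  have hβ2 : β ^ 2 = algebraMap F E b * β - algebraMap F E a := by
    linear_combination hmin
  have h0 := hι₀ t 0
  simp only [Matrix.cons_val_zero, Fin.sum_univ_two, Matrix.cons_val_one, Matrix.head_cons,
    one_mul] at h0
  have e1 : algebraMap F E (-(u * a)) + algebraMap F E (s + u * b) * β = t * β := by
    rw [ht1, map_neg, map_mul, map_add, map_mul]
    linear_combination (-(algebraMap F E u)) * hβ2
  have e2 : algebraMap F E (ι₀ t 1 0) + algebraMap F E (ι₀ t 0 0) * β = t * β := by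
    rw [h0]; ring
  obtain ⟨hg10, hg00⟩ := uniq _ _ _ _ (e2.trans e1.symm)
  -- the basis (β, 1) and the norm
  have hli : LinearIndependent F ![β, (1:E)] := by
    rw [linearIndependent_fin2]
    refine ⟨by simp, fun x hx => hβF x ?_⟩
    simpa [Algebra.algebraMap_eq_smul_one] using hx
  have hsp : ⊤ ≤ Submodule.span F (Set.range ![β, (1:E)]) := by
    intro z _
    obtain ⟨s', t', hz⟩ := hquad z
    have hz' : z = s' • (1:E) + t' • β := by
      rw [hz, Algebra.algebraMap_eq_smul_one s', Algebra.algebraMap_eq_smul_one t',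
        smul_mul_assoc, one_mul]
    rw [hz']
    exact Submodule.add_mem _
      (Submodule.smul_mem _ _ (Submodule.subset_span ⟨1, rfl⟩))
      (Submodule.smul_mem _ _ (Submodule.subset_span ⟨0, rfl⟩))
  set bE : Module.Basis (Fin 2) F E := Module.Basis.mk hli hsp with hbEdef
  have hbE : ∀ j, bE j = ![β, (1:E)] j := fun j => by
    rw [hbEdef]; exact congrFun (Module.Basis.coe_mk hli hsp) j
  have hnorm : Algebra.norm F t = (ι₀ t).det := by
    rw [Algebra.norm_eq_matrix_det bE]
    congr 1
    ext i j
    rw [Algebra.leftMulMatrix_eq_repr_mul]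
    have hrep : t * bE j = ∑ i : Fin 2, ι₀ t i j • bE i := by
      simp only [hbE]
      rw [hι₀ t j]
      refine Finset.sum_congr rfl fun i _ => ?_
      rw [Algebra.smul_def]
      ring
    rw [hrep]
    exact congrFun (bE.repr_sum_self fun k => ι₀ t k j) i
  have hNt : Algebra.norm F t = (s + u * b) * s + u * (u * a) := by
    rw [hnorm, Matrix.det_fin_two, hg00, hg10, ← hs, ← hu]
    ring
  -- the explicit form of ι_r(t)
  have hg : aM (ϖ ^ r) * ι₀ t * aM ((ϖ ^ r)⁻¹) =
      !![s + u * b, ϖ ^ r * u; -(u * a) * (ϖ ^ r)⁻¹, s] := by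
    rw [Matrix.eta_fin_two (ι₀ t), hg00, hg10, ← hs, ← hu, aM, aM,
      Matrix.mul_fin_two, Matrix.mul_fin_two]
    ext i j
    fin_cases i <;> fin_cases j <;>
      simp <;>
      field_simp
  have hdetG : (!![s + u * b, ϖ ^ r * u;
      -(u * a) * (ϖ ^ r)⁻¹, s]).det = Algebra.norm F t := by
    rw [Matrix.det_fin_two_of, hNt]
    field_simp
    ring
  have hM10 : (!![s + u * b, ϖ ^ r * u; -(u * a) * (ϖ ^ r)⁻¹, s]) 1 0
      = -(u * a) * (ϖ ^ r)⁻¹ := by simp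
  have hM00 : (!![s + u * b, ϖ ^ r * u; -(u * a) * (ϖ ^ r)⁻¹, s]) 0 0 = s + u * b := by simp
  have hM01 : (!![s + u * b, ϖ ^ r * u; -(u * a) * (ϖ ^ r)⁻¹, s]) 0 1 = ϖ ^ r * u := by simp
  have hM11 : (!![s + u * b, ϖ ^ r * u; -(u * a) * (ϖ ^ r)⁻¹, s]) 1 1 = s := by simp
  constructor
  · intro h
    rw [hg] at h
    obtain ⟨hent, ⟨i, j, hij⟩, u₀, hu₀, hdet₀⟩ := Stmt9Aux.cartan_mp hϖo hϖnu m h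
    have hE10 : -(u * a) * (ϖ ^ r)⁻¹ ∈ o := hM10 ▸ hent 1 0
    have hE11 : s ∈ o := hM11 ▸ hent 1 1
    have hy : u * (ϖ ^ r)⁻¹ ∈ o := by
      have hid : u * (ϖ ^ r)⁻¹ = (-(u * a) * (ϖ ^ r)⁻¹) * (-a⁻¹) := by
        field_simp
      rw [hid]; exact mul_mem hE10 (neg_mem hau)
    refine ⟨⟨s, u * (ϖ ^ r)⁻¹, hE11, hy, ?_⟩, ?_,
      u₀, hu₀.1, hu₀.2.1, hu₀.2.2, by rw [← hdetG]; exact hdet₀⟩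
    · have hid : ϖ ^ r * (u * (ϖ ^ r)⁻¹) = u := by field_simp
      rw [hid]; exact ht1
    · rintro ⟨s', ⟨x, y', hx, hy', rfl⟩, htd⟩
      have htd' : t = algebraMap F E (ϖ * x) + algebraMap F E (ϖ ^ r * (ϖ * y')) * β := by
        rw [htd]; simp only [map_mul, map_add]; ring
      obtain ⟨hsx, huy⟩ := uniq _ _ _ _ (ht1.symm.trans htd')
      have key : ∀ w₀ : F, (∃ w ∈ o, w₀ = ϖ * w) → ¬ Stmt9Aux.IsU o w₀ := by
        rintro w₀ ⟨w, hwo, rfl⟩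
        exact Stmt9Aux.nonU_mul_left hϖo hwo hϖnu
      have hn00 : ¬ Stmt9Aux.IsU o (s + u * b) := key _ ⟨x + ϖ ^ r * y' * b,
        add_mem hx (mul_mem (mul_mem (pow_mem hϖo r) hy') hbo),
        by rw [hsx, huy]; ring⟩
      have hn01 : ¬ Stmt9Aux.IsU o (ϖ ^ r * u) := key _ ⟨ϖ ^ r * ϖ ^ r * y',
        mul_mem (mul_mem (pow_mem hϖo r) (pow_mem hϖo r)) hy',
        by rw [huy]; ring⟩
      have hn10 : ¬ Stmt9Aux.IsU o (-(u * a) * (ϖ ^ r)⁻¹) := key _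
        ⟨-(y' * a), neg_mem (mul_mem hy' hao), by rw [huy]; field_simp⟩
      have hn11 : ¬ Stmt9Aux.IsU o s := key _ ⟨x, hx, hsx⟩
      have hnon : ∀ i' j',
          ¬ Stmt9Aux.IsU o ((!![s + u * b, ϖ ^ r * u; -(u * a) * (ϖ ^ r)⁻¹, s]) i' j') := by
        intro i' j'
        fin_cases i' <;> fin_cases j'
        · exact hn00
        · exact hn01
        · exact hn10
        · exact hn11
      exact hnon i j hij
  · rintro ⟨⟨x, y, hx, hy, hty⟩, hnd, u₀, hu₀o, hu₀i, hu₀ne, hN⟩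
    obtain ⟨hsx, huy⟩ := uniq _ _ _ _ (ht1.symm.trans hty)
    have hid10 : -(u * a) * (ϖ ^ r)⁻¹ = -(y * a) := by
      rw [huy]; field_simp
    rw [hg]
    refine Stmt9Aux.cartan_mpr (m := m) ?_ ?_
      (u := u₀) ⟨hu₀o, hu₀i, hu₀ne⟩ (by rw [hdetG]; exact hN)
    · have hm00 : s + u * b ∈ o := by
        rw [hsx, huy]
        exact add_mem hx (mul_mem (mul_mem (pow_mem hϖo r) hy) hbo)
      have hm01 : ϖ ^ r * u ∈ o := by
        rw [huy]
        exact mul_mem (pow_mem hϖo r) (mul_mem (pow_mem hϖo r) hy)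
      have hm10 : -(u * a) * (ϖ ^ r)⁻¹ ∈ o := by
        rw [hid10]
        exact neg_mem (mul_mem hy hao)
      have hm11 : s ∈ o := by rw [hsx]; exact hx
      intro i j
      fin_cases i <;> fin_cases j
      · exact hm00
      · exact hm01
      · exact hm10
      · exact hm11
    · by_cases hxu : Stmt9Aux.IsU o x
      · exact ⟨1, 1, by rw [hM11, hsx]; exact hxu⟩
      · have hyu : Stmt9Aux.IsU o y := by
          by_contra hyu
          obtain ⟨x', hx', hxx⟩ := (Stmt9Aux.nonU_iff_dvd hϖo hϖ hx).mp hxu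
          obtain ⟨y', hy', hyy⟩ := (Stmt9Aux.nonU_iff_dvd hϖo hϖ hy).mp hyu
          exact hnd ⟨algebraMap F E x' + algebraMap F E (ϖ ^ r * y') * β,
            ⟨x', y', hx', hy', rfl⟩,
            by rw [ht1, hsx, huy, hxx, hyy]; simp only [map_mul, map_add]; ring⟩
        refine ⟨1, 0, ?_⟩
        rw [hM10, hid10]
        exact Stmt9Aux.isU_neg (Stmt9Aux.isU_mul hyu ⟨hao, hau, hane⟩)
end

section
/- Define the four mirabolic subgroups of GL₂(𝔬): B₁(𝔬) = {[[z,z'],[0,1]] : z ∈ 𝔬^×, z' ∈ 𝔬}, B₂(𝔬) = {[[1,z'],[0,z]] : z ∈ 𝔬^×, z' ∈ 𝔬}, B₃(𝔬) = {[[z,0],[z',1]] : z ∈ 𝔬^×, z' ∈ 𝔬}, B₄(𝔬) = {[[1,0],[z',z]] : z ∈ 𝔬^×, z' ∈ 𝔬}. Then for each i ∈ {1,2,3,4}: GL₂(𝔬) = 𝒪_L^× · B_i(𝔬) and 𝒪_L^× ∩ B_i(𝔬) = {1}; in particular every k ∈ GL₂(𝔬) factors uniquely as k = u·b with u ∈ 𝒪_L^×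 and b ∈ B_i(𝔬). -/
/-- The order `𝒪_L = 𝔬[α] = 𝔬 + 𝔬α ⊆ M₂(F)`. -/
def OL {F : Type*} [Field F] (o : ValuationSubring F) (α : Matrix (Fin 2) (Fin 2) F) :
    Set (Matrix (Fin 2) (Fin 2) F) :=
  {m | ∃ x y : F, x ∈ o ∧ y ∈ o ∧ m = x • (1 : Matrix (Fin 2) (Fin 2) F) + y • α}

/-- The unit group `𝒪_L^×` (as a subset of `M₂(F)`). -/
def OLx {F : Type*} [Field F] (o : ValuationSubring F) (α : Matrix (Fin 2) (Fin 2) F) :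
    Set (Matrix (Fin 2) (Fin 2) F) :=
  {m | m ∈ OL o α ∧ ∃ m' ∈ OL o α, m * m' = 1 ∧ m' * m = 1}

/-- concrete form of elements of `OL` -/
def matE {F : Type*} [Field F] (a0 a1 x y : F) : Matrix (Fin 2) (Fin 2) F :=
  !![x, y; a0 * y, x + a1 * y]

section ScalSec

/-- unit predicate in the valuation subring -/
def Un {F : Type*} [Field F] (o : ValuationSubring F) (n : F) : Prop :=
  n ∈ o ∧ n⁻¹ ∈ o ∧ n ≠ 0

variable {F : Type*} [Field F] (o : ValuationSubring F)

lemma Un.mul {m n : F} (hm : Un o m) (hn : Un o n) : Un o (m * n) := by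
  refine ⟨mul_mem hm.1 hn.1, ?_, mul_ne_zero hm.2.2 hn.2.2⟩
  rw [mul_inv]; exact mul_mem hm.2.1 hn.2.1

lemma Un.inv {m : F} (hm : Un o m) : Un o m⁻¹ :=
  ⟨hm.2.1, by rw [inv_inv]; exact hm.1, inv_ne_zero hm.2.2⟩

lemma Un.neg {m : F} (hm : Un o m) : Un o (-m) :=
  ⟨neg_mem hm.1, by rw [inv_neg]; exact neg_mem hm.2.1, neg_ne_zero.2 hm.2.2⟩

lemma Un.one : Un o (1 : F) := ⟨one_mem _, by simp [one_mem _], one_ne_zero⟩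

variable [IsDiscreteValuationRing ↥o] {ϖ : F} (hϖo : ϖ ∈ o) (hϖ : Irreducible (⟨ϖ, hϖo⟩ : o))

include hϖ in
lemma unit_or_dvd {n : F} (hn : n ∈ o) : Un o n ∨ ∃ d ∈ o, n = ϖ * d := by
  by_cases h : IsUnit (⟨n, hn⟩ : o)
  · obtain ⟨y, hy⟩ := isUnit_iff_exists_inv.mp h
    have h1 : n * (y : F) = 1 := by
      have := congrArg (Subtype.val) hy; push_cast at this; exact this
    have hnz : n ≠ 0 := by rintro rfl; simp at h1
    left; exact ⟨hn, by rw [inv_eq_of_mul_eq_one_right h1]; exact y.2, hnz⟩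
  · have : (⟨n, hn⟩ : o) ∈ IsLocalRing.maximalIdeal o := h
    rw [hϖ.maximalIdeal_eq, Ideal.mem_span_singleton] at this
    obtain ⟨d, hd⟩ := this
    right
    refine ⟨d, d.2, ?_⟩
    have := congrArg (Subtype.val) hd; push_cast at this; exact this

include hϖ in
lemma not_unit_dvd {n : F} (hn : Un o n) : ¬ ∃ d ∈ o, n = ϖ * d := by
  rintro ⟨d, hd, rfl⟩
  apply hϖ.not_isUnit
  apply IsUnit.of_mul_eq_one (⟨d * (ϖ * d)⁻¹, mul_mem hd hn.2.1⟩ : o)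
  ext
  push_cast
  field_simp
  exact div_self hn.2.2

variable {a0 a1 : F} (ha0 : a0 ∈ o) (ha1 : a1 ∈ o) (ha0u : a0⁻¹ ∈ o) (ha0ne : a0 ≠ 0)
  (hirr : ∀ z : F, z ∈ o → ¬ ∃ d ∈ o, z ^ 2 - a1 * z - a0 = ϖ * d)

include hϖ ha0 ha1 hirr in
lemma Punit {w : F} (hw : w ∈ o) : Un o (w ^ 2 - a1 * w - a0) := by
  have hm : w ^ 2 - a1 * w - a0 ∈ o :=
    sub_mem (sub_mem (pow_mem hw 2) (mul_mem ha1 hw)) ha0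
  rcases unit_or_dvd o hϖo hϖ hm with h | h
  · exact h
  · exact absurd h (hirr w hw)

include hϖ in
lemma pair_unit {u v s t : F} (hu : u ∈ o) (hv : v ∈ o) (hs : s ∈ o) (ht : t ∈ o)
    (h : Un o (u * s - t * v)) : Un o u ∨ Un o v := by
  by_contra hc
  push_neg at hc
  rcases unit_or_dvd o hϖo hϖ hu with h1 | ⟨e, he, rfl⟩
  · exact hc.1 h1
  rcases unit_or_dvd o hϖo hϖ hv with h2 | ⟨f, hf, rfl⟩
  · exact hc.2 h2
  exact not_unit_dvd o hϖo hϖ h ⟨e * s - t * f,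
    sub_mem (mul_mem he hs) (mul_mem ht hf), by ring⟩

include hϖ ha0 ha1 hirr in
lemma UformA {x y : F} (hx : x ∈ o) (hy : y ∈ o) (h : Un o x ∨ Un o y) :
    Un o (x ^ 2 + a1 * x * y - a0 * y ^ 2) := by
  have hmem : x ^ 2 + a1 * x * y - a0 * y ^ 2 ∈ o := by
    refine sub_mem (add_mem ?_ ?_) ?_
    · simpa [pow_two] using mul_mem hx hx
    · exact mul_mem (mul_mem ha1 hx) hy
    · exact mul_mem ha0 (by exact pow_mem hy 2)
  rcases unit_or_dvd o hϖo hϖ hy with hyu | ⟨e, he, rfl⟩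
  · -- y is a unit
    have hw : -(x * y⁻¹) ∈ o := neg_mem (mul_mem hx hyu.2.1)
    have hP := Punit o hϖo hϖ ha0 ha1 hirr hw
    have hy0 : y ≠ 0 := hyu.2.2
    have heq : x ^ 2 + a1 * x * y - a0 * y ^ 2 =
        y * y * ((-(x * y⁻¹)) ^ 2 - a1 * (-(x * y⁻¹)) - a0) := by
      field_simp
      try ring
    rw [heq]
    exact (hyu.mul o hyu).mul o hP
  · -- y = ϖ e nonunit, so x is a unit
    have hxu : Un o x := by
      rcases h with h | h
      · exact h
      · exact absurd ⟨e, he, rfl⟩ (not_unit_dvd o hϖo hϖ h)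
    rcases unit_or_dvd o hϖo hϖ hmem with h1 | ⟨d, hd, hdEq⟩
    · exact h1
    exfalso
    apply not_unit_dvd o hϖo hϖ (hxu.mul o hxu)
    refine ⟨d - a1 * x * e + a0 * ϖ * e ^ 2, ?_, ?_⟩
    · refine add_mem (sub_mem hd (mul_mem (mul_mem ha1 hxu.1) he)) ?_
      exact mul_mem (mul_mem ha0 hϖo) (pow_mem he 2)
    · have : x * x = x ^ 2 := by ring
      rw [this]
      linear_combination hdEq

include hϖ ha0 ha1 hirr in
lemma UformB {a b : F} (ha : a ∈ o) (hb : b ∈ o) (h : Un o a ∨ Un o b) :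
    Un o (a0 * a ^ 2 + a1 * a * b - b ^ 2) := by
  have := (UformA o hϖo hϖ ha0 ha1 hirr hb (neg_mem ha)
    (h.symm.imp id (Un.neg o))).neg o
  have heq : a0 * a ^ 2 + a1 * a * b - b ^ 2 =
      -(b ^ 2 + a1 * b * (-a) - a0 * (-a) ^ 2) := by ring
  rw [heq]
  exact this

end ScalSec
section MatSec
variable {F : Type*} [Field F] (o : ValuationSubring F) {a0 a1 : F}

lemma matE_eq (x y : F) : matE a0 a1 x y = x • (1 : Matrix (Fin 2) (Fin 2) F) + y • !![0,1;a0,a1] := by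
  ext i j; fin_cases i <;> fin_cases j <;> simp [matE, Matrix.one_apply] <;> ring

lemma OL_iff {m : Matrix (Fin 2) (Fin 2) F} :
    m ∈ OL o !![0,1;a0,a1] ↔ ∃ x y : F, x ∈ o ∧ y ∈ o ∧ m = matE a0 a1 x y := by
  constructor
  · rintro ⟨x, y, hx, hy, rfl⟩; exact ⟨x, y, hx, hy, (matE_eq x y).symm⟩
  · rintro ⟨x, y, hx, hy, rfl⟩; exact ⟨x, y, hx, hy, matE_eq x y⟩

lemma matE_mul (x y x' y' : F) :
    matE a0 a1 x y * matE a0 a1 x' y' =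
      matE a0 a1 (x * x' + a0 * y * y') (x * y' + y * x' + a1 * y * y') := by
  ext i j; fin_cases i <;> fin_cases j <;> simp [matE, Matrix.mul_fin_two] <;> ring

lemma matE_one : matE a0 a1 1 0 = (1 : Matrix (Fin 2) (Fin 2) F) := by
  ext i j; fin_cases i <;> fin_cases j <;> simp [matE]

end MatSec

section OLxSec
variable {F : Type*} [Field F] (o : ValuationSubring F)
  [IsDiscreteValuationRing ↥o] {ϖ : F} (hϖo : ϖ ∈ o) (hϖ : Irreducible (⟨ϖ, hϖo⟩ : o))
  {a0 a1 : F} (ha0 : a0 ∈ o) (ha1 : a1 ∈ o) (ha0u : a0⁻¹ ∈ o) (ha0ne : a0 ≠ 0)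
  (hirr : ∀ z : F, z ∈ o → ¬ ∃ d ∈ o, z ^ 2 - a1 * z - a0 = ϖ * d)

include hϖo hϖ ha0 ha1 ha0u ha0ne hirr in
lemma mem_OLx {x y : F} (hx : x ∈ o) (hy : y ∈ o) (h : Un o x ∨ Un o y) :
    matE a0 a1 x y ∈ OLx o !![0,1;a0,a1] := by
  have hM : Un o (x ^ 2 + a1 * x * y - a0 * y ^ 2) :=
    UformA o hϖo hϖ ha0 ha1 hirr hx hy h
  have hMi := hM.inv o
  have hMne : x ^ 2 + a1 * x * y - a0 * y ^ 2 ≠ 0 := hM.2.2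
  refine ⟨(OL_iff o).2 ⟨x, y, hx, hy, rfl⟩, matE a0 a1 ((x + a1 * y) * (x ^ 2 + a1 * x * y - a0 * y ^ 2)⁻¹) (-y * (x ^ 2 + a1 * x * y - a0 * y ^ 2)⁻¹), ?_, ?_, ?_⟩
  · exact (OL_iff o).2 ⟨_, _, mul_mem (add_mem hx (mul_mem ha1 hy)) hMi.1,
      mul_mem (neg_mem hy) hMi.1, rfl⟩
  all_goals
    rw [matE_mul, show (1 : Matrix (Fin 2) (Fin 2) F) = matE a0 a1 1 0 from (matE_one).symm]
    refine congrArg₂ (matE a0 a1) ?_ ?_ <;>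
      first
        | linear_combination mul_inv_cancel₀ hMne
        | ring

lemma one_mem_OLx : (1 : Matrix (Fin 2) (Fin 2) F) ∈ OLx o !![0,1;a0,a1] := by
  have h1 : (1 : Matrix (Fin 2) (Fin 2) F) ∈ OL o !![0,1;a0,a1] :=
    (OL_iff o).2 ⟨1, 0, one_mem _, zero_mem _, matE_one.symm⟩
  exact ⟨h1, 1, h1, one_mul 1, one_mul 1⟩

include ha0 ha1 in
lemma OLx_mul {m n : Matrix (Fin 2) (Fin 2) F}
    (hm : m ∈ OLx o !![0,1;a0,a1]) (hn : n ∈ OLx o !![0,1;a0,a1]) :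
    m * n ∈ OLx o !![0,1;a0,a1] := by
  obtain ⟨hmOL, m', hm'OL, hmm', hm'm⟩ := hm
  obtain ⟨hnOL, n', hn'OL, hnn', hn'n⟩ := hn
  have mulOL : ∀ p q : Matrix (Fin 2) (Fin 2) F, p ∈ OL o !![0,1;a0,a1] →
      q ∈ OL o !![0,1;a0,a1] → p * q ∈ OL o !![0,1;a0,a1] := by
    intro p q hp hq
    obtain ⟨x, y, hx, hy, rfl⟩ := (OL_iff o).1 hp
    obtain ⟨x', y', hx', hy', rfl⟩ := (OL_iff o).1 hq
    rw [matE_mul]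
    exact (OL_iff o).2 ⟨_, _, add_mem (mul_mem hx hx') (mul_mem (mul_mem ha0 hy) hy'),
      add_mem (add_mem (mul_mem hx hy') (mul_mem hy hx')) (mul_mem (mul_mem ha1 hy) hy'), rfl⟩
  refine ⟨mulOL _ _ hmOL hnOL, n' * m', mulOL _ _ hn'OL hm'OL, ?_, ?_⟩
  · rw [mul_assoc, ← mul_assoc n n' m', hnn', one_mul, hmm']
  · rw [mul_assoc, ← mul_assoc m' m n, hm'm, one_mul, hn'n]

lemma OLx_inv {m : Matrix (Fin 2) (Fin 2) F} (hm : m ∈ OLx o !![0,1;a0,a1]) :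
    ∃ m' ∈ OLx o !![0,1;a0,a1], m * m' = 1 ∧ m' * m = 1 := by
  obtain ⟨hmOL, m', hm'OL, hmm', hm'm⟩ := hm
  exact ⟨m', ⟨hm'OL, m, hmOL, hm'm, hmm'⟩, hmm', hm'm⟩

include ha0 ha1 in
lemma OLx_sub_GLo : OLx o !![0,1;a0,a1] ⊆ GLo o := by
  have ent : ∀ p ∈ OL o !![0,1;a0,a1], ∀ i j, p i j ∈ o := by
    intro p hp i j
    obtain ⟨x, y, hx, hy, rfl⟩ := (OL_iff o).1 hp
    fin_cases i <;> fin_cases j <;>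
      simp [matE] <;>
      first
        | exact hx
        | exact hy
        | exact mul_mem ha0 hy
        | exact add_mem hx (mul_mem ha1 hy)
  rintro m ⟨hmOL, m', hm'OL, hmm', hm'm⟩
  exact ⟨ent m hmOL, m', ent m' hm'OL, hmm', hm'm⟩

lemma GLo_mul_s11 {m n : Matrix (Fin 2) (Fin 2) F} (hm : m ∈ GLo o) (hn : n ∈ GLo o) :
    m * n ∈ GLo o := by
  obtain ⟨hme, m', hm'e, hmm', hm'm⟩ := hm
  obtain ⟨hne, n', hn'e, hnn', hn'n⟩ := hn
  refine ⟨?_, n' * m', ?_, ?_, ?_⟩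
  · intro i j
    rw [Matrix.mul_apply]
    exact sum_mem fun l _ => mul_mem (hme i l) (hne l j)
  · intro i j
    rw [Matrix.mul_apply]
    exact sum_mem fun l _ => mul_mem (hn'e i l) (hm'e l j)
  · rw [mul_assoc, ← mul_assoc n n' m', hnn', one_mul, hmm']
  · rw [mul_assoc, ← mul_assoc m' m n, hm'm, one_mul, hn'n]

include hϖo hϖ ha0 ha1 ha0u ha0ne hirr in
lemma assemble (B : Set (Matrix (Fin 2) (Fin 2) F))
    (hBsub : B ⊆ GLo o)
    (hBmul : ∀ b ∈ B, ∀ c ∈ B, b * c ∈ B)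
    (hBinv : ∀ b ∈ B, ∃ c ∈ B, b * c = 1 ∧ c * b = 1)
    (hInt : OLx o !![0,1;a0,a1] ∩ B = {1})
    (hEx : ∀ k ∈ GLo o, ∃ u ∈ OLx o !![0,1;a0,a1], ∃ bm ∈ B, k = u * bm) :
    (GLo o = {g | ∃ u ∈ OLx o !![0,1;a0,a1], ∃ bm ∈ B, g = u * bm}) ∧
      (OLx o !![0,1;a0,a1] ∩ B = {1}) ∧
      (∀ k ∈ GLo o,
        ∃! p : Matrix (Fin 2) (Fin 2) F × Matrix (Fin 2) (Fin 2) F,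
          p.1 ∈ OLx o !![0,1;a0,a1] ∧ p.2 ∈ B ∧ k = p.1 * p.2) := by
  have uniq : ∀ u ∈ OLx o !![0,1;a0,a1], ∀ u' ∈ OLx o !![0,1;a0,a1],
      ∀ b ∈ B, ∀ b' ∈ B, u * b = u' * b' → u = u' ∧ b = b' := by
    intro u hu u' hu' b hb b' hb' heq
    obtain ⟨u'', hu'', hu'u'', hu''u'⟩ := OLx_inv o hu'
    obtain ⟨c, hc, hbc, hcb⟩ := hBinv b hb
    have h1 : (u'' * u) * b = b' := by
      rw [mul_assoc, heq, ← mul_assoc, hu''u', one_mul]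
    have h2 : u'' * u = b' * c := by
      rw [← h1, mul_assoc, hbc, mul_one]
    have hmem : u'' * u ∈ OLx o !![0,1;a0,a1] ∩ B := by
      refine ⟨OLx_mul o ha0 ha1 hu'' hu, ?_⟩
      rw [h2]; exact hBmul b' hb' c hc
    rw [hInt] at hmem
    have hone : u'' * u = 1 := hmem
    constructor
    · calc u = 1 * u := (one_mul u).symm
        _ = (u' * u'') * u := by rw [hu'u'']
        _ = u' * (u'' * u) := by rw [mul_assoc]
        _ = u' := by rw [hone, mul_one]
    · rw [← h1, hone, one_mul]
  refine ⟨?_, hInt, ?_⟩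
  · ext g
    constructor
    · intro hg; exact hEx g hg
    · rintro ⟨u, hu, bm, hbm, rfl⟩
      exact GLo_mul_s11 o (OLx_sub_GLo o ha0 ha1 hu) (hBsub hbm)
  · intro k hk
    obtain ⟨u, hu, bm, hbm, heq⟩ := hEx k hk
    refine ⟨(u, bm), ⟨hu, hbm, heq⟩, ?_⟩
    rintro ⟨u', b'⟩ ⟨hu', hb', heq'⟩
    have := uniq u' hu' u hu b' hb' bm hbm (heq ▸ heq'.symm)
    simp [Prod.ext_iff, this.1, this.2]

end OLxSec

section ProdSec
variable {F : Type*} [Field F] {a0 a1 : F}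

lemma mat2_eq {a b c d a' b' c' d' : F} (h1 : a = a') (h2 : b = b') (h3 : c = c')
    (h4 : d = d') : !![a, b; c, d] = !![a', b'; c', d'] := by rw [h1, h2, h3, h4]

lemma matE_mul_B1 (x y z z' : F) : matE a0 a1 x y * !![z, z'; 0, 1] =
    !![x * z, x * z' + y; a0 * y * z, a0 * y * z' + (x + a1 * y)] := by
  ext i j; fin_cases i <;> fin_cases j <;> simp [matE, Matrix.mul_fin_two] <;> ring

lemma matE_mul_B2 (x y z z' : F) : matE a0 a1 x y * !![1, z'; 0, z] =
    !![x, x * z' + y * z; a0 * y, a0 * y * z' + (x + a1 * y) * z] := by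
  ext i j; fin_cases i <;> fin_cases j <;> simp [matE, Matrix.mul_fin_two] <;> ring

lemma matE_mul_B3 (x y z z' : F) : matE a0 a1 x y * !![z, 0; z', 1] =
    !![x * z + y * z', y; a0 * y * z + (x + a1 * y) * z', x + a1 * y] := by
  ext i j; fin_cases i <;> fin_cases j <;> simp [matE, Matrix.mul_fin_two] <;> ring

lemma matE_mul_B4 (x y z z' : F) : matE a0 a1 x y * !![1, 0; z', z] =
    !![x + y * z', y * z; a0 * y + (x + a1 * y) * z', (x + a1 * y) * z] := by
  ext i j; fin_cases i <;> fin_cases j <;> simp [matE, Matrix.mul_fin_two] <;> ring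

end ProdSec

section BSec
variable {F : Type*} [Field F] (o : ValuationSubring F) {a0 a1 : F}

lemma det_unit {k : Matrix (Fin 2) (Fin 2) F} (hk : k ∈ GLo o) :
    Un o (k 0 0 * k 1 1 - k 0 1 * k 1 0) := by
  obtain ⟨hke, h, hhe, hkh, hhk⟩ := hk
  have hdet : (k 0 0 * k 1 1 - k 0 1 * k 1 0) * (h 0 0 * h 1 1 - h 0 1 * h 1 0) = 1 := by
    have := congrArg Matrix.det hkh
    rw [Matrix.det_mul, Matrix.det_one, Matrix.det_fin_two, Matrix.det_fin_two] at this
    linear_combination this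
  refine ⟨sub_mem (mul_mem (hke 0 0) (hke 1 1)) (mul_mem (hke 0 1) (hke 1 0)), ?_, ?_⟩
  · rw [inv_eq_of_mul_eq_one_right hdet]
    exact sub_mem (mul_mem (hhe 0 0) (hhe 1 1)) (mul_mem (hhe 0 1) (hhe 1 0))
  · exact left_ne_zero_of_mul_eq_one hdet

lemma subB1 : {m : Matrix (Fin 2) (Fin 2) F |
    ∃ z z' : F, z ∈ o ∧ z⁻¹ ∈ o ∧ z ≠ 0 ∧ z' ∈ o ∧ m = !![z, z'; 0, 1]} ⊆ GLo o := by
  rintro m ⟨z, z', hz, hzi, hzne, hz', rfl⟩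
  refine ⟨?_, !![z⁻¹, -(z' * z⁻¹); 0, 1], ?_, ?_, ?_⟩
  · intro i j
    fin_cases i <;> fin_cases j <;>
      simp only [Matrix.cons_val', Matrix.cons_val_zero, Matrix.cons_val_one,
        Matrix.head_cons, Matrix.empty_val', Matrix.cons_val_fin_one, Matrix.head_fin_const] <;>
      first
        | exact hz
        | exact hz'
        | exact zero_mem _
        | exact one_mem _
  · intro i j
    fin_cases i <;> fin_cases j <;>
      simp only [Matrix.cons_val', Matrix.cons_val_zero, Matrix.cons_val_one,
        Matrix.head_cons, Matrix.empty_val', Matrix.cons_val_fin_one, Matrix.head_fin_const] <;>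
      first
        | exact hzi
        | exact neg_mem (mul_mem hz' hzi)
        | exact zero_mem _
        | exact one_mem _
  all_goals
    ext i j
    fin_cases i <;> fin_cases j <;>
      simp [Matrix.mul_fin_two, Matrix.one_fin_two] <;>
      field_simp <;> ring

lemma mulB1 : ∀ b ∈ {m : Matrix (Fin 2) (Fin 2) F |
      ∃ z z' : F, z ∈ o ∧ z⁻¹ ∈ o ∧ z ≠ 0 ∧ z' ∈ o ∧ m = !![z, z'; 0, 1]},
    ∀ c ∈ {m : Matrix (Fin 2) (Fin 2) F |
      ∃ z z' : F, z ∈ o ∧ z⁻¹ ∈ o ∧ z ≠ 0 ∧ z' ∈ o ∧ m = !![z, z'; 0, 1]},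
    b * c ∈ {m : Matrix (Fin 2) (Fin 2) F |
      ∃ z z' : F, z ∈ o ∧ z⁻¹ ∈ o ∧ z ≠ 0 ∧ z' ∈ o ∧ m = !![z, z'; 0, 1]} := by
  rintro b ⟨z, z', hz, hzi, hzne, hz', rfl⟩ c ⟨w, w', hw, hwi, hwne, hw', rfl⟩
  refine ⟨z * w, z * w' + z', mul_mem hz hw, by rw [mul_inv]; exact mul_mem hzi hwi,
    mul_ne_zero hzne hwne, ?_, ?_⟩
  · first
      | exact add_mem (mul_mem hz hw') hz'
      | exact add_mem hw' (mul_mem hz' hw)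
      | exact add_mem (mul_mem hz' hw) hw'
      | exact add_mem hz' (mul_mem hz hw')
  · ext i j
    fin_cases i <;> fin_cases j <;> simp [Matrix.mul_fin_two] <;> ring

lemma invB1 : ∀ b ∈ {m : Matrix (Fin 2) (Fin 2) F |
      ∃ z z' : F, z ∈ o ∧ z⁻¹ ∈ o ∧ z ≠ 0 ∧ z' ∈ o ∧ m = !![z, z'; 0, 1]},
    ∃ c ∈ {m : Matrix (Fin 2) (Fin 2) F |
      ∃ z z' : F, z ∈ o ∧ z⁻¹ ∈ o ∧ z ≠ 0 ∧ z' ∈ o ∧ m = !![z, z'; 0, 1]}, b * c = 1 ∧ c * b = 1 := by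
  rintro b ⟨z, z', hz, hzi, hzne, hz', rfl⟩
  refine ⟨!![z⁻¹, -(z' * z⁻¹); 0, 1], ⟨z⁻¹, -(z' * z⁻¹), hzi, by rw [inv_inv]; exact hz,
    inv_ne_zero hzne, neg_mem (mul_mem hz' hzi), rfl⟩, ?_, ?_⟩
  all_goals
    ext i j
    fin_cases i <;> fin_cases j <;>
      simp [Matrix.mul_fin_two, Matrix.one_fin_two] <;>
      field_simp <;> ring

lemma subB2 : {m : Matrix (Fin 2) (Fin 2) F |
    ∃ z z' : F, z ∈ o ∧ z⁻¹ ∈ o ∧ z ≠ 0 ∧ z' ∈ o ∧ m = !![1, z'; 0, z]} ⊆ GLo o := by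
  rintro m ⟨z, z', hz, hzi, hzne, hz', rfl⟩
  refine ⟨?_, !![1, -(z' * z⁻¹); 0, z⁻¹], ?_, ?_, ?_⟩
  · intro i j
    fin_cases i <;> fin_cases j <;>
      simp only [Matrix.cons_val', Matrix.cons_val_zero, Matrix.cons_val_one,
        Matrix.head_cons, Matrix.empty_val', Matrix.cons_val_fin_one, Matrix.head_fin_const] <;>
      first
        | exact hz
        | exact hz'
        | exact zero_mem _
        | exact one_mem _
  · intro i j
    fin_cases i <;> fin_cases j <;>
      simp only [Matrix.cons_val', Matrix.cons_val_zero, Matrix.cons_val_one,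
        Matrix.head_cons, Matrix.empty_val', Matrix.cons_val_fin_one, Matrix.head_fin_const] <;>
      first
        | exact hzi
        | exact neg_mem (mul_mem hz' hzi)
        | exact zero_mem _
        | exact one_mem _
  all_goals
    ext i j
    fin_cases i <;> fin_cases j <;>
      simp [Matrix.mul_fin_two, Matrix.one_fin_two] <;>
      field_simp <;> ring

lemma mulB2 : ∀ b ∈ {m : Matrix (Fin 2) (Fin 2) F |
      ∃ z z' : F, z ∈ o ∧ z⁻¹ ∈ o ∧ z ≠ 0 ∧ z' ∈ o ∧ m = !![1, z'; 0, z]},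
    ∀ c ∈ {m : Matrix (Fin 2) (Fin 2) F |
      ∃ z z' : F, z ∈ o ∧ z⁻¹ ∈ o ∧ z ≠ 0 ∧ z' ∈ o ∧ m = !![1, z'; 0, z]},
    b * c ∈ {m : Matrix (Fin 2) (Fin 2) F |
      ∃ z z' : F, z ∈ o ∧ z⁻¹ ∈ o ∧ z ≠ 0 ∧ z' ∈ o ∧ m = !![1, z'; 0, z]} := by
  rintro b ⟨z, z', hz, hzi, hzne, hz', rfl⟩ c ⟨w, w', hw, hwi, hwne, hw', rfl⟩
  refine ⟨z * w, w' + z' * w, mul_mem hz hw, by rw [mul_inv]; exact mul_mem hzi hwi,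
    mul_ne_zero hzne hwne, ?_, ?_⟩
  · first
      | exact add_mem (mul_mem hz hw') hz'
      | exact add_mem hw' (mul_mem hz' hw)
      | exact add_mem (mul_mem hz' hw) hw'
      | exact add_mem hz' (mul_mem hz hw')
  · ext i j
    fin_cases i <;> fin_cases j <;> simp [Matrix.mul_fin_two] <;> ring

lemma invB2 : ∀ b ∈ {m : Matrix (Fin 2) (Fin 2) F |
      ∃ z z' : F, z ∈ o ∧ z⁻¹ ∈ o ∧ z ≠ 0 ∧ z' ∈ o ∧ m = !![1, z'; 0, z]},
    ∃ c ∈ {m : Matrix (Fin 2) (Fin 2) F |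
      ∃ z z' : F, z ∈ o ∧ z⁻¹ ∈ o ∧ z ≠ 0 ∧ z' ∈ o ∧ m = !![1, z'; 0, z]}, b * c = 1 ∧ c * b = 1 := by
  rintro b ⟨z, z', hz, hzi, hzne, hz', rfl⟩
  refine ⟨!![1, -(z' * z⁻¹); 0, z⁻¹], ⟨z⁻¹, -(z' * z⁻¹), hzi, by rw [inv_inv]; exact hz,
    inv_ne_zero hzne, neg_mem (mul_mem hz' hzi), rfl⟩, ?_, ?_⟩
  all_goals
    ext i j
    fin_cases i <;> fin_cases j <;>
      simp [Matrix.mul_fin_two, Matrix.one_fin_two] <;>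
      field_simp <;> ring

lemma subB3 : {m : Matrix (Fin 2) (Fin 2) F |
    ∃ z z' : F, z ∈ o ∧ z⁻¹ ∈ o ∧ z ≠ 0 ∧ z' ∈ o ∧ m = !![z, 0; z', 1]} ⊆ GLo o := by
  rintro m ⟨z, z', hz, hzi, hzne, hz', rfl⟩
  refine ⟨?_, !![z⁻¹, 0; -(z' * z⁻¹), 1], ?_, ?_, ?_⟩
  · intro i j
    fin_cases i <;> fin_cases j <;>
      simp only [Matrix.cons_val', Matrix.cons_val_zero, Matrix.cons_val_one,
        Matrix.head_cons, Matrix.empty_val', Matrix.cons_val_fin_one, Matrix.head_fin_const] <;>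
      first
        | exact hz
        | exact hz'
        | exact zero_mem _
        | exact one_mem _
  · intro i j
    fin_cases i <;> fin_cases j <;>
      simp only [Matrix.cons_val', Matrix.cons_val_zero, Matrix.cons_val_one,
        Matrix.head_cons, Matrix.empty_val', Matrix.cons_val_fin_one, Matrix.head_fin_const] <;>
      first
        | exact hzi
        | exact neg_mem (mul_mem hz' hzi)
        | exact zero_mem _
        | exact one_mem _
  all_goals
    ext i j
    fin_cases i <;> fin_cases j <;>
      simp [Matrix.mul_fin_two, Matrix.one_fin_two] <;>
      field_simp <;> ring

lemma mulB3 : ∀ b ∈ {m : Matrix (Fin 2) (Fin 2) F |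
      ∃ z z' : F, z ∈ o ∧ z⁻¹ ∈ o ∧ z ≠ 0 ∧ z' ∈ o ∧ m = !![z, 0; z', 1]},
    ∀ c ∈ {m : Matrix (Fin 2) (Fin 2) F |
      ∃ z z' : F, z ∈ o ∧ z⁻¹ ∈ o ∧ z ≠ 0 ∧ z' ∈ o ∧ m = !![z, 0; z', 1]},
    b * c ∈ {m : Matrix (Fin 2) (Fin 2) F |
      ∃ z z' : F, z ∈ o ∧ z⁻¹ ∈ o ∧ z ≠ 0 ∧ z' ∈ o ∧ m = !![z, 0; z', 1]} := by
  rintro b ⟨z, z', hz, hzi, hzne, hz', rfl⟩ c ⟨w, w', hw, hwi, hwne, hw', rfl⟩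
  refine ⟨z * w, z' * w + w', mul_mem hz hw, by rw [mul_inv]; exact mul_mem hzi hwi,
    mul_ne_zero hzne hwne, ?_, ?_⟩
  · first
      | exact add_mem (mul_mem hz hw') hz'
      | exact add_mem hw' (mul_mem hz' hw)
      | exact add_mem (mul_mem hz' hw) hw'
      | exact add_mem hz' (mul_mem hz hw')
  · ext i j
    fin_cases i <;> fin_cases j <;> simp [Matrix.mul_fin_two] <;> ring

lemma invB3 : ∀ b ∈ {m : Matrix (Fin 2) (Fin 2) F |
      ∃ z z' : F, z ∈ o ∧ z⁻¹ ∈ o ∧ z ≠ 0 ∧ z' ∈ o ∧ m = !![z, 0; z', 1]},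
    ∃ c ∈ {m : Matrix (Fin 2) (Fin 2) F |
      ∃ z z' : F, z ∈ o ∧ z⁻¹ ∈ o ∧ z ≠ 0 ∧ z' ∈ o ∧ m = !![z, 0; z', 1]}, b * c = 1 ∧ c * b = 1 := by
  rintro b ⟨z, z', hz, hzi, hzne, hz', rfl⟩
  refine ⟨!![z⁻¹, 0; -(z' * z⁻¹), 1], ⟨z⁻¹, -(z' * z⁻¹), hzi, by rw [inv_inv]; exact hz,
    inv_ne_zero hzne, neg_mem (mul_mem hz' hzi), rfl⟩, ?_, ?_⟩
  all_goals
    ext i j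
    fin_cases i <;> fin_cases j <;>
      simp [Matrix.mul_fin_two, Matrix.one_fin_two] <;>
      field_simp <;> ring

lemma subB4 : {m : Matrix (Fin 2) (Fin 2) F |
    ∃ z z' : F, z ∈ o ∧ z⁻¹ ∈ o ∧ z ≠ 0 ∧ z' ∈ o ∧ m = !![1, 0; z', z]} ⊆ GLo o := by
  rintro m ⟨z, z', hz, hzi, hzne, hz', rfl⟩
  refine ⟨?_, !![1, 0; -(z' * z⁻¹), z⁻¹], ?_, ?_, ?_⟩
  · intro i j
    fin_cases i <;> fin_cases j <;>
      simp only [Matrix.cons_val', Matrix.cons_val_zero, Matrix.cons_val_one,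
        Matrix.head_cons, Matrix.empty_val', Matrix.cons_val_fin_one, Matrix.head_fin_const] <;>
      first
        | exact hz
        | exact hz'
        | exact zero_mem _
        | exact one_mem _
  · intro i j
    fin_cases i <;> fin_cases j <;>
      simp only [Matrix.cons_val', Matrix.cons_val_zero, Matrix.cons_val_one,
        Matrix.head_cons, Matrix.empty_val', Matrix.cons_val_fin_one, Matrix.head_fin_const] <;>
      first
        | exact hzi
        | exact neg_mem (mul_mem hz' hzi)
        | exact zero_mem _
        | exact one_mem _
  all_goals
    ext i j
    fin_cases i <;> fin_cases j <;>
      simp [Matrix.mul_fin_two, Matrix.one_fin_two] <;>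
      field_simp <;> ring

lemma mulB4 : ∀ b ∈ {m : Matrix (Fin 2) (Fin 2) F |
      ∃ z z' : F, z ∈ o ∧ z⁻¹ ∈ o ∧ z ≠ 0 ∧ z' ∈ o ∧ m = !![1, 0; z', z]},
    ∀ c ∈ {m : Matrix (Fin 2) (Fin 2) F |
      ∃ z z' : F, z ∈ o ∧ z⁻¹ ∈ o ∧ z ≠ 0 ∧ z' ∈ o ∧ m = !![1, 0; z', z]},
    b * c ∈ {m : Matrix (Fin 2) (Fin 2) F |
      ∃ z z' : F, z ∈ o ∧ z⁻¹ ∈ o ∧ z ≠ 0 ∧ z' ∈ o ∧ m = !![1, 0; z', z]} := by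
  rintro b ⟨z, z', hz, hzi, hzne, hz', rfl⟩ c ⟨w, w', hw, hwi, hwne, hw', rfl⟩
  refine ⟨z * w, z' + z * w', mul_mem hz hw, by rw [mul_inv]; exact mul_mem hzi hwi,
    mul_ne_zero hzne hwne, ?_, ?_⟩
  · first
      | exact add_mem (mul_mem hz hw') hz'
      | exact add_mem hw' (mul_mem hz' hw)
      | exact add_mem (mul_mem hz' hw) hw'
      | exact add_mem hz' (mul_mem hz hw')
  · ext i j
    fin_cases i <;> fin_cases j <;> simp [Matrix.mul_fin_two] <;> ring

lemma invB4 : ∀ b ∈ {m : Matrix (Fin 2) (Fin 2) F |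
      ∃ z z' : F, z ∈ o ∧ z⁻¹ ∈ o ∧ z ≠ 0 ∧ z' ∈ o ∧ m = !![1, 0; z', z]},
    ∃ c ∈ {m : Matrix (Fin 2) (Fin 2) F |
      ∃ z z' : F, z ∈ o ∧ z⁻¹ ∈ o ∧ z ≠ 0 ∧ z' ∈ o ∧ m = !![1, 0; z', z]}, b * c = 1 ∧ c * b = 1 := by
  rintro b ⟨z, z', hz, hzi, hzne, hz', rfl⟩
  refine ⟨!![1, 0; -(z' * z⁻¹), z⁻¹], ⟨z⁻¹, -(z' * z⁻¹), hzi, by rw [inv_inv]; exact hz,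
    inv_ne_zero hzne, neg_mem (mul_mem hz' hzi), rfl⟩, ?_, ?_⟩
  all_goals
    ext i j
    fin_cases i <;> fin_cases j <;>
      simp [Matrix.mul_fin_two, Matrix.one_fin_two] <;>
      field_simp <;> ring

end BSec

section IntSec
variable {F : Type*} [Field F] (o : ValuationSubring F) [IsDiscreteValuationRing ↥o] {a0 a1 : F}
  (ha0ne : a0 ≠ 0)

include ha0ne in
lemma intB1 : OLx o !![0,1;a0,a1] ∩ {m : Matrix (Fin 2) (Fin 2) F |
    ∃ z z' : F, z ∈ o ∧ z⁻¹ ∈ o ∧ z ≠ 0 ∧ z' ∈ o ∧ m = !![z, z'; 0, 1]} = {1} := by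
  ext m
  simp only [Set.mem_inter_iff, Set.mem_singleton_iff, Set.mem_setOf_eq]
  constructor
  · rintro ⟨⟨hOL, -⟩, z, z', hz, hzi, hzne, hz', rfl⟩
    obtain ⟨x, y, hx, hy, hEq⟩ := (OL_iff o).1 hOL
    have e00 := congrFun (congrFun hEq 0) 0
    have e01 := congrFun (congrFun hEq 0) 1
    have e10 := congrFun (congrFun hEq 1) 0
    have e11 := congrFun (congrFun hEq 1) 1
    simp [matE] at e00 e01 e10 e11
    have hy0 : y = 0 := by
      first
        | exact e10.resolve_left ha0ne
        | exact e01.symm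
    have hx1 : x = 1 := by
      first
        | exact e00.symm
        | (rw [hy0] at e11; simpa using e11.symm)
    rw [hEq, hx1, hy0]
    exact matE_one
  · rintro rfl
    refine ⟨one_mem_OLx o, 1, 0, one_mem _, by rw [inv_one]; exact one_mem _,
      one_ne_zero, zero_mem _, ?_⟩
    exact Matrix.one_fin_two

include ha0ne in
lemma intB2 : OLx o !![0,1;a0,a1] ∩ {m : Matrix (Fin 2) (Fin 2) F |
    ∃ z z' : F, z ∈ o ∧ z⁻¹ ∈ o ∧ z ≠ 0 ∧ z' ∈ o ∧ m = !![1, z'; 0, z]} = {1} := by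
  ext m
  simp only [Set.mem_inter_iff, Set.mem_singleton_iff, Set.mem_setOf_eq]
  constructor
  · rintro ⟨⟨hOL, -⟩, z, z', hz, hzi, hzne, hz', rfl⟩
    obtain ⟨x, y, hx, hy, hEq⟩ := (OL_iff o).1 hOL
    have e00 := congrFun (congrFun hEq 0) 0
    have e01 := congrFun (congrFun hEq 0) 1
    have e10 := congrFun (congrFun hEq 1) 0
    have e11 := congrFun (congrFun hEq 1) 1
    simp [matE] at e00 e01 e10 e11
    have hy0 : y = 0 := by
      first
        | exact e10.resolve_left ha0ne
        | exact e01.symm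
    have hx1 : x = 1 := by
      first
        | exact e00.symm
        | (rw [hy0] at e11; simpa using e11.symm)
    rw [hEq, hx1, hy0]
    exact matE_one
  · rintro rfl
    refine ⟨one_mem_OLx o, 1, 0, one_mem _, by rw [inv_one]; exact one_mem _,
      one_ne_zero, zero_mem _, ?_⟩
    exact Matrix.one_fin_two

include ha0ne in
lemma intB3 : OLx o !![0,1;a0,a1] ∩ {m : Matrix (Fin 2) (Fin 2) F |
    ∃ z z' : F, z ∈ o ∧ z⁻¹ ∈ o ∧ z ≠ 0 ∧ z' ∈ o ∧ m = !![z, 0; z', 1]} = {1} := by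
  ext m
  simp only [Set.mem_inter_iff, Set.mem_singleton_iff, Set.mem_setOf_eq]
  constructor
  · rintro ⟨⟨hOL, -⟩, z, z', hz, hzi, hzne, hz', rfl⟩
    obtain ⟨x, y, hx, hy, hEq⟩ := (OL_iff o).1 hOL
    have e00 := congrFun (congrFun hEq 0) 0
    have e01 := congrFun (congrFun hEq 0) 1
    have e10 := congrFun (congrFun hEq 1) 0
    have e11 := congrFun (congrFun hEq 1) 1
    simp [matE] at e00 e01 e10 e11
    have hy0 : y = 0 := by
      first
        | exact e10.resolve_left ha0ne
        | exact e01.symm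
    have hx1 : x = 1 := by
      first
        | exact e00.symm
        | (rw [hy0] at e11; simpa using e11.symm)
    rw [hEq, hx1, hy0]
    exact matE_one
  · rintro rfl
    refine ⟨one_mem_OLx o, 1, 0, one_mem _, by rw [inv_one]; exact one_mem _,
      one_ne_zero, zero_mem _, ?_⟩
    exact Matrix.one_fin_two

include ha0ne in
lemma intB4 : OLx o !![0,1;a0,a1] ∩ {m : Matrix (Fin 2) (Fin 2) F |
    ∃ z z' : F, z ∈ o ∧ z⁻¹ ∈ o ∧ z ≠ 0 ∧ z' ∈ o ∧ m = !![1, 0; z', z]} = {1} := by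
  ext m
  simp only [Set.mem_inter_iff, Set.mem_singleton_iff, Set.mem_setOf_eq]
  constructor
  · rintro ⟨⟨hOL, -⟩, z, z', hz, hzi, hzne, hz', rfl⟩
    obtain ⟨x, y, hx, hy, hEq⟩ := (OL_iff o).1 hOL
    have e00 := congrFun (congrFun hEq 0) 0
    have e01 := congrFun (congrFun hEq 0) 1
    have e10 := congrFun (congrFun hEq 1) 0
    have e11 := congrFun (congrFun hEq 1) 1
    simp [matE] at e00 e01 e10 e11
    have hy0 : y = 0 := by
      first
        | exact e10.resolve_left ha0ne
        | exact e01.symm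
    have hx1 : x = 1 := by
      first
        | exact e00.symm
        | (rw [hy0] at e11; simpa using e11.symm)
    rw [hEq, hx1, hy0]
    exact matE_one
  · rintro rfl
    refine ⟨one_mem_OLx o, 1, 0, one_mem _, by rw [inv_one]; exact one_mem _,
      one_ne_zero, zero_mem _, ?_⟩
    exact Matrix.one_fin_two

end IntSec

section ExSec
variable {F : Type*} [Field F] (o : ValuationSubring F)
  [IsDiscreteValuationRing ↥o] {ϖ : F} (hϖo : ϖ ∈ o) (hϖ : Irreducible (⟨ϖ, hϖo⟩ : o))
  {a0 a1 : F} (ha0 : a0 ∈ o) (ha1 : a1 ∈ o) (ha0u : a0⁻¹ ∈ o) (ha0ne : a0 ≠ 0)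
  (hirr : ∀ z : F, z ∈ o → ¬ ∃ d ∈ o, z ^ 2 - a1 * z - a0 = ϖ * d)

include hϖo hϖ ha0 ha1 ha0u ha0ne hirr in
lemma exB1 {a b c d : F} (ha : a ∈ o) (hb : b ∈ o) (hc : c ∈ o) (hd : d ∈ o)
    (hD : Un o (a * d - c * b)) (hab : Un o a ∨ Un o b) :
    ∃ u ∈ OLx o !![0,1;a0,a1],
      ∃ bm ∈ {m : Matrix (Fin 2) (Fin 2) F |
        ∃ z z' : F, z ∈ o ∧ z⁻¹ ∈ o ∧ z ≠ 0 ∧ z' ∈ o ∧ m = !![z, z'; 0, 1]},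
      !![a, c; b, d] = u * bm := by
  have hA0 : Un o a0 := ⟨ha0, ha0u, ha0ne⟩
  have hN : Un o (a0 * a ^ 2 + a1 * a * b - b ^ 2) := UformB o hϖo hϖ ha0 ha1 hirr ha hb hab
  have hADi := (hA0.mul o hD).inv o
  have hz : Un o ((a0 * a ^ 2 + a1 * a * b - b ^ 2) * (a0 * (a * d - c * b))⁻¹) :=
    hN.mul o hADi
  have hzi := hz.inv o
  have hazi := (hA0.mul o hz).inv o
  have hxy : Un o (a * ((a0 * a ^ 2 + a1 * a * b - b ^ 2) * (a0 * (a * d - c * b))⁻¹)⁻¹) ∨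
      Un o (b * (a0 * ((a0 * a ^ 2 + a1 * a * b - b ^ 2) * (a0 * (a * d - c * b))⁻¹))⁻¹) := by
    rcases hab with h | h
    · exact Or.inl (h.mul o hzi)
    · exact Or.inr (h.mul o hazi)
  have hz'm : (a0 * a * c + a1 * b * c - b * d) * (a0 * (a * d - c * b))⁻¹ ∈ o :=
    mul_mem (sub_mem (add_mem (mul_mem (mul_mem ha0 ha) hc)
      (mul_mem (mul_mem ha1 hb) hc)) (mul_mem hb hd)) hADi.1
  refine ⟨matE a0 a1 _ _,
    mem_OLx o hϖo hϖ ha0 ha1 ha0u ha0ne hirr (mul_mem ha hzi.1) (mul_mem hb hazi.1) hxy,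
    !![(a0 * a ^ 2 + a1 * a * b - b ^ 2) * (a0 * (a * d - c * b))⁻¹,
       (a0 * a * c + a1 * b * c - b * d) * (a0 * (a * d - c * b))⁻¹; 0, 1],
    ⟨_, _, hz.1, hz.2.1, hz.2.2, hz'm, rfl⟩, ?_⟩
  have hDne : a * d - c * b ≠ 0 := hD.2.2
  have hNne : a0 * a ^ 2 + a1 * a * b - b ^ 2 ≠ 0 := hN.2.2
  rw [matE_mul_B1]
  generalize hN' : a0 * a ^ 2 + a1 * a * b - b ^ 2 = N at hNne ⊢
  generalize hD' : a * d - c * b = D at hDne ⊢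
  refine mat2_eq ?_ ?_ ?_ ?_ <;> field_simp <;> subst hN' hD' <;> ring
end ExSec

section ExSec2
variable {F : Type*} [Field F] (o : ValuationSubring F)
  [IsDiscreteValuationRing ↥o] {ϖ : F} (hϖo : ϖ ∈ o) (hϖ : Irreducible (⟨ϖ, hϖo⟩ : o))
  {a0 a1 : F} (ha0 : a0 ∈ o) (ha1 : a1 ∈ o) (ha0u : a0⁻¹ ∈ o) (ha0ne : a0 ≠ 0)
  (hirr : ∀ z : F, z ∈ o → ¬ ∃ d ∈ o, z ^ 2 - a1 * z - a0 = ϖ * d)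

include hϖo hϖ ha0 ha1 ha0u ha0ne hirr in
lemma exB2 {a b c d : F} (ha : a ∈ o) (hb : b ∈ o) (hc : c ∈ o) (hd : d ∈ o)
    (hD : Un o (a * d - c * b)) (hab : Un o a ∨ Un o b) :
    ∃ u ∈ OLx o !![0,1;a0,a1],
      ∃ bm ∈ {m : Matrix (Fin 2) (Fin 2) F |
        ∃ z z' : F, z ∈ o ∧ z⁻¹ ∈ o ∧ z ≠ 0 ∧ z' ∈ o ∧ m = !![1, z'; 0, z]},
      !![a, c; b, d] = u * bm := by
  have hA0 : Un o a0 := ⟨ha0, ha0u, ha0ne⟩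
  have hN : Un o (a0 * a ^ 2 + a1 * a * b - b ^ 2) := UformB o hϖo hϖ ha0 ha1 hirr ha hb hab
  have hNi := hN.inv o
  have hz : Un o ((a * d - c * b) * a0 * (a0 * a ^ 2 + a1 * a * b - b ^ 2)⁻¹) :=
    (hD.mul o hA0).mul o hNi
  have hxy : Un o a ∨ Un o (b * a0⁻¹) :=
    hab.imp id (fun h => h.mul o (hA0.inv o))
  have hz'm : (a0 * a * c + a1 * b * c - b * d) * (a0 * a ^ 2 + a1 * a * b - b ^ 2)⁻¹ ∈ o :=
    mul_mem (sub_mem (add_mem (mul_mem (mul_mem ha0 ha) hc)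
      (mul_mem (mul_mem ha1 hb) hc)) (mul_mem hb hd)) hNi.1
  refine ⟨matE a0 a1 a (b * a0⁻¹),
    mem_OLx o hϖo hϖ ha0 ha1 ha0u ha0ne hirr ha (mul_mem hb ha0u) hxy,
    !![1, (a0 * a * c + a1 * b * c - b * d) * (a0 * a ^ 2 + a1 * a * b - b ^ 2)⁻¹;
       0, (a * d - c * b) * a0 * (a0 * a ^ 2 + a1 * a * b - b ^ 2)⁻¹],
    ⟨_, _, hz.1, hz.2.1, hz.2.2, hz'm, rfl⟩, ?_⟩
  have hDne : a * d - c * b ≠ 0 := hD.2.2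
  have hNne : a0 * a ^ 2 + a1 * a * b - b ^ 2 ≠ 0 := hN.2.2
  rw [matE_mul_B2]
  generalize hN' : a0 * a ^ 2 + a1 * a * b - b ^ 2 = N at hNne ⊢
  generalize hD' : a * d - c * b = D at hDne ⊢
  refine mat2_eq ?_ ?_ ?_ ?_ <;> field_simp <;> subst hN' hD' <;> ring

include hϖo hϖ ha0 ha1 ha0u ha0ne hirr in
lemma exB3 {a b c d : F} (ha : a ∈ o) (hb : b ∈ o) (hc : c ∈ o) (hd : d ∈ o)
    (hD : Un o (a * d - c * b)) (hcd : Un o c ∨ Un o d) :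
    ∃ u ∈ OLx o !![0,1;a0,a1],
      ∃ bm ∈ {m : Matrix (Fin 2) (Fin 2) F |
        ∃ z z' : F, z ∈ o ∧ z⁻¹ ∈ o ∧ z ≠ 0 ∧ z' ∈ o ∧ m = !![z, 0; z', 1]},
      !![a, c; b, d] = u * bm := by
  have hx : d - a1 * c ∈ o := sub_mem hd (mul_mem ha1 hc)
  have hxy : Un o (d - a1 * c) ∨ Un o c := by
    rcases hcd with h | h
    · exact Or.inr h
    · refine pair_unit o hϖo hϖ hx hc (one_mem _) (neg_mem ha1) ?_
      rw [show (d - a1 * c) * 1 - -a1 * c = d by ring]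
      exact h
  have hM : Un o ((d - a1 * c) ^ 2 + a1 * (d - a1 * c) * c - a0 * c ^ 2) :=
    UformA o hϖo hϖ ha0 ha1 hirr hx hc hxy
  have hMi := hM.inv o
  have hz : Un o ((a * d - c * b) * ((d - a1 * c) ^ 2 + a1 * (d - a1 * c) * c - a0 * c ^ 2)⁻¹) :=
    hD.mul o hMi
  have hz'm : ((d - a1 * c) * b - a0 * c * a) *
      ((d - a1 * c) ^ 2 + a1 * (d - a1 * c) * c - a0 * c ^ 2)⁻¹ ∈ o :=
    mul_mem (sub_mem (mul_mem hx hb) (mul_mem (mul_mem ha0 hc) ha)) hMi.1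
  refine ⟨matE a0 a1 (d - a1 * c) c,
    mem_OLx o hϖo hϖ ha0 ha1 ha0u ha0ne hirr hx hc hxy,
    !![(a * d - c * b) * ((d - a1 * c) ^ 2 + a1 * (d - a1 * c) * c - a0 * c ^ 2)⁻¹, 0;
       ((d - a1 * c) * b - a0 * c * a) *
         ((d - a1 * c) ^ 2 + a1 * (d - a1 * c) * c - a0 * c ^ 2)⁻¹, 1],
    ⟨_, _, hz.1, hz.2.1, hz.2.2, hz'm, rfl⟩, ?_⟩
  have hMne : (d - a1 * c) ^ 2 + a1 * (d - a1 * c) * c - a0 * c ^ 2 ≠ 0 := hM.2.2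
  rw [matE_mul_B3]
  generalize hM' : (d - a1 * c) ^ 2 + a1 * (d - a1 * c) * c - a0 * c ^ 2 = M at hMne ⊢
  refine mat2_eq ?_ ?_ ?_ ?_ <;> field_simp <;> subst hM' <;> ring

include hϖo hϖ ha0 ha1 ha0u ha0ne hirr in
lemma exB4 {a b c d : F} (ha : a ∈ o) (hb : b ∈ o) (hc : c ∈ o) (hd : d ∈ o)
    (hD : Un o (a * d - c * b)) (hcd : Un o c ∨ Un o d) :
    ∃ u ∈ OLx o !![0,1;a0,a1],
      ∃ bm ∈ {m : Matrix (Fin 2) (Fin 2) F |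
        ∃ z z' : F, z ∈ o ∧ z⁻¹ ∈ o ∧ z ≠ 0 ∧ z' ∈ o ∧ m = !![1, 0; z', z]},
      !![a, c; b, d] = u * bm := by
  have hx : d - a1 * c ∈ o := sub_mem hd (mul_mem ha1 hc)
  have hxy0 : Un o (d - a1 * c) ∨ Un o c := by
    rcases hcd with h | h
    · exact Or.inr h
    · refine pair_unit o hϖo hϖ hx hc (one_mem _) (neg_mem ha1) ?_
      rw [show (d - a1 * c) * 1 - -a1 * c = d by ring]
      exact h
  have hM : Un o ((d - a1 * c) ^ 2 + a1 * (d - a1 * c) * c - a0 * c ^ 2) :=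
    UformA o hϖo hϖ ha0 ha1 hirr hx hc hxy0
  have hDi := hD.inv o
  have hz : Un o (((d - a1 * c) ^ 2 + a1 * (d - a1 * c) * c - a0 * c ^ 2) * (a * d - c * b)⁻¹) :=
    hM.mul o hDi
  have hzi := hz.inv o
  have hxy : Un o ((d - a1 * c) * (((d - a1 * c) ^ 2 + a1 * (d - a1 * c) * c - a0 * c ^ 2) * (a * d - c * b)⁻¹)⁻¹) ∨
      Un o (c * (((d - a1 * c) ^ 2 + a1 * (d - a1 * c) * c - a0 * c ^ 2) * (a * d - c * b)⁻¹)⁻¹) :=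
    hxy0.imp (fun h => h.mul o hzi) (fun h => h.mul o hzi)
  have hz'm : ((d - a1 * c) * b - a0 * c * a) * (a * d - c * b)⁻¹ ∈ o :=
    mul_mem (sub_mem (mul_mem hx hb) (mul_mem (mul_mem ha0 hc) ha)) hDi.1
  refine ⟨matE a0 a1 _ _,
    mem_OLx o hϖo hϖ ha0 ha1 ha0u ha0ne hirr (mul_mem hx hzi.1) (mul_mem hc hzi.1) hxy,
    !![1, 0;
       ((d - a1 * c) * b - a0 * c * a) * (a * d - c * b)⁻¹,
       ((d - a1 * c) ^ 2 + a1 * (d - a1 * c) * c - a0 * c ^ 2) * (a * d - c * b)⁻¹],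
    ⟨_, _, hz.1, hz.2.1, hz.2.2, hz'm, rfl⟩, ?_⟩
  have hMne : (d - a1 * c) ^ 2 + a1 * (d - a1 * c) * c - a0 * c ^ 2 ≠ 0 := hM.2.2
  have hDne : a * d - c * b ≠ 0 := hD.2.2
  rw [matE_mul_B4]
  generalize hM' : (d - a1 * c) ^ 2 + a1 * (d - a1 * c) * c - a0 * c ^ 2 = M at hMne ⊢
  generalize hD' : a * d - c * b = D at hDne ⊢
  refine mat2_eq ?_ ?_ ?_ ?_ <;> field_simp <;> subst hM' hD' <;> ring

end ExSec2

/-- With the four mirabolic subgroups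
`B₁(𝔬), B₂(𝔬), B₃(𝔬), B₄(𝔬)` of `GL₂(𝔬)`, one has, for each `i`:
`GL₂(𝔬) = 𝒪_L^× · B_i(𝔬)`, `𝒪_L^× ∩ B_i(𝔬) = {1}`, and every `k ∈ GL₂(𝔬)` factors
uniquely as `k = u·b` with `u ∈ 𝒪_L^×`, `b ∈ B_i(𝔬)`. -/
theorem stmt_11 {F : Type*} [Field F]
    (o : ValuationSubring F) [IsDiscreteValuationRing o]
    (ϖ : F) (hϖo : ϖ ∈ o) (hϖ : Irreducible (⟨ϖ, hϖo⟩ : o))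
    (a0 a1 : F) (ha0 : a0 ∈ o) (ha1 : a1 ∈ o) (ha0u : a0⁻¹ ∈ o) (ha0ne : a0 ≠ 0)
    (hirr : ∀ z : F, z ∈ o → ¬ ∃ d ∈ o, z ^ 2 - a1 * z - a0 = ϖ * d) :
    ∀ B ∈ ({ {m | ∃ z z' : F, z ∈ o ∧ z⁻¹ ∈ o ∧ z ≠ 0 ∧ z' ∈ o ∧ m = !![z, z'; 0, 1]},
              {m | ∃ z z' : F, z ∈ o ∧ z⁻¹ ∈ o ∧ z ≠ 0 ∧ z' ∈ o ∧ m = !![1, z'; 0, z]},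
              {m | ∃ z z' : F, z ∈ o ∧ z⁻¹ ∈ o ∧ z ≠ 0 ∧ z' ∈ o ∧ m = !![z, 0; z', 1]},
              {m | ∃ z z' : F, z ∈ o ∧ z⁻¹ ∈ o ∧ z ≠ 0 ∧ z' ∈ o ∧ m = !![1, 0; z', z]} }
            : Set (Set (Matrix (Fin 2) (Fin 2) F))),
      (GLo o = {g | ∃ u ∈ OLx o !![0, 1; a0, a1], ∃ bm ∈ B, g = u * bm}) ∧
      (OLx o !![0, 1; a0, a1] ∩ B = {1}) ∧
      (∀ k ∈ GLo o,
        ∃! p : Matrix (Fin 2) (Fin 2) F × Matrix (Fin 2) (Fin 2) F,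
          p.1 ∈ OLx o !![0, 1; a0, a1] ∧ p.2 ∈ B ∧ k = p.1 * p.2) := by
  intro B hB
  simp only [Set.mem_insert_iff, Set.mem_singleton_iff] at hB
  rcases hB with rfl | rfl | rfl | rfl
  · refine assemble o hϖo hϖ ha0 ha1 ha0u ha0ne hirr _ (subB1 o) (mulB1 o) (invB1 o)
      (intB1 o ha0ne) ?_
    intro k hk
    have hD := det_unit o hk
    have hab : Un o (k 0 0) ∨ Un o (k 1 0) :=
      pair_unit o hϖo hϖ (hk.1 0 0) (hk.1 1 0) (hk.1 1 1) (hk.1 0 1) hD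
    obtain ⟨u, hu, bm, hbm, heq⟩ := exB1 o hϖo hϖ ha0 ha1 ha0u ha0ne hirr
      (hk.1 0 0) (hk.1 1 0) (hk.1 0 1) (hk.1 1 1) hD hab
    exact ⟨u, hu, bm, hbm, by rw [Matrix.eta_fin_two k]; exact heq⟩
  · refine assemble o hϖo hϖ ha0 ha1 ha0u ha0ne hirr _ (subB2 o) (mulB2 o) (invB2 o)
      (intB2 o ha0ne) ?_
    intro k hk
    have hD := det_unit o hk
    have hab : Un o (k 0 0) ∨ Un o (k 1 0) :=
      pair_unit o hϖo hϖ (hk.1 0 0) (hk.1 1 0) (hk.1 1 1) (hk.1 0 1) hD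
    obtain ⟨u, hu, bm, hbm, heq⟩ := exB2 o hϖo hϖ ha0 ha1 ha0u ha0ne hirr
      (hk.1 0 0) (hk.1 1 0) (hk.1 0 1) (hk.1 1 1) hD hab
    exact ⟨u, hu, bm, hbm, by rw [Matrix.eta_fin_two k]; exact heq⟩
  · refine assemble o hϖo hϖ ha0 ha1 ha0u ha0ne hirr _ (subB3 o) (mulB3 o) (invB3 o)
      (intB3 o ha0ne) ?_
    intro k hk
    have hD := det_unit o hk
    have hcd : Un o (k 0 1) ∨ Un o (k 1 1) :=
      (pair_unit o hϖo hϖ (hk.1 1 1) (hk.1 0 1) (hk.1 0 0) (hk.1 1 0)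
        (by rw [show k 1 1 * k 0 0 - k 1 0 * k 0 1
              = k 0 0 * k 1 1 - k 0 1 * k 1 0 by ring]; exact hD)).symm
    obtain ⟨u, hu, bm, hbm, heq⟩ := exB3 o hϖo hϖ ha0 ha1 ha0u ha0ne hirr
      (hk.1 0 0) (hk.1 1 0) (hk.1 0 1) (hk.1 1 1) hD hcd
    exact ⟨u, hu, bm, hbm, by rw [Matrix.eta_fin_two k]; exact heq⟩
  · refine assemble o hϖo hϖ ha0 ha1 ha0u ha0ne hirr _ (subB4 o) (mulB4 o) (invB4 o)
      (intB4 o ha0ne) ?_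
    intro k hk
    have hD := det_unit o hk
    have hcd : Un o (k 0 1) ∨ Un o (k 1 1) :=
      (pair_unit o hϖo hϖ (hk.1 1 1) (hk.1 0 1) (hk.1 0 0) (hk.1 1 0)
        (by rw [show k 1 1 * k 0 0 - k 1 0 * k 0 1
              = k 0 0 * k 1 1 - k 0 1 * k 1 0 by ring]; exact hD)).symm
    obtain ⟨u, hu, bm, hbm, heq⟩ := exB4 o hϖo hϖ ha0 ha1 ha0u ha0ne hirr
      (hk.1 0 0) (hk.1 1 0) (hk.1 0 1) (hk.1 1 1) hD hcd
    exact ⟨u, hu, bm, hbm, by rw [Matrix.eta_fin_two k]; exact heq⟩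
end
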